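/- arXiv:1010.6257 — 9 statements merged into one kernel-verified Lean document; each statement's English description precedes it below -/
import Mathlib

section
/- Let V be a finite set, r ∈ V, and e : V × V → ℕ a symmetric function with e(v,v) = 0 for all v (a finite loopless multigraph on V), and assume the graph on V with adjacency u ∼ v ⟺ e(u,v) > 0 is connected. Let Γ be the abelian group of functions y : V → ℤ with y(r) = 0, equipped with the symmetric bilinear pairing ⟨y,z⟩ = Σ_{{u,v}} e(u,v)(y(u) − y(v))(z(u) − z(v)), the sum over unordered pairs {u,v} ⊆ V. Then a nonzero x ∈ Γ is irreducible if and only if there exists a nonempty subset T ⊆ V ∖ {r} such that x equals the indicator function [T] of T or its negative −[T], and both induced subgraphs on T and on V ∖ T (with adjacency e > 0) are connected. -/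
/-- The simple graph underlying a finite loopless multigraph with edge
multiplicity function `e`: two vertices are adjacent iff they are distinct and
joined by at least one edge. -/
def mgraphOf {V : Type*} (e : V → V → ℕ) : SimpleGraph V where
  Adj u v := u ≠ v ∧ (0 < e u v ∨ 0 < e v u)
  symm := ⟨fun _ _ h => ⟨h.1.symm, h.2.symm⟩⟩
  loopless := ⟨fun _ h => h.1 rfl⟩

/-- The pairing on functions `V → ℤ` associated to a multigraph:
`⟨y,z⟩ = Σ_{{u,v}} e(u,v)(y(u) − y(v))(z(u) − z(v))`, the sum being over
unordered pairs `{u,v} ⊆ V` (diagonal pairs contribute zero). -/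
def gpair {V : Type*} [Fintype V] [DecidableEq V] (e : V → V → ℕ)
    (he : ∀ u v, e u v = e v u) (y z : V → ℤ) : ℤ :=
  ∑ p ∈ (Finset.univ : Finset V).sym2,
    Sym2.lift ⟨fun u v => (e u v : ℤ) * (y u - y v) * (z u - z v),
      fun u v => by show (e u v : ℤ) * (y u - y v) * (z u - z v) = (e v u : ℤ) * (y v - y u) * (z v - z u); rw [he u v]; ring⟩ p

namespace GLA
set_option linter.unusedSectionVars false
variable {V : Type*} [Fintype V] [DecidableEq V]

def gterm (e : V → V → ℕ) (he : ∀ u v, e u v = e v u) (y z : V → ℤ) : Sym2 V → ℤ :=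
  Sym2.lift ⟨fun u v => (e u v : ℤ) * (y u - y v) * (z u - z v),
      fun u v => by show (e u v : ℤ) * (y u - y v) * (z u - z v) = (e v u : ℤ) * (y v - y u) * (z v - z u); rw [he u v]; ring⟩

lemma gpair_eq (e : V → V → ℕ) (he : ∀ u v, e u v = e v u) (y z : V → ℤ) :
    gpair e he y z = ∑ p ∈ (Finset.univ : Finset V).sym2, gterm e he y z p := rfl

lemma gterm_mk (e : V → V → ℕ) (he : ∀ u v, e u v = e v u) (y z : V → ℤ) (u v : V) :
    gterm e he y z s(u, v) = (e u v : ℤ) * (y u - y v) * (z u - z v) := rfl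

lemma gpair_neg_neg (e : V → V → ℕ) (he : ∀ u v, e u v = e v u) (y z : V → ℤ) :
    gpair e he (-y) (-z) = gpair e he y z := by
  rw [gpair_eq, gpair_eq]
  refine Finset.sum_congr rfl fun p _ => ?_
  induction p using Sym2.ind with
  | _ u v => simp only [gterm_mk, Pi.neg_apply]; ring

lemma gpair_nonneg_of (e : V → V → ℕ) (he : ∀ u v, e u v = e v u) (y z : V → ℤ)
    (h : ∀ u v, 0 ≤ (e u v : ℤ) * (y u - y v) * (z u - z v)) : 0 ≤ gpair e he y z := by
  rw [gpair_eq]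
  refine Finset.sum_nonneg fun p _ => ?_
  induction p using Sym2.ind with
  | _ u v => simpa [gterm_mk] using h u v

lemma gpair_terms_eq_zero (e : V → V → ℕ) (he : ∀ u v, e u v = e v u) (y z : V → ℤ)
    (hle : ∀ u v, (e u v : ℤ) * (y u - y v) * (z u - z v) ≤ 0)
    (hge : 0 ≤ gpair e he y z) :
    ∀ u v, (e u v : ℤ) * (y u - y v) * (z u - z v) = 0 := by
  have hnp : ∀ p ∈ (Finset.univ : Finset V).sym2, gterm e he y z p ≤ 0 := fun p _ => by
    induction p using Sym2.ind with
    | _ u v => simpa [gterm_mk] using hle u v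
  have hz : gpair e he y z = 0 :=
    le_antisymm (by rw [gpair_eq]; exact Finset.sum_nonpos hnp) hge
  have hall := (Finset.sum_eq_zero_iff_of_nonpos hnp).mp (by rw [← gpair_eq]; exact hz)
  intro u v
  have := hall s(u, v) (Finset.mk_mem_sym2_iff.mpr ⟨Finset.mem_univ u, Finset.mem_univ v⟩)
  simpa [gterm_mk] using this

lemma epos_of_adj {e : V → V → ℕ} (he : ∀ u v, e u v = e v u) {u v : V}
    (h : (mgraphOf e).Adj u v) : 0 < e u v := by
  rcases h.2 with h' | h'
  · exact h'
  · rw [he]; exact h'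

lemma walk_eq {α : Type*} {G : SimpleGraph α} (f : α → ℤ)
    (h : ∀ a b, G.Adj a b → f a = f b) : ∀ {u v}, G.Walk u v → f u = f v := by
  intro u v w
  induction w with
  | nil => rfl
  | cons hadj p ih => exact (h _ _ hadj).trans ih

lemma walk_cross {α : Type*} {G : SimpleGraph α} (P : α → Prop) :
    ∀ {u v}, G.Walk u v → P u → ¬ P v → ∃ a b, P a ∧ ¬ P b ∧ G.Adj a b := by
  intro u v w
  induction w with
  | nil => intro h h'; exact absurd h h'
  | @cons a c d hadj p ih =>
    intro hu hv
    by_cases hx : P c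
    · exact ih hx hv
    · exact ⟨_, _, hu, hx, hadj⟩

lemma const_on_conn {e : V → V → ℕ} (he : ∀ u v, e u v = e v u) (S : Set V)
    (hc : ((mgraphOf e).induce S).Preconnected) (y : V → ℤ)
    (h : ∀ u v, u ∈ S → v ∈ S → 0 < e u v → y u = y v)
    {u v : V} (hu : u ∈ S) (hv : v ∈ S) : y u = y v := by
  obtain ⟨w⟩ := hc ⟨u, hu⟩ ⟨v, hv⟩
  exact walk_eq (fun a : S => y ↑a)
    (fun a b hab => h _ _ a.2 b.2 (epos_of_adj he hab)) w

lemma exists_cross {e : V → V → ℕ} (he : ∀ u v, e u v = e v u)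
    (hconn : (mgraphOf e).Connected) (P : V → Prop) {u v : V}
    (hu : P u) (hv : ¬ P v) : ∃ a b, P a ∧ ¬ P b ∧ 0 < e a b := by
  obtain ⟨w⟩ := hconn.preconnected u v
  obtain ⟨a, b, ha, hb, hadj⟩ := walk_cross P w hu hv
  exact ⟨a, b, ha, hb, epos_of_adj he hadj⟩

end GLA

namespace GLA
set_option linter.unusedSectionVars false
variable {V : Type*} [Fintype V] [DecidableEq V]

lemma int_prod_nonpos {a b : ℤ} (h : a + b = 1 ∨ a + b = 0 ∨ a + b = -1) : a * b ≤ 0 := by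
  rcases h with h|h|h <;> nlinarith [sq_nonneg (a-b), sq_nonneg (a+b)]

lemma core (r : V) (e : V → V → ℕ) (he : ∀ u v, e u v = e v u)
    (hconn : (mgraphOf e).Connected) (T : Finset V) (hrT : r ∉ T) (hTne : T.Nonempty)
    (hTconn : ((mgraphOf e).induce (↑T : Set V)).Connected)
    (hTcconn : ((mgraphOf e).induce ((↑T : Set V)ᶜ)).Connected) :
    ¬ ∃ y z : V → ℤ, y r = 0 ∧ z r = 0 ∧ y ≠ 0 ∧ z ≠ 0 ∧
      (fun v => if v ∈ T then (1 : ℤ) else 0) = y + z ∧ 0 ≤ gpair e he y z := by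
  rintro ⟨y, z, hyr, hzr, hy0, hz0, hsum, hpair⟩
  set x : V → ℤ := fun v => if v ∈ T then (1 : ℤ) else 0 with hxdef
  have hzy : ∀ v, z v = x v - y v := by
    intro v; have := congrFun hsum v; simp only [Pi.add_apply] at this; omega
  -- every term of the pairing vanishes
  have hterm : ∀ u v, (e u v : ℤ) * (y u - y v) * (z u - z v) = 0 := by
    refine gpair_terms_eq_zero e he y z (fun u v => ?_) hpair
    have hxuv : x u - x v = 1 ∨ x u - x v = 0 ∨ x u - x v = -1 := by
      simp only [hxdef]; by_cases hu : u ∈ T <;> by_cases hv : v ∈ T <;> simp [hu, hv]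
    have h1 : (y u - y v) + (z u - z v) = x u - x v := by
      rw [hzy u, hzy v]; ring
    have h2 : (y u - y v) * (z u - z v) ≤ 0 := int_prod_nonpos (by omega)
    rw [mul_assoc]
    exact mul_nonpos_of_nonneg_of_nonpos (by positivity) h2
  -- y is equal on both ends of any genuine edge within T or within Tᶜ
  have hedge : ∀ u v, x u = x v → 0 < e u v → y u = y v := by
    intro u v hx0 hpos
    have := hterm u v
    have hz' : z u - z v = -(y u - y v) := by rw [hzy u, hzy v]; omega
    rw [hz'] at this
    have : (y u - y v) * (y u - y v) = 0 := by
      have he' : (0:ℤ) < (e u v : ℤ) := by exact_mod_cast hpos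
      nlinarith
    have := mul_self_eq_zero.mp this; omega
  -- y constant on T and on Tᶜ
  obtain ⟨t0, ht0⟩ := hTne
  have hyT : ∀ v ∈ T, y v = y t0 := by
    intro v hv
    refine const_on_conn he (↑T : Set V) hTconn.preconnected y
      (fun a b ha hb hp => hedge a b ?_ hp) (by simpa using hv) (by simpa using ht0)
    simp only [hxdef]
    simp only [Finset.mem_coe] at ha hb
    simp [ha, hb]
  have hyTc : ∀ v, v ∉ T → y v = 0 := by
    intro v hv
    rw [← hyr]
    refine const_on_conn he ((↑T : Set V)ᶜ) hTcconn.preconnected y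
      (fun a b ha hb hp => hedge a b ?_ hp) (by simpa using hv) (by simpa using hrT)
    simp only [Set.mem_compl_iff, Finset.mem_coe] at ha hb
    simp only [hxdef]
    simp [ha, hb]
  -- a crossing edge forces y t0 ∈ {0, 1}
  obtain ⟨a, b, ha, hb, hab⟩ := exists_cross he hconn (· ∈ T) ht0 hrT
  have hya : y a = y t0 := hyT a ha
  have hyb : y b = 0 := hyTc b hb
  have hterm' := hterm a b
  have hza : z a - z b = (1 : ℤ) - (y a - y b) := by
    rw [hzy a, hzy b]; simp only [hxdef]; simp [ha, hb]; ring
  rw [hza, hya, hyb] at hterm'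
  have he' : (0:ℤ) < (e a b : ℤ) := by exact_mod_cast hab
  have hc : y t0 = 0 ∨ y t0 = 1 := by
    rcases mul_eq_zero.mp hterm' with h | h
    · rcases mul_eq_zero.mp h with h' | h'
      · omega
      · left; omega
    · right; omega
  rcases hc with hc | hc
  · apply hy0
    funext v
    by_cases hv : v ∈ T
    · rw [hyT v hv, hc]; rfl
    · rw [hyTc v hv]; rfl
  · apply hz0
    funext v
    by_cases hv : v ∈ T
    · rw [hzy v]; simp only [hxdef]; rw [hyT v hv, hc]; simp [hv]
    · rw [hzy v]; simp only [hxdef]; rw [hyTc v hv]; simp [hv]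

end GLA
namespace GLA
set_option linter.unusedSectionVars false
variable {V : Type*} [Fintype V] [DecidableEq V]

lemma decomp_of_mono (r : V) (e : V → V → ℕ) (he : ∀ u v, e u v = e v u)
    (x : V → ℤ) (hxr : x r = 0) (f g : ℤ → ℤ) (hf : Monotone f) (hg : Monotone g)
    (hfg : ∀ t, f t + g t = t) (hf0 : f 0 = 0) (hg0 : g 0 = 0)
    (hfne : ∃ u, f (x u) ≠ 0) (hgne : ∃ u, g (x u) ≠ 0) :
    ∃ y z : V → ℤ, y r = 0 ∧ z r = 0 ∧ y ≠ 0 ∧ z ≠ 0 ∧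
      x = y + z ∧ 0 ≤ gpair e he y z := by
  refine ⟨fun v => f (x v), fun v => g (x v), by simp [hxr, hf0], by simp [hxr, hg0],
    ?_, ?_, ?_, ?_⟩
  · intro h; obtain ⟨u, hu⟩ := hfne; exact hu (congrFun h u)
  · intro h; obtain ⟨u, hu⟩ := hgne; exact hu (congrFun h u)
  · funext v; simp only [Pi.add_apply]; exact (hfg (x v)).symm
  · refine gpair_nonneg_of e he _ _ fun u v => ?_
    rw [mul_assoc]
    refine mul_nonneg (by positivity) ?_
    rcases le_total (x u) (x v) with h | h
    · have h1 : f (x u) - f (x v) ≤ 0 := sub_nonpos.mpr (hf h)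
      have h2 : g (x u) - g (x v) ≤ 0 := sub_nonpos.mpr (hg h)
      nlinarith
    · have h1 : (0:ℤ) ≤ f (x u) - f (x v) := sub_nonneg.mpr (hf h)
      have h2 : (0:ℤ) ≤ g (x u) - g (x v) := sub_nonneg.mpr (hg h)
      nlinarith

lemma decomp_T_split (r : V) (e : V → V → ℕ) (he : ∀ u v, e u v = e v u)
    (x : V → ℤ) (T S₁ : Finset V) (hsub : S₁ ⊆ T) (hrT : r ∉ T)
    (hS₁ne : S₁.Nonempty) (hS₂ne : (T \ S₁).Nonempty)
    (hx : x = fun v => if v ∈ T then (1 : ℤ) else 0)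
    (hcross : ∀ u v, u ∈ S₁ → v ∈ T → v ∉ S₁ → e u v = 0) :
    ∃ y z : V → ℤ, y r = 0 ∧ z r = 0 ∧ y ≠ 0 ∧ z ≠ 0 ∧
      x = y + z ∧ 0 ≤ gpair e he y z := by
  have hrS₁ : r ∉ S₁ := fun h => hrT (hsub h)
  have tri : ∀ w : V, w ∈ S₁ ∨ (w ∈ T ∧ w ∉ S₁) ∨ (w ∉ T ∧ w ∉ S₁) := by
    intro w
    by_cases h1 : w ∈ S₁
    · exact Or.inl h1
    · by_cases h2 : w ∈ T
      · exact Or.inr (Or.inl ⟨h2, h1⟩)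
      · exact Or.inr (Or.inr ⟨h2, h1⟩)
  refine ⟨fun v => if v ∈ S₁ then (1:ℤ) else 0, fun v => if v ∈ T \ S₁ then (1:ℤ) else 0,
    by simp [hrS₁], by simp [Finset.mem_sdiff, hrT], ?_, ?_, ?_, ?_⟩
  · intro h
    obtain ⟨u, hu⟩ := hS₁ne
    have := congrFun h u; simp [hu] at this
  · intro h
    obtain ⟨u, hu⟩ := hS₂ne
    have := congrFun h u; simp only [Pi.zero_apply, if_pos hu] at this; exact one_ne_zero this
  · funext v
    rcases tri v with h | ⟨h1, h2⟩ | ⟨h1, h2⟩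
    · simp [hx, Pi.add_apply, Finset.mem_sdiff, h, hsub h]
    · simp [hx, Pi.add_apply, Finset.mem_sdiff, h1, h2]
    · simp [hx, Pi.add_apply, Finset.mem_sdiff, h1, h2]
  · refine gpair_nonneg_of e he _ _ fun u v => ?_
    rcases tri u with hu | ⟨hu1, hu2⟩ | ⟨hu1, hu2⟩ <;>
      rcases tri v with hv | ⟨hv1, hv2⟩ | ⟨hv1, hv2⟩
    · simp [hu, hv]
    · have h0 : e u v = 0 := hcross u v hu hv1 hv2
      simp [h0]
    · simp [Finset.mem_sdiff, hu, hsub hu, hv1, hv2]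
    · have h0 : e u v = 0 := by rw [he u v]; exact hcross v u hv hu1 hu2
      simp [h0]
    · simp [Finset.mem_sdiff, hu1, hu2, hv1, hv2]
    · simp [Finset.mem_sdiff, hu2, hv2]
    · simp [Finset.mem_sdiff, hu1, hv, hsub hv]
    · simp [Finset.mem_sdiff, hu2, hv2]
    · simp [Finset.mem_sdiff, hu1, hv1]
  
lemma decomp_compl_split (r : V) (e : V → V → ℕ) (he : ∀ u v, e u v = e v u)
    (x : V → ℤ) (T S₂ : Finset V) (hdisj : ∀ v ∈ S₂, v ∉ T) (hrT : r ∉ T) (hrS₂ : r ∉ S₂)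
    (hTne : T.Nonempty) (hS₂ne : S₂.Nonempty)
    (hx : x = fun v => if v ∈ T then (1 : ℤ) else 0)
    (hcross : ∀ u v, u ∈ S₂ → v ∉ T → v ∉ S₂ → e u v = 0) :
    ∃ y z : V → ℤ, y r = 0 ∧ z r = 0 ∧ y ≠ 0 ∧ z ≠ 0 ∧
      x = y + z ∧ 0 ≤ gpair e he y z := by
  have tri : ∀ w : V, w ∈ T ∨ (w ∈ S₂ ∧ w ∉ T) ∨ (w ∉ T ∧ w ∉ S₂) := by
    intro w
    by_cases h1 : w ∈ T
    · exact Or.inl h1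
    · by_cases h2 : w ∈ S₂
      · exact Or.inr (Or.inl ⟨h2, h1⟩)
      · exact Or.inr (Or.inr ⟨h1, h2⟩)
  have hTS : ∀ w : V, w ∈ T → w ∉ S₂ := fun w hw h => hdisj w h hw
  refine ⟨fun v => if v ∈ T ∨ v ∈ S₂ then (1:ℤ) else 0,
      fun v => if v ∈ S₂ then (-1:ℤ) else 0,
    by simp [hrT, hrS₂], by simp [hrS₂], ?_, ?_, ?_, ?_⟩
  · intro h
    obtain ⟨u, hu⟩ := hTne
    have := congrFun h u; simp [hu] at this
  · intro h
    obtain ⟨u, hu⟩ := hS₂ne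
    have := congrFun h u; simp [hu] at this
  · funext v
    rcases tri v with h | ⟨h1, h2⟩ | ⟨h1, h2⟩
    · simp [hx, Pi.add_apply, h, hTS v h]
    · simp [hx, Pi.add_apply, h1, h2]
    · simp [hx, Pi.add_apply, h1, h2]
  · refine gpair_nonneg_of e he _ _ fun u v => ?_
    rcases tri u with hu | ⟨hu1, hu2⟩ | ⟨hu1, hu2⟩ <;>
      rcases tri v with hv | ⟨hv1, hv2⟩ | ⟨hv1, hv2⟩
    · simp [hTS u hu, hTS v hv]
    · simp [hu, hv1]
    · simp [hTS u hu, hv2]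
    · simp [hu1, hv]
    · simp [hu1, hv1]
    · have h0 : e u v = 0 := hcross u v hu1 hv1 hv2
      simp [h0]
    · simp [hu2, hTS v hv]
    · have h0 : e u v = 0 := by rw [he u v]; exact hcross v u hv1 hu1 hu2
      simp [h0]
    · simp [hu1, hu2, hv1, hv2]

end GLA
namespace GLA
set_option linter.unusedSectionVars false
variable {V : Type*} [Fintype V] [DecidableEq V]

lemma forward_nonneg (r : V) (e : V → V → ℕ) (he : ∀ u v, e u v = e v u)
    (hconn : (mgraphOf e).Connected) (x : V → ℤ) (hxr : x r = 0) (hx0 : x ≠ 0)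
    (hnn : ∀ v, 0 ≤ x v) :
    (∃ y z : V → ℤ, y r = 0 ∧ z r = 0 ∧ y ≠ 0 ∧ z ≠ 0 ∧
        x = y + z ∧ 0 ≤ gpair e he y z) ∨
    (∃ T : Finset V, T.Nonempty ∧ r ∉ T ∧
      x = (fun v => if v ∈ T then (1 : ℤ) else 0) ∧
      ((mgraphOf e).induce (↑T : Set V)).Connected ∧
      ((mgraphOf e).induce ((↑T : Set V)ᶜ)).Connected) := by
  classical
  obtain ⟨u0, hu0⟩ : ∃ u, x u ≠ 0 := Function.ne_iff.mp hx0
  have hu0' : 1 ≤ x u0 := by have := hnn u0; omega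
  by_cases hbig : ∃ u, 2 ≤ x u
  · left
    obtain ⟨u, hu⟩ := hbig
    refine decomp_of_mono r e he x hxr (fun t => min t 1) (fun t => max (t-1) 0)
      (fun a b hab => min_le_min hab le_rfl)
      (fun a b hab => max_le_max (by omega) le_rfl)
      (fun t => by
        show min t 1 + max (t - 1) 0 = t
        rcases le_total t 1 with h | h
        · rw [min_eq_left h, max_eq_right (by omega : t - 1 ≤ 0)]; ring
        · rw [min_eq_right h, max_eq_left (by omega : (0:ℤ) ≤ t - 1)]; ring)
      (by show min (0:ℤ) 1 = 0; rw [min_eq_left (by norm_num : (0:ℤ) ≤ 1)])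
      (by show max ((0:ℤ) - 1) 0 = 0; rw [max_eq_right (by norm_num : (0:ℤ)-1 ≤ 0)])
      ⟨u, by show min (x u) 1 ≠ 0; rw [min_eq_right (by omega : (1:ℤ) ≤ x u)]; norm_num⟩
      ⟨u, by show max (x u - 1) 0 ≠ 0; rw [max_eq_left (by omega : (0:ℤ) ≤ x u - 1)]; omega⟩
  · -- x takes values in {0,1}
    push_neg at hbig
    have hval : ∀ v, x v = 0 ∨ x v = 1 := fun v => by have := hnn v; have := hbig v; omega
    set T : Finset V := Finset.univ.filter (fun v => x v = 1) with hTdef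
    have hmemT : ∀ v, v ∈ T ↔ x v = 1 := fun v => by simp [hTdef]
    have hxT : x = fun v => if v ∈ T then (1 : ℤ) else 0 := by
      funext v
      rcases hval v with h | h <;> simp [hmemT, h]
    have hTne : T.Nonempty := ⟨u0, (hmemT u0).mpr (by have := hval u0; omega)⟩
    have hrT : r ∉ T := fun h => by rw [hmemT] at h; omega
    obtain ⟨t0, ht0⟩ := hTne
    by_cases hc1 : ((mgraphOf e).induce (↑T : Set V)).Connected
    · by_cases hc2 : ((mgraphOf e).induce ((↑T : Set V)ᶜ)).Connected
      · exact Or.inr ⟨T, ⟨t0, ht0⟩, hrT, hxT, hc1, hc2⟩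
      · -- complement disconnected
        left
        have hrc : r ∈ ((↑T : Set V)ᶜ) := by simp [hrT]
        have hnp : ¬ ((mgraphOf e).induce ((↑T : Set V)ᶜ)).Preconnected :=
          fun hp => hc2 (@SimpleGraph.Connected.mk _ _ hp ⟨⟨r, hrc⟩⟩)
        rw [SimpleGraph.Preconnected] at hnp
        push_neg at hnp
        obtain ⟨a, b, hab⟩ := hnp
        have hb0 : ∃ c : ((↑T : Set V)ᶜ : Set V),
            ¬ ((mgraphOf e).induce ((↑T : Set V)ᶜ)).Reachable ⟨r, hrc⟩ c := by
          by_contra hcon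
          push_neg at hcon
          exact hab ((hcon a).symm.trans (hcon b))
        obtain ⟨b0, hb0⟩ := hb0
        set S₂ : Finset V := Finset.univ.filter (fun v => ∃ h : v ∈ ((↑T : Set V)ᶜ),
          ¬ ((mgraphOf e).induce ((↑T : Set V)ᶜ)).Reachable ⟨r, hrc⟩ ⟨v, h⟩) with hS₂def
        have hmemS₂ : ∀ v, v ∈ S₂ ↔ ∃ h : v ∈ ((↑T : Set V)ᶜ),
            ¬ ((mgraphOf e).induce ((↑T : Set V)ᶜ)).Reachable ⟨r, hrc⟩ ⟨v, h⟩ :=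
          fun v => by simp [hS₂def]
        refine decomp_compl_split r e he x T S₂ ?_ hrT ?_ ⟨t0, ht0⟩ ?_ hxT ?_
        · intro v hv
          obtain ⟨h, _⟩ := (hmemS₂ v).mp hv
          simpa using h
        · intro h
          obtain ⟨h', hnr⟩ := (hmemS₂ r).mp h
          exact hnr (SimpleGraph.Reachable.refl _)
        · exact ⟨b0.1, (hmemS₂ b0.1).mpr ⟨b0.2, hb0⟩⟩
        · intro u v hu hv hv2
          by_contra h0
          have hpos : 0 < e u v := Nat.pos_of_ne_zero h0
          obtain ⟨hu', hnru⟩ := (hmemS₂ u).mp hu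
          have hv' : v ∈ ((↑T : Set V)ᶜ) := by simp [hv]
          have hrv : ((mgraphOf e).induce ((↑T : Set V)ᶜ)).Reachable ⟨r, hrc⟩ ⟨v, hv'⟩ := by
            by_contra hnrv
            exact hv2 ((hmemS₂ v).mpr ⟨hv', hnrv⟩)
          have hne : u ≠ v := by
            intro h; subst h; exact hnru hrv
          have hadj : ((mgraphOf e).induce ((↑T : Set V)ᶜ)).Adj ⟨v, hv'⟩ ⟨u, hu'⟩ :=
            ⟨hne.symm, Or.inr hpos⟩
          exact hnru (hrv.trans hadj.reachable)
    · -- T disconnected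
      left
      have ht0' : t0 ∈ (↑T : Set V) := by simpa using ht0
      have hnp : ¬ ((mgraphOf e).induce (↑T : Set V)).Preconnected :=
        fun hp => hc1 (@SimpleGraph.Connected.mk _ _ hp ⟨⟨t0, ht0'⟩⟩)
      rw [SimpleGraph.Preconnected] at hnp
      push_neg at hnp
      obtain ⟨a, b, hab⟩ := hnp
      set S₁ : Finset V := Finset.univ.filter (fun v => ∃ h : v ∈ (↑T : Set V),
        ((mgraphOf e).induce (↑T : Set V)).Reachable a ⟨v, h⟩) with hS₁def
      have hmemS₁ : ∀ v, v ∈ S₁ ↔ ∃ h : v ∈ (↑T : Set V),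
          ((mgraphOf e).induce (↑T : Set V)).Reachable a ⟨v, h⟩ :=
        fun v => by simp [hS₁def]
      have hsub : S₁ ⊆ T := by
        intro v hv
        obtain ⟨h, _⟩ := (hmemS₁ v).mp hv
        simpa using h
      refine decomp_T_split r e he x T S₁ hsub hrT ?_ ?_ hxT ?_
      · exact ⟨a.1, (hmemS₁ a.1).mpr ⟨a.2, SimpleGraph.Reachable.refl _⟩⟩
      · refine ⟨b.1, Finset.mem_sdiff.mpr ⟨by simpa using b.2, ?_⟩⟩
        intro h
        obtain ⟨h', hr'⟩ := (hmemS₁ b.1).mp h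
        exact hab hr'
      · intro u v hu hv hv2
        by_contra h0
        have hpos : 0 < e u v := Nat.pos_of_ne_zero h0
        obtain ⟨hu', hru⟩ := (hmemS₁ u).mp hu
        have hv' : v ∈ (↑T : Set V) := by simpa using hv
        have hne : u ≠ v := by
          intro h; subst h; exact hv2 hu
        have hadj : ((mgraphOf e).induce (↑T : Set V)).Adj ⟨u, hu'⟩ ⟨v, hv'⟩ :=
          ⟨hne, Or.inl hpos⟩
        exact hv2 ((hmemS₁ v).mpr ⟨hv', hru.trans hadj.reachable⟩)

end GLA
namespace GLA
set_option linter.unusedSectionVars false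
variable {V : Type*} [Fintype V] [DecidableEq V]

lemma forward (r : V) (e : V → V → ℕ) (he : ∀ u v, e u v = e v u)
    (hconn : (mgraphOf e).Connected) (x : V → ℤ) (hxr : x r = 0) (hx0 : x ≠ 0) :
    (∃ y z : V → ℤ, y r = 0 ∧ z r = 0 ∧ y ≠ 0 ∧ z ≠ 0 ∧
        x = y + z ∧ 0 ≤ gpair e he y z) ∨
    (∃ T : Finset V, T.Nonempty ∧ r ∉ T ∧
      (x = (fun v => if v ∈ T then (1 : ℤ) else 0) ∨
       x = -(fun v => if v ∈ T then (1 : ℤ) else 0)) ∧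
      ((mgraphOf e).induce (↑T : Set V)).Connected ∧
      ((mgraphOf e).induce ((↑T : Set V)ᶜ)).Connected) := by
  by_cases hneg : ∃ v, x v < 0
  · by_cases hpos : ∃ u, 0 < x u
    · -- mixed signs
      left
      obtain ⟨u, hu⟩ := hpos
      obtain ⟨v, hv⟩ := hneg
      refine decomp_of_mono r e he x hxr (fun t => max t 0) (fun t => min t 0)
        (fun a b hab => max_le_max hab le_rfl)
        (fun a b hab => min_le_min hab le_rfl)
        (fun t => by
          show max t 0 + min t 0 = t
          rcases le_total t 0 with h | h
          · rw [max_eq_right h, min_eq_left h]; ring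
          · rw [max_eq_left h, min_eq_right h]; ring)
        (by show max (0:ℤ) 0 = 0; simp)
        (by show min (0:ℤ) 0 = 0; simp)
        ⟨u, by show max (x u) 0 ≠ 0; rw [max_eq_left (by omega)]; omega⟩
        ⟨v, by show min (x v) 0 ≠ 0; rw [min_eq_left (by omega)]; omega⟩
    · -- x ≤ 0 everywhere; apply the nonneg case to -x
      push_neg at hpos
      have hxr' : (-x) r = 0 := by simp [hxr]
      have hx0' : (-x) ≠ 0 := fun h => hx0 (by funext v; have := congrFun h v; simp at this; simpa using this)
      have hnn : ∀ v, 0 ≤ (-x) v := fun v => by have := hpos v; simp; omega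
      rcases forward_nonneg r e he hconn (-x) hxr' hx0' hnn with
        ⟨y, z, hyr, hzr, hy, hz, hsum, hp⟩ | ⟨T, hTne, hrT, hf, hc1, hc2⟩
      · left
        refine ⟨-y, -z, by simp [hyr], by simp [hzr], neg_ne_zero.mpr hy,
          neg_ne_zero.mpr hz, ?_, by rw [gpair_neg_neg]; exact hp⟩
        funext v
        have := congrFun hsum v
        simp only [Pi.add_apply, Pi.neg_apply] at this ⊢
        omega
      · right
        refine ⟨T, hTne, hrT, Or.inr ?_, hc1, hc2⟩
        rw [← hf]; simp
  · -- x ≥ 0 everywhere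
    push_neg at hneg
    rcases forward_nonneg r e he hconn x hxr hx0 hneg with h | ⟨T, hTne, hrT, hf, hc1, hc2⟩
    · exact Or.inl h
    · exact Or.inr ⟨T, hTne, hrT, Or.inl hf, hc1, hc2⟩

end GLA

/-- **Irreducible elements of a graph lattice.** Let `e` be a connected finite
loopless multigraph on `V` with root `r`, and let `Γ` be the lattice of
functions `y : V → ℤ` with `y r = 0` under the pairing `gpair`.  A nonzero
`x ∈ Γ` is irreducible iff `x = ±[T]` for some nonempty `T ⊆ V ∖ {r}` such
that both induced subgraphs on `T` and on `V ∖ T` are connected. -/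
theorem graph_lattice_irreducible {V : Type*} [Fintype V] [DecidableEq V]
    (r : V) (e : V → V → ℕ) (he : ∀ u v, e u v = e v u)
    (hloop : ∀ v, e v v = 0) (hconn : (mgraphOf e).Connected)
    (x : V → ℤ) (hxr : x r = 0) (hx : x ≠ 0) :
    (¬ ∃ y z : V → ℤ, y r = 0 ∧ z r = 0 ∧ y ≠ 0 ∧ z ≠ 0 ∧
        x = y + z ∧ 0 ≤ gpair e he y z) ↔
    ∃ T : Finset V, T.Nonempty ∧ r ∉ T ∧
      (x = (fun v => if v ∈ T then (1 : ℤ) else 0) ∨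
       x = -(fun v => if v ∈ T then (1 : ℤ) else 0)) ∧
      ((mgraphOf e).induce (↑T : Set V)).Connected ∧
      ((mgraphOf e).induce ((↑T : Set V)ᶜ)).Connected := by
  constructor
  · intro hirr
    rcases GLA.forward r e he hconn x hxr hx with h | h
    · exact absurd h hirr
    · exact h
  · rintro ⟨T, hTne, hrT, hform, hc1, hc2⟩ ⟨y, z, hyr, hzr, hy, hz, hsum, hp⟩
    rcases hform with hf | hf
    · exact GLA.core r e he hconn T hrT hTne hc1 hc2
        ⟨y, z, hyr, hzr, hy, hz, by rw [← hf]; exact hsum, hp⟩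
    · refine GLA.core r e he hconn T hrT hTne hc1 hc2
        ⟨-y, -z, by simp [hyr], by simp [hzr], neg_ne_zero.mpr hy, neg_ne_zero.mpr hz,
          ?_, by rw [GLA.gpair_neg_neg]; exact hp⟩
      funext v
      have h1 := congrFun hsum v
      have h2 := congrFun hf v
      simp only [Pi.add_apply, Pi.neg_apply] at h1 h2 ⊢
      omega
end

section
/- Let n ≥ 1 and let a_1, …, a_n ≥ 2 be integers, and let Λ(a_1,…,a_n) be the linear lattice on ℤ^n. Then a nonzero vector v ∈ ℤ^n is irreducible with respect to this form if and only if there exist indices 1 ≤ i ≤ j ≤ n and a sign ε ∈ {+1, −1} such that v = ε(x_i + x_{i+1} + ⋯ + x_j), i.e., v is ± the indicator vector of an interval of consecutive indices. -/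
/-- The Gram matrix of the linear lattice `Λ(a₁,…,aₙ)`: diagonal entries `aᵢ`,
entries `-1` between consecutive indices, and `0` otherwise. -/
def linMat {n : ℕ} (a : Fin n → ℤ) (i j : Fin n) : ℤ :=
  if i = j then a i else if (((i : ℕ) : ℤ) - ((j : ℕ) : ℤ)).natAbs = 1 then -1 else 0

/-- The symmetric bilinear form of the linear lattice `Λ(a₁,…,aₙ)` on `ℤⁿ`. -/
def linForm {n : ℕ} (a : Fin n → ℤ) (x y : Fin n → ℤ) : ℤ :=
  ∑ i, ∑ j, linMat a i j * x i * y j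

open Finset

def ex (n : ℕ) (x : Fin n → ℤ) : ℕ → ℤ := fun k => if h : k < n then x ⟨k, h⟩ else 0

lemma ex_ge (n : ℕ) (x : Fin n → ℤ) {k : ℕ} (h : n ≤ k) : ex n x k = 0 := by
  simp [ex, Nat.not_lt.2 h]

lemma ex_coe (n : ℕ) (x : Fin n → ℤ) (i : Fin n) : ex n x (i : ℕ) = x i := by
  simp [ex, i.isLt]

lemma linForm_eq (n : ℕ) (a : Fin n → ℤ) (x y : Fin n → ℤ) :
    linForm a x y = ∑ k ∈ Finset.range n,
      (ex n a k * (ex n x k * ex n y k) - ex n x k * ex n y (k+1) - ex n x (k+1) * ex n y k) := by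
  have h1 : linForm a x y = ∑ k ∈ range n, ∑ l ∈ range n,
      ((if k = l then ex n a k * (ex n x k * ex n y l) else 0)
        + (if l = k + 1 then -(ex n x k * ex n y l) else 0)
        + (if k = l + 1 then -(ex n x k * ex n y l) else 0)) := by
    unfold linForm
    rw [← Fin.sum_univ_eq_sum_range]
    refine Finset.sum_congr rfl fun i _ => ?_
    rw [← Fin.sum_univ_eq_sum_range]
    refine Finset.sum_congr rfl fun j _ => ?_
    simp only [ex_coe]
    unfold linMat
    simp only [Fin.ext_iff]
    split_ifs <;> (try ring) <;> omega
  have e1 : ∑ k ∈ range n, ∑ l ∈ range n,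
      (if k = l then ex n a k * (ex n x k * ex n y l) else 0)
      = ∑ k ∈ range n, ex n a k * (ex n x k * ex n y k) := by
    refine Finset.sum_congr rfl fun k hk => ?_
    rw [Finset.sum_ite_eq (range n) k (fun l => ex n a k * (ex n x k * ex n y l)), if_pos hk]
  have e2 : ∑ k ∈ range n, ∑ l ∈ range n,
      (if l = k + 1 then -(ex n x k * ex n y l) else 0)
      = ∑ k ∈ range n, -(ex n x k * ex n y (k+1)) := by
    refine Finset.sum_congr rfl fun k _ => ?_
    rw [Finset.sum_ite_eq' (range n) (k+1) (fun l => -(ex n x k * ex n y l))]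
    by_cases h : k + 1 ∈ range n
    · rw [if_pos h]
    · rw [if_neg h, ex_ge n y (by simpa using h)]
      ring
  have e3 : ∑ k ∈ range n, ∑ l ∈ range n,
      (if k = l + 1 then -(ex n x k * ex n y l) else 0)
      = ∑ k ∈ range n, -(ex n x (k+1) * ex n y k) := by
    rw [Finset.sum_comm]
    refine Finset.sum_congr rfl fun l _ => ?_
    rw [Finset.sum_ite_eq' (range n) (l+1) (fun k => -(ex n x k * ex n y l))]
    by_cases h : l + 1 ∈ range n
    · rw [if_pos h]
    · rw [if_neg h, ex_ge n x (by simpa using h)]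
      ring
  rw [h1]
  simp only [Finset.sum_add_distrib]
  rw [e1, e2, e3, ← Finset.sum_add_distrib, ← Finset.sum_add_distrib]
  exact Finset.sum_congr rfl fun k _ => by ring

lemma linForm_key (n : ℕ) (a : Fin n → ℤ) (x y : Fin n → ℤ) :
    linForm a x y = (∑ k ∈ Finset.range n, (ex n a k - 2) * (ex n x k * ex n y k))
      + (ex n x 0 * ex n y 0
        + ∑ k ∈ Finset.range n, (ex n x k - ex n x (k+1)) * (ex n y k - ex n y (k+1))) := by
  have tel : ∑ k ∈ Finset.range n,
      (ex n x k * ex n y k - ex n x (k+1) * ex n y (k+1))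
      = ex n x 0 * ex n y 0 - ex n x n * ex n y n :=
    Finset.sum_range_sub' (fun k => ex n x k * ex n y k) n
  rw [ex_ge n x le_rfl] at tel
  rw [linForm_eq]
  have expand : ∀ k, (ex n a k * (ex n x k * ex n y k) - ex n x k * ex n y (k+1) - ex n x (k+1) * ex n y k)
      = ((ex n a k - 2) * (ex n x k * ex n y k))
        + ((ex n x k - ex n x (k+1)) * (ex n y k - ex n y (k+1)))
        + (ex n x k * ex n y k - ex n x (k+1) * ex n y (k+1)) := by
    intro k; ring
  simp only [expand]
  rw [Finset.sum_add_distrib, Finset.sum_add_distrib, tel]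
  ring

lemma habs {e : ℤ} (he : e = 0 ∨ e = 1 ∨ e = -1) (d : ℤ) : d * (e - d) ≤ 0 := by
  rcases he with h | h | h <;> subst h
  · nlinarith [mul_self_nonneg d]
  · rcases le_or_gt d 0 with hd | hd
    · nlinarith [mul_nonneg (by omega : (0:ℤ) ≤ -d) (by omega : (0:ℤ) ≤ 1 - d)]
    · nlinarith [mul_nonneg (by omega : (0:ℤ) ≤ d) (by omega : (0:ℤ) ≤ d - 1)]
  · rcases le_or_gt 0 d with hd | hd
    · nlinarith [mul_nonneg hd (by omega : (0:ℤ) ≤ d + 1)]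
    · nlinarith [mul_nonneg (by omega : (0:ℤ) ≤ -d) (by omega : (0:ℤ) ≤ -1 - d)]

lemma interval_irred (n : ℕ) (a : Fin n → ℤ) (ha : ∀ i, 2 ≤ a i) (i j : Fin n) (ε : ℤ)
    (hε : ε = 1 ∨ ε = -1) (x y : Fin n → ℤ) (hx : x ≠ 0) (hy : y ≠ 0)
    (hxy : (fun k => if i ≤ k ∧ k ≤ j then ε else 0 : Fin n → ℤ) = x + y)
    (hform : 0 ≤ linForm a x y) : False := by
  set X := ex n x with hXdef
  set Y := ex n y with hYdef
  set V : ℕ → ℤ := fun l => if (i : ℕ) ≤ l ∧ l ≤ (j : ℕ) then ε else 0 with hVdef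
  have hε0 : ε ≠ 0 := by rcases hε with h | h <;> omega
  have hY : ∀ l, Y l = V l - X l := by
    intro l
    by_cases hl : l < n
    · have h1 := congrFun hxy ⟨l, hl⟩
      simp only [Pi.add_apply] at h1
      have hcond : (i ≤ (⟨l, hl⟩ : Fin n) ∧ (⟨l, hl⟩ : Fin n) ≤ j)
          ↔ ((i : ℕ) ≤ l ∧ l ≤ (j : ℕ)) := by simp [Fin.le_def]
      rw [if_congr hcond rfl rfl] at h1
      simp only [hYdef, hXdef, hVdef, ex, dif_pos hl]
      split_ifs at h1 ⊢ <;> linarith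
    · have hjl : ¬ ((i:ℕ) ≤ l ∧ l ≤ (j:ℕ)) := by
        have := j.isLt; omega
      have h1 : ex n x l = 0 := ex_ge n x (le_of_not_gt hl)
      have h2 : ex n y l = 0 := ex_ge n y (le_of_not_gt hl)
      simp only [hYdef, hXdef, hVdef, h1, h2, if_neg hjl]
      ring
  have hVval : ∀ l, V l = 0 ∨ V l = ε := by
    intro l; simp only [hVdef]; split_ifs <;> simp
  have he3 : ∀ l : ℕ, (V l - V (l+1)) = 0 ∨ (V l - V (l+1)) = 1 ∨ (V l - V (l+1)) = -1 := by
    intro l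
    rcases hVval l with h1 | h1 <;> rcases hVval (l+1) with h2 | h2 <;>
      rcases hε with h | h <;> omega
  have hV01 : ∀ l : ℕ, V l = 0 ∨ V l = 1 ∨ V l = -1 := by
    intro l; rcases hVval l with h | h <;> rcases hε with h' | h' <;> omega
  -- nonpositivity of all terms
  have hs1 : ∀ k ∈ Finset.range n, (ex n a k - 2) * (X k * Y k) ≤ 0 := by
    intro k hk
    rw [Finset.mem_range] at hk
    have h2 : 0 ≤ ex n a k - 2 := by
      have := ha ⟨k, hk⟩
      simp only [ex, dif_pos hk]; omega
    have h3 : X k * Y k ≤ 0 := by rw [hY k]; exact habs (hV01 k) (X k)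
    exact mul_nonpos_iff.2 (Or.inl ⟨h2, h3⟩)
  have hs2 : ∀ k ∈ Finset.range n, (X k - X (k+1)) * (Y k - Y (k+1)) ≤ 0 := by
    intro k _
    have h4 : Y k - Y (k+1) = (V k - V (k+1)) - (X k - X (k+1)) := by
      rw [hY k, hY (k+1)]; ring
    rw [h4]
    exact habs (he3 k) _
  have hb : X 0 * Y 0 ≤ 0 := by rw [hY 0]; exact habs (hV01 0) (X 0)
  have hform' : 0 ≤ (∑ k ∈ Finset.range n, (ex n a k - 2) * (X k * Y k))
      + (X 0 * Y 0 + ∑ k ∈ Finset.range n, (X k - X (k+1)) * (Y k - Y (k+1))) := by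
    rw [← linForm_key n a x y]; exact hform
  have hS1 : (∑ k ∈ Finset.range n, (ex n a k - 2) * (X k * Y k)) ≤ 0 :=
    Finset.sum_nonpos hs1
  have hS2 : (∑ k ∈ Finset.range n, (X k - X (k+1)) * (Y k - Y (k+1))) ≤ 0 :=
    Finset.sum_nonpos hs2
  have hS2eq : (∑ k ∈ Finset.range n, (X k - X (k+1)) * (Y k - Y (k+1))) = 0 := by linarith
  have hbeq : X 0 * Y 0 = 0 := by linarith
  have hterm : ∀ k ∈ Finset.range n, (X k - X (k+1)) * (Y k - Y (k+1)) = 0 :=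
    (Finset.sum_eq_zero_iff_of_nonpos hs2).1 hS2eq
  have hd : ∀ l : ℕ, X l - X (l+1) = 0 ∨ X l - X (l+1) = V l - V (l+1) := by
    intro l
    by_cases hl : l < n
    · have h := hterm l (Finset.mem_range.2 hl)
      have hYd : Y l - Y (l+1) = (V l - V (l+1)) - (X l - X (l+1)) := by
        rw [hY l, hY (l+1)]; ring
      rw [hYd] at h
      rcases mul_eq_zero.1 h with h | h
      · left; exact h
      · right; omega
    · left
      have h1 : X l = 0 := ex_ge n x (le_of_not_gt hl)
      have h2 : X (l+1) = 0 := ex_ge n x (by omega)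
      omega
  have h0 : X 0 = 0 ∨ X 0 = V 0 := by
    rw [hY 0] at hbeq
    rcases mul_eq_zero.1 hbeq with h | h
    · left; exact h
    · right; omega
  -- tail lemma
  have tailzero : ∀ m : ℕ, (∀ l, m ≤ l → V l = 0) → X m = 0 := by
    intro m hm
    have hc : ∀ p : ℕ, X (m + p) = X m := by
      intro p
      induction p with
      | zero => rfl
      | succ p ih =>
        have hdp := hd (m + p)
        have h1 : V (m+p) = 0 := hm _ (by omega)
        have h2 : V (m+p+1) = 0 := hm _ (by omega)
        have h3 : X (m + p) - X (m + p + 1) = 0 := by rcases hdp with h | h <;> omega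
        have h4 : m + (p+1) = m + p + 1 := rfl
        rw [h4]
        omega
    have h1 : X (m + n) = X m := hc n
    have h2 : X (m + n) = 0 := ex_ge n x (by omega)
    omega
  have hVmono1 : ∀ k l : ℕ, V k = 0 → V (k+1) ≠ 0 → l ≤ k → V l = 0 := by
    intro k l h1 h2 h3
    simp only [hVdef] at h1 h2 ⊢
    split_ifs at h1 h2 ⊢ <;> first | rfl | omega | (exact absurd rfl h2) | (exact h1)
  have hVmono2 : ∀ k l : ℕ, V k ≠ 0 → V (k+1) = 0 → k+1 ≤ l → V l = 0 := by
    intro k l h1 h2 h3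
    simp only [hVdef] at h1 h2 ⊢
    split_ifs at h1 h2 ⊢ <;> first | rfl | omega | (exact absurd rfl h1) | (exact h2)
  -- main induction
  have claim : ∀ k : ℕ, (∀ l, l ≤ k → X l = 0) ∨ (∀ l, l ≤ k → X l = V l) := by
    intro k
    induction k with
    | zero =>
      rcases h0 with h | h
      · left; intro l hl; rw [Nat.le_zero.1 hl]; exact h
      · right; intro l hl; rw [Nat.le_zero.1 hl]; exact h
    | succ k ih =>
      have hdk := hd k
      by_cases hVeq : V (k+1) = V k
      · rcases ih with hA | hB
        · left; intro l hl
          by_cases h' : l ≤ k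
          · exact hA l h'
          · have hXk := hA k le_rfl
            have hlk : l = k + 1 := by omega
            rw [hlk]; rcases hdk with h | h <;> omega
        · right; intro l hl
          by_cases h' : l ≤ k
          · exact hB l h'
          · have hXk := hB k le_rfl
            have hlk : l = k + 1 := by omega
            rw [hlk]; rcases hdk with h | h <;> omega
      · rcases hVval k with hk0 | hk0 <;> rcases hVval (k+1) with hk1 | hk1
        · exact absurd (by omega) hVeq
        · -- V k = 0, V (k+1) = ε : left boundary
          have hzero : ∀ l, l ≤ k → V l = 0 := fun l hl =>
            hVmono1 k l hk0 (by omega) hl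
          have hXk : X k = 0 := by
            rcases ih with hA | hB
            · exact hA k le_rfl
            · rw [hB k le_rfl]; exact hk0
          rcases hdk with h | h
          · left; intro l hl
            by_cases h' : l ≤ k
            · rcases ih with hA | hB
              · exact hA l h'
              · rw [hB l h']; exact hzero l h'
            · have hlk : l = k + 1 := by omega
              rw [hlk]; omega
          · right; intro l hl
            by_cases h' : l ≤ k
            · rcases ih with hA | hB
              · rw [hA l h']; exact (hzero l h').symm
              · exact hB l h'
            · have hlk : l = k + 1 := by omega
              rw [hlk]; omega
        · -- V k = ε, V (k+1) = 0 : right boundary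
          have hzero : ∀ l, k+1 ≤ l → V l = 0 := fun l hl =>
            hVmono2 k l (by omega) hk1 hl
          have hX1 : X (k+1) = 0 := tailzero (k+1) hzero
          rcases ih with hA | hB
          · left; intro l hl
            by_cases h' : l ≤ k
            · exact hA l h'
            · have hlk : l = k + 1 := by omega
              rw [hlk]; exact hX1
          · right; intro l hl
            by_cases h' : l ≤ k
            · exact hB l h'
            · have hlk : l = k + 1 := by omega
              rw [hlk]; omega
        · exact absurd (by omega) hVeq
  rcases claim n with hA | hB
  · apply hx
    funext m
    have h1 := hA (m : ℕ) (le_of_lt m.isLt)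
    rw [hXdef, ex_coe] at h1
    simpa using h1
  · apply hy
    funext m
    have h1 := hB (m : ℕ) (le_of_lt m.isLt)
    have h2 := hY (m : ℕ)
    rw [hXdef, ex_coe] at h1
    rw [hYdef, hXdef, ex_coe, ex_coe] at h2
    rw [h1] at h2
    simpa using h2

lemma reducible_of_not_interval (n : ℕ) (a : Fin n → ℤ) (ha : ∀ i, 2 ≤ a i)
    (v : Fin n → ℤ) (hv : v ≠ 0)
    (hno : ¬ ∃ (i j : Fin n) (ε : ℤ), i ≤ j ∧ (ε = 1 ∨ ε = -1) ∧
      v = fun k => if i ≤ k ∧ k ≤ j then ε else 0) :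
    ∃ x y : Fin n → ℤ, x ≠ 0 ∧ y ≠ 0 ∧ v = x + y ∧ 0 ≤ linForm a x y := by
  classical
  obtain ⟨S, hSdef⟩ : ∃ S : Finset (Fin n), S = Finset.univ.filter (fun m => v m ≠ 0) :=
    ⟨_, rfl⟩
  have hS : S.Nonempty := by
    obtain ⟨m, hm⟩ : ∃ m, v m ≠ 0 := by
      by_contra h
      push_neg at h
      exact hv (funext fun m => h m)
    exact ⟨m, by rw [hSdef]; simp [hm]⟩
  obtain ⟨i0, hi0def⟩ : ∃ i0, i0 = S.min' hS := ⟨_, rfl⟩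
  obtain ⟨j0, hj0def⟩ : ∃ j0, j0 = S.max' hS := ⟨_, rfl⟩
  have hvi0 : v i0 ≠ 0 := by
    have h1 : i0 ∈ S := hi0def ▸ S.min'_mem hS
    rw [hSdef, Finset.mem_filter] at h1
    exact h1.2
  have hvj0 : v j0 ≠ 0 := by
    have h1 : j0 ∈ S := hj0def ▸ S.max'_mem hS
    rw [hSdef, Finset.mem_filter] at h1
    exact h1.2
  have hij : i0 ≤ j0 := by
    rw [hi0def, hj0def]; exact S.min'_le _ (S.max'_mem hS)
  have hout : ∀ m : Fin n, v m ≠ 0 → i0 ≤ m ∧ m ≤ j0 := by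
    intro m hm
    have hmem : m ∈ S := by rw [hSdef]; simp [hm]
    rw [hi0def, hj0def]
    exact ⟨S.min'_le m hmem, S.le_max' m hmem⟩
  set V := ex n v with hVdef
  have hVout : ∀ l : ℕ, (l < (i0:ℕ) ∨ (j0:ℕ) < l) → V l = 0 := by
    intro l hl
    by_cases h : l < n
    · rw [hVdef, show ex n v l = v ⟨l, h⟩ from dif_pos h]
      by_contra hne
      have := hout ⟨l, h⟩ hne
      rw [Fin.le_def, Fin.le_def] at this
      simp only at this
      omega
    · exact ex_ge n v (le_of_not_gt h)
  by_cases hA : ∃ k : ℕ, k + 1 < n ∧ (i0:ℕ) ≤ k ∧ k < (j0:ℕ) ∧ V k * V (k+1) ≤ 0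
  · -- split at a sign change / zero
    obtain ⟨k, hk1, hk2, hk3, hk4⟩ := hA
    refine ⟨fun m => if (m:ℕ) ≤ k then v m else 0,
            fun m => if (m:ℕ) ≤ k then 0 else v m, ?_, ?_, ?_, ?_⟩
    · intro h
      have := congrFun h i0
      simp only [if_pos (by omega : ((i0:ℕ) ≤ k)), Pi.zero_apply] at this
      exact hvi0 this
    · intro h
      have := congrFun h j0
      simp only [if_neg (by omega : ¬ ((j0:ℕ) ≤ k)), Pi.zero_apply] at this
      exact hvj0 this
    · funext m
      simp only [Pi.add_apply]
      split_ifs <;> ring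
    · have hX : ∀ l : ℕ, ex n (fun m => if (m:ℕ) ≤ k then v m else 0) l
          = if l ≤ k then V l else 0 := by
        intro l
        by_cases hl : l < n
        · rw [show ex n _ l = _ from dif_pos hl, hVdef,
            show ex n v l = v ⟨l, hl⟩ from dif_pos hl]
        · rw [ex_ge n _ (le_of_not_gt hl), hVdef, ex_ge n v (le_of_not_gt hl)]
          split_ifs <;> rfl
      have hY : ∀ l : ℕ, ex n (fun m => if (m:ℕ) ≤ k then 0 else v m) l
          = if l ≤ k then 0 else V l := by
        intro l
        by_cases hl : l < n
        · rw [show ex n _ l = _ from dif_pos hl, hVdef,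
            show ex n v l = v ⟨l, hl⟩ from dif_pos hl]
        · rw [ex_ge n _ (le_of_not_gt hl), hVdef, ex_ge n v (le_of_not_gt hl)]
          split_ifs <;> rfl
      rw [linForm_eq]
      apply Finset.sum_nonneg
      intro m hm
      rw [hX, hX, hY, hY]
      by_cases c1 : m ≤ k
      · by_cases c2 : m + 1 ≤ k
        · simp only [if_pos c1, if_pos c2]
          simp
        · have hmk : m = k := by omega
          subst hmk
          simp only [if_pos c1, if_neg c2]
          nlinarith [hk4]
      · have c2 : ¬ (m + 1 ≤ k) := by omega
        simp only [if_neg c1, if_neg c2]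
        simp
  · -- constant sign on interval support
    push_neg at hA
    set s : ℤ := if 0 ≤ v i0 then 1 else -1 with hsdef
    have hs : s = 1 ∨ s = -1 := by
      rw [hsdef]; split_ifs <;> simp
    have hss : s * s = 1 := by rcases hs with h | h <;> rw [h] <;> ring
    have hVi0 : V (i0 : ℕ) = v i0 := by rw [hVdef, ex_coe]
    have hsi : 1 ≤ s * V (i0 : ℕ) := by
      rw [hVi0, hsdef]
      split_ifs with h
      · have : v i0 ≠ 0 := hvi0
        omega
      · omega
    have hsign : ∀ k : ℕ, (i0:ℕ) ≤ k → k ≤ (j0:ℕ) → 1 ≤ s * V k := by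
      have key : ∀ d : ℕ, (i0:ℕ) + d ≤ (j0:ℕ) → 1 ≤ s * V ((i0:ℕ) + d) := by
        intro d
        induction d with
        | zero => intro _; simpa using hsi
        | succ d ih =>
          intro hd
          have ih' := ih (by omega)
          have hprod : 0 < V ((i0:ℕ) + d) * V ((i0:ℕ) + d + 1) := by
            have := hA ((i0:ℕ) + d) (by have := j0.isLt; omega) (by omega) (by omega)
            omega
          have harr : (i0:ℕ) + (d + 1) = (i0:ℕ) + d + 1 := rfl
          rw [harr]
          rcases hs with h | h
          · rw [h, one_mul] at ih' ⊢
            by_contra hc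
            have : V ((i0:ℕ) + d) * V ((i0:ℕ) + d + 1) ≤ 0 :=
              mul_nonpos_iff.2 (Or.inl ⟨by omega, by omega⟩)
            omega
          · rw [h] at ih' ⊢
            have ih'' : V ((i0:ℕ) + d) ≤ -1 := by omega
            by_contra hc
            have hc' : 0 ≤ V ((i0:ℕ) + d + 1) := by omega
            have : V ((i0:ℕ) + d) * V ((i0:ℕ) + d + 1) ≤ 0 :=
              mul_nonpos_iff.2 (Or.inr ⟨by omega, by omega⟩)
            omega
      intro k hk1 hk2
      have : k = (i0:ℕ) + (k - (i0:ℕ)) := by omega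
      rw [this]
      exact key _ (by omega)
    set x : Fin n → ℤ := fun m => if i0 ≤ m ∧ m ≤ j0 then s else 0 with hxdef
    refine ⟨x, fun m => v m - x m, ?_, ?_, ?_, ?_⟩
    · intro h
      have := congrFun h i0
      rw [hxdef] at this
      simp only [if_pos (show i0 ≤ i0 ∧ i0 ≤ j0 from ⟨le_refl i0, hij⟩), Pi.zero_apply] at this
      rcases hs with h' | h' <;> omega
    · intro h
      apply hno
      refine ⟨i0, j0, s, hij, hs, ?_⟩
      funext m
      have hm := congrFun h m
      simp only [Pi.zero_apply, sub_eq_zero] at hm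
      rw [hm, hxdef]
    · funext m
      simp only [Pi.add_apply]
      ring
    · have hX : ∀ l : ℕ, ex n x l = if (i0:ℕ) ≤ l ∧ l ≤ (j0:ℕ) then s else 0 := by
        intro l
        by_cases hl : l < n
        · rw [show ex n x l = x ⟨l, hl⟩ from dif_pos hl, hxdef]
          simp only [Fin.le_def]
        · rw [ex_ge n x (le_of_not_gt hl), if_neg (by have := j0.isLt; omega)]
      have hY : ∀ l : ℕ, ex n (fun m => v m - x m) l = V l - ex n x l := by
        intro l
        by_cases hl : l < n
        · rw [show ex n _ l = _ from dif_pos hl, hVdef,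
            show ex n v l = v ⟨l, hl⟩ from dif_pos hl,
            show ex n x l = x ⟨l, hl⟩ from dif_pos hl]
        · rw [ex_ge n _ (le_of_not_gt hl), ex_ge n x (le_of_not_gt hl),
            hVdef, ex_ge n v (le_of_not_gt hl)]
          ring
      rw [linForm_key]
      have hterm1 : ∀ m ∈ Finset.range n,
          0 ≤ (ex n a m - 2) * (ex n x m * ex n (fun m => v m - x m) m) := by
        intro m hm
        rw [Finset.mem_range] at hm
        apply mul_nonneg
        · have := ha ⟨m, hm⟩
          simp only [ex, dif_pos hm]
          omega
        · rw [hX, hY, hX]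
          by_cases c : (i0:ℕ) ≤ m ∧ m ≤ (j0:ℕ)
          · simp only [if_pos c]
            have := hsign m c.1 c.2
            nlinarith [hss]
          · simp only [if_neg c]
            simp
      apply add_nonneg (Finset.sum_nonneg hterm1)
      apply add_nonneg
      · rw [hX, hY, hX]
        by_cases c : (i0:ℕ) ≤ 0 ∧ 0 ≤ (j0:ℕ)
        · simp only [if_pos c]
          have := hsign 0 c.1 c.2
          nlinarith [hss]
        · simp only [if_neg c]
          simp
      · apply Finset.sum_nonneg
        intro m hm
        rw [hY, hY, hX, hX]
        by_cases c1 : (i0:ℕ) ≤ m ∧ m ≤ (j0:ℕ)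
          <;> by_cases c2 : (i0:ℕ) ≤ m + 1 ∧ m + 1 ≤ (j0:ℕ)
        · simp only [if_pos c1, if_pos c2]
          simp
        · -- m = j0
          have hm1 : V (m+1) = 0 := hVout (m+1) (by omega)
          simp only [if_pos c1, if_neg c2]
          have := hsign m c1.1 c1.2
          rw [hm1]
          nlinarith [hss]
        · -- m + 1 = i0
          have hm0 : V m = 0 := hVout m (by omega)
          simp only [if_neg c1, if_pos c2]
          have := hsign (m+1) c2.1 c2.2
          rw [hm0]
          nlinarith [hss]
        · simp only [if_neg c1, if_neg c2]
          simp

/-- **Irreducible elements of a linear lattice.** A nonzero vector of the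
linear lattice `Λ(a₁,…,aₙ)` (all `aᵢ ≥ 2`) is irreducible iff it is `±` the
indicator vector of an interval of consecutive indices. -/
theorem linear_lattice_irreducible (n : ℕ) (hn : 1 ≤ n) (a : Fin n → ℤ)
    (ha : ∀ i, 2 ≤ a i) (v : Fin n → ℤ) (hv : v ≠ 0) :
    (¬ ∃ x y : Fin n → ℤ, x ≠ 0 ∧ y ≠ 0 ∧ v = x + y ∧ 0 ≤ linForm a x y) ↔
    ∃ (i j : Fin n) (ε : ℤ), i ≤ j ∧ (ε = 1 ∨ ε = -1) ∧
      v = fun k => if i ≤ k ∧ k ≤ j then ε else 0 := by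
  constructor
  · intro hirr
    by_contra hno
    exact hirr (reducible_of_not_interval n a ha v hv hno)
  · rintro ⟨i, j, ε, hij, hε, hveq⟩ ⟨x, y, hx, hy, hxy, hf⟩
    exact interval_irred n a ha i j ε hε x y hx hy (by rw [← hveq]; exact hxy) hf
end

section
/- Let n ≥ 1 and let a_1, …, a_n ≥ 2 be integers, let Λ(a_1,…,a_n) be the linear lattice on ℤ^n, and let T = {i, i+1, …, j} ⊆ {1,…,n} be an interval with class [T] = x_i + x_{i+1} + ⋯ + x_j. Then [T] is unbreakable if and only if at most one index k with i ≤ k ≤ j satisfies a_k ≥ 3. -/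
namespace LinearLatticeAux

variable {n : ℕ}


def pad (c : Fin n → ℤ) : ℕ → ℤ := fun m => if h : m < n then c ⟨m, h⟩ else 0

lemma pad_coe (c : Fin n → ℤ) (k : Fin n) : pad c (k : ℕ) = c k := by
  simp [pad]

lemma pad_ge (c : Fin n → ℤ) {m : ℕ} (h : n ≤ m) : pad c m = 0 := dif_neg (by omega)

lemma form_eq (a : Fin n → ℤ) (x y : Fin n → ℤ) :
    linForm a x y = (∑ k, a k * x k * y k)
      - ∑ k ∈ Finset.range n, (pad x k * pad y (k+1) + pad x (k+1) * pad y k) := by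
  have step0 : linForm a x y = ∑ p ∈ Finset.range n, ∑ q ∈ Finset.range n,
      ((if p = q then pad a p * pad x p * pad y q else 0)
        + (if p+1 = q then -(pad x p * pad y q) else 0)
        + (if q+1 = p then -(pad x p * pad y q) else 0)) := by
    rw [linForm, ← Fin.sum_univ_eq_sum_range]
    refine Finset.sum_congr rfl fun i _ => ?_
    rw [← Fin.sum_univ_eq_sum_range]
    refine Finset.sum_congr rfl fun j _ => ?_
    simp only [pad_coe]
    unfold linMat
    rcases eq_or_ne i j with h | h
    · subst h
      have h1 : ¬((i:ℕ)+1 = (i:ℕ)) := by omega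
      simp only [if_pos rfl, if_neg h1]
      simp [mul_comm, mul_assoc, mul_left_comm]
    · have hne : (i:ℕ) ≠ (j:ℕ) := fun hh => h (Fin.ext hh)
      rw [if_neg h, if_neg (fun hh => h (Fin.ext hh))]
      split_ifs <;> first | ring1 | (exfalso; omega)
  rw [step0]
  have split3 : ∀ p ∈ Finset.range n, (∑ q ∈ Finset.range n,
      ((if p = q then pad a p * pad x p * pad y q else 0)
        + (if p+1 = q then -(pad x p * pad y q) else 0)
        + (if q+1 = p then -(pad x p * pad y q) else 0)))
      = (∑ q ∈ Finset.range n, (if p = q then pad a p * pad x p * pad y q else 0))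
        + (∑ q ∈ Finset.range n, (if p+1 = q then -(pad x p * pad y q) else 0))
        + (∑ q ∈ Finset.range n, (if q+1 = p then -(pad x p * pad y q) else 0)) := by
    intro p _
    rw [← Finset.sum_add_distrib, ← Finset.sum_add_distrib]
  rw [Finset.sum_congr rfl split3]
  rw [Finset.sum_add_distrib, Finset.sum_add_distrib]
  have h1 : (∑ p ∈ Finset.range n, ∑ q ∈ Finset.range n,
      (if p = q then pad a p * pad x p * pad y q else 0)) = ∑ k, a k * x k * y k := by
    rw [← Fin.sum_univ_eq_sum_range (fun p => ∑ q ∈ Finset.range n,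
      (if p = q then pad a p * pad x p * pad y q else 0))]
    refine Finset.sum_congr rfl fun i _ => ?_
    rw [Finset.sum_ite_eq (Finset.range n) (i : ℕ) (fun q => pad a i * pad x i * pad y q)]
    rw [if_pos (Finset.mem_range.mpr i.isLt)]
    simp [pad_coe]
  have h2 : (∑ p ∈ Finset.range n, ∑ q ∈ Finset.range n,
      (if p+1 = q then -(pad x p * pad y q) else 0))
      = -∑ k ∈ Finset.range n, pad x k * pad y (k+1) := by
    rw [← Finset.sum_neg_distrib]
    refine Finset.sum_congr rfl fun p _ => ?_
    rw [Finset.sum_ite_eq (Finset.range n) (p+1) (fun q => -(pad x p * pad y q))]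
    split_ifs with h
    · rfl
    · rw [pad_ge y (by simpa using h)]
      ring
  have h3 : (∑ p ∈ Finset.range n, ∑ q ∈ Finset.range n,
      (if q+1 = p then -(pad x p * pad y q) else 0))
      = -∑ k ∈ Finset.range n, pad x (k+1) * pad y k := by
    rw [Finset.sum_comm, ← Finset.sum_neg_distrib]
    refine Finset.sum_congr rfl fun q _ => ?_
    rw [Finset.sum_ite_eq (Finset.range n) (q+1) (fun p => -(pad x p * pad y q))]
    split_ifs with h
    · rfl
    · rw [pad_ge x (by simpa using h)]
      ring
  rw [h1, h2, h3, Finset.sum_add_distrib]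
  ring


def V (c : Fin n → ℤ) : ℤ := (pad c 0)^2 + ∑ k ∈ Finset.range n, (pad c k - pad c (k+1))^2

def W (a c : Fin n → ℤ) : ℤ := ∑ k, (a k - 2) * (c k)^2

lemma form_self (a : Fin n → ℤ) (x : Fin n → ℤ) : linForm a x x = W a x + V x := by
  rw [form_eq, W, V]
  have e1 : ∑ k ∈ Finset.range n, (pad x k - pad x (k+1))^2
      = (∑ k ∈ Finset.range n, (pad x k)^2) + (∑ k ∈ Finset.range n, (pad x (k+1))^2)
        - 2 * ∑ k ∈ Finset.range n, pad x k * pad x (k+1) := by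
    rw [Finset.mul_sum, ← Finset.sum_add_distrib, ← Finset.sum_sub_distrib]
    exact Finset.sum_congr rfl fun k _ => by ring
  have e2 : (∑ k ∈ Finset.range n, (pad x (k+1))^2)
      = (∑ k ∈ Finset.range n, (pad x k)^2) + (pad x n)^2 - (pad x 0)^2 := by
    have := Finset.sum_range_succ (fun k => (pad x k)^2) n
    have h2 := Finset.sum_range_succ' (fun k => (pad x k)^2) n
    -- sum_range_succ' : ∑_{range (n+1)} f = ∑_{range n} f (k+1) + f 0
    omega
  have e3 : pad x n = 0 := pad_ge x le_rfl
  have e4 : (∑ k, a k * x k * x k) = (∑ k, (a k - 2) * (x k)^2) + 2 * ∑ k ∈ Finset.range n, (pad x k)^2 := by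
    rw [← Fin.sum_univ_eq_sum_range (fun k => (pad x k)^2), Finset.mul_sum,
      ← Finset.sum_add_distrib]
    exact Finset.sum_congr rfl fun k _ => by rw [pad_coe]; ring
  have e5 : ∑ k ∈ Finset.range n, (pad x k * pad x (k+1) + pad x (k+1) * pad x k)
      = 2 * ∑ k ∈ Finset.range n, pad x k * pad x (k+1) := by
    rw [Finset.mul_sum]
    exact Finset.sum_congr rfl fun k _ => by ring
  rw [e4, e5]
  rw [e3] at e2
  linarith [e1, e2]

lemma linMat_symm (a : Fin n → ℤ) (i j : Fin n) : linMat a i j = linMat a j i := by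
  unfold linMat
  rcases eq_or_ne i j with h | h
  · subst h; simp
  · rw [if_neg h, if_neg (Ne.symm h)]
    have : (((i:ℕ):ℤ) - ((j:ℕ):ℤ)).natAbs = (((j:ℕ):ℤ) - ((i:ℕ):ℤ)).natAbs := by omega
    rw [this]

lemma form_symm (a : Fin n → ℤ) (x y : Fin n → ℤ) : linForm a x y = linForm a y x := by
  rw [linForm, linForm, Finset.sum_comm]
  exact Finset.sum_congr rfl fun i _ => Finset.sum_congr rfl fun j _ => by
    rw [linMat_symm]; ring

lemma form_add (a : Fin n → ℤ) (x y : Fin n → ℤ) :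
    linForm a (x + y) (x + y) = linForm a x x + 2 * linForm a x y + linForm a y y := by
  have e : linForm a (x + y) (x + y)
      = linForm a x x + linForm a x y + linForm a y x + linForm a y y := by
    unfold linForm
    rw [← Finset.sum_add_distrib, ← Finset.sum_add_distrib, ← Finset.sum_add_distrib]
    refine Finset.sum_congr rfl fun i _ => ?_
    rw [← Finset.sum_add_distrib, ← Finset.sum_add_distrib, ← Finset.sum_add_distrib]
    refine Finset.sum_congr rfl fun j _ => ?_
    simp only [Pi.add_apply]
    ring
  rw [e, form_symm a y x]
  ring

lemma V_nonneg (c : Fin n → ℤ) : 0 ≤ V c := by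
  have : (0:ℤ) ≤ ∑ k ∈ Finset.range n, (pad c k - pad c (k+1))^2 :=
    Finset.sum_nonneg fun k _ => sq_nonneg _
  have := sq_nonneg (pad c 0)
  unfold V; linarith

lemma W_nonneg (a : Fin n → ℤ) (ha : ∀ i, 2 ≤ a i) (c : Fin n → ℤ) : 0 ≤ W a c :=
  Finset.sum_nonneg fun k _ => mul_nonneg (by linarith [ha k]) (sq_nonneg _)

lemma W_ge (a : Fin n → ℤ) (ha : ∀ i, 2 ≤ a i) (c : Fin n → ℤ) (p : Fin n) :
    (a p - 2) * (c p)^2 ≤ W a c :=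
  Finset.single_le_sum (f := fun k => (a k - 2) * (c k)^2)
    (fun k _ => mul_nonneg (by linarith [ha k]) (sq_nonneg _)) (Finset.mem_univ p)

lemma const_of_no_step (q : ℕ → ℤ) (s : ℕ) :
    ∀ t, s ≤ t → (∀ k, s ≤ k → k < t → q k = q (k+1)) → q s = q t := by
  intro t
  induction t with
  | zero =>
    intro h _
    obtain rfl : s = 0 := by omega
    rfl
  | succ t ih =>
    intro hst hc
    rcases Nat.eq_or_lt_of_le hst with h | h
    · rw [h]
    · have h1 := ih (by omega) (fun k hk hk' => hc k hk (by omega))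
      rw [h1]
      exact hc t (by omega) (by omega)

lemma exists_step (q : ℕ → ℤ) {s t : ℕ} (hst : s ≤ t) (hne : q s ≠ q t) :
    ∃ k, s ≤ k ∧ k < t ∧ q k ≠ q (k+1) := by
  by_contra hc
  push_neg at hc
  exact hne (const_of_no_step q s t hst hc)

lemma sq_one_le {d : ℤ} (h : d ≠ 0) : 1 ≤ d^2 := by
  rcases lt_or_gt_of_ne h with h | h <;> nlinarith

lemma V_ge_two (c : Fin n → ℤ) (hc : c ≠ 0) : 2 ≤ V c := by
  have hm : ∃ m : Fin n, c m ≠ 0 := by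
    by_contra h
    push_neg at h
    exact hc (funext fun k => h k)
  obtain ⟨m, hm⟩ := hm
  have hpm : pad c (m : ℕ) ≠ 0 := by rw [pad_coe]; exact hm
  have hn0 : pad c n = 0 := pad_ge c le_rfl
  have hnonneg : ∀ k ∈ Finset.range n, (0:ℤ) ≤ (pad c k - pad c (k+1))^2 :=
    fun k _ => sq_nonneg _
  rcases eq_or_ne (pad c 0) 0 with h0 | h0
  · -- two steps
    obtain ⟨k1, hk1s, hk1t, hk1⟩ := exists_step (pad c) (Nat.zero_le (m:ℕ)) (by rw [h0]; exact Ne.symm hpm)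
    obtain ⟨k2, hk2s, hk2t, hk2⟩ := exists_step (pad c) (Nat.le_of_lt m.isLt) (by rw [hn0]; exact hpm)
    have hne : k1 ≠ k2 := by omega
    have hsub : ({k1, k2} : Finset ℕ) ⊆ Finset.range n := by
      intro k hk
      simp only [Finset.mem_insert, Finset.mem_singleton] at hk
      rcases hk with h | h <;> (subst h; simp only [Finset.mem_range]; omega)
    have hle : (pad c k1 - pad c (k1+1))^2 + (pad c k2 - pad c (k2+1))^2
        ≤ ∑ k ∈ Finset.range n, (pad c k - pad c (k+1))^2 := by
      have h := Finset.sum_le_sum_of_subset_of_nonneg hsub (fun k _ _ => sq_nonneg (pad c k - pad c (k+1)))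
      rwa [Finset.sum_pair hne] at h
    have h1 : 1 ≤ (pad c k1 - pad c (k1+1))^2 := sq_one_le (by omega)
    have h2 : 1 ≤ (pad c k2 - pad c (k2+1))^2 := sq_one_le (by omega)
    unfold V
    nlinarith [sq_nonneg (pad c 0)]
  · -- first term plus one step
    obtain ⟨k1, hk1s, hk1t, hk1⟩ := exists_step (pad c) (Nat.zero_le n) (by rw [hn0]; exact h0)
    have hle : (pad c k1 - pad c (k1+1))^2
        ≤ ∑ k ∈ Finset.range n, (pad c k - pad c (k+1))^2 :=
      Finset.single_le_sum hnonneg (Finset.mem_range.mpr hk1t)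
    have h1 : 1 ≤ (pad c k1 - pad c (k1+1))^2 := sq_one_le (by omega)
    have h2 : 1 ≤ (pad c 0)^2 := sq_one_le h0
    unfold V
    linarith

lemma pad_indicator (lo hi : ℕ) (hhi : hi < n) (m : ℕ) :
    pad (fun k : Fin n => if lo ≤ (k:ℕ) ∧ (k:ℕ) ≤ hi then (1:ℤ) else 0) m
      = if lo ≤ m ∧ m ≤ hi then 1 else 0 := by
  unfold pad
  rcases Nat.lt_or_ge m n with h | h
  · rw [dif_pos h]
  · rw [dif_neg (by omega), if_neg (by omega)]

lemma V_indicator (lo hi : ℕ) (hlo : lo ≤ hi) (hhi : hi < n) :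
    V (fun k : Fin n => if lo ≤ (k:ℕ) ∧ (k:ℕ) ≤ hi then (1:ℤ) else 0) = 2 := by
  unfold V
  simp only [pad_indicator lo hi hhi]
  rcases Nat.eq_zero_or_pos lo with h0 | h0
  · subst h0
    rw [if_pos (by omega)]
    have hterm : ∀ k ∈ Finset.range n,
        ((if 0 ≤ k ∧ k ≤ hi then (1:ℤ) else 0) - (if 0 ≤ k+1 ∧ k+1 ≤ hi then 1 else 0))^2
        = if k = hi then 1 else 0 := by
      intro k _
      split_ifs <;> first | (exfalso; omega) | norm_num
    rw [Finset.sum_congr rfl hterm, Finset.sum_ite_eq' (Finset.range n) hi (fun _ => (1:ℤ))]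
    rw [if_pos (Finset.mem_range.mpr hhi)]
    norm_num
  · rw [if_neg (by omega)]
    have hterm : ∀ k ∈ Finset.range n,
        ((if lo ≤ k ∧ k ≤ hi then (1:ℤ) else 0) - (if lo ≤ k+1 ∧ k+1 ≤ hi then 1 else 0))^2
        = (if k = lo - 1 then (1:ℤ) else 0) + (if k = hi then 1 else 0) := by
      intro k _
      split_ifs <;> first | (exfalso; omega) | norm_num
    rw [Finset.sum_congr rfl hterm, Finset.sum_add_distrib,
      Finset.sum_ite_eq' (Finset.range n) (lo-1) (fun _ => (1:ℤ)),
      Finset.sum_ite_eq' (Finset.range n) hi (fun _ => (1:ℤ)),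
      if_pos (Finset.mem_range.mpr (by omega)), if_pos (Finset.mem_range.mpr hhi)]
    norm_num

lemma breakable (a : Fin n → ℤ) (ha : ∀ i, 2 ≤ a i) (i j p q : Fin n)
    (hip : (i:ℕ) ≤ (p:ℕ)) (hpq : (p:ℕ) < (q:ℕ)) (hqj : (q:ℕ) ≤ (j:ℕ))
    (hap : 3 ≤ a p) (haq : 3 ≤ a q) :
    ∃ x y : Fin n → ℤ,
      (fun k => if i ≤ k ∧ k ≤ j then (1 : ℤ) else 0) = x + y ∧
      3 ≤ linForm a x x ∧ 3 ≤ linForm a y y ∧ linForm a x y = -1 := by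
  refine ⟨fun k : Fin n => if (i:ℕ) ≤ (k:ℕ) ∧ (k:ℕ) ≤ (p:ℕ) then (1:ℤ) else 0,
          fun k : Fin n => if (p:ℕ)+1 ≤ (k:ℕ) ∧ (k:ℕ) ≤ (j:ℕ) then (1:ℤ) else 0,
          ?_, ?_, ?_, ?_⟩
  · funext k
    simp only [Pi.add_apply, Fin.le_def]
    split_ifs <;> omega
  · rw [form_self]
    have hV : V (fun k : Fin n => if (i:ℕ) ≤ (k:ℕ) ∧ (k:ℕ) ≤ (p:ℕ) then (1:ℤ) else 0) = 2 :=
      V_indicator (i:ℕ) (p:ℕ) hip p.isLt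
    have hW := W_ge a ha (fun k : Fin n => if (i:ℕ) ≤ (k:ℕ) ∧ (k:ℕ) ≤ (p:ℕ) then (1:ℤ) else 0) p
    rw [if_pos ⟨hip, le_rfl⟩] at hW
    rw [hV]
    nlinarith
  · rw [form_self]
    have hV : V (fun k : Fin n => if (p:ℕ)+1 ≤ (k:ℕ) ∧ (k:ℕ) ≤ (j:ℕ) then (1:ℤ) else 0) = 2 :=
      V_indicator ((p:ℕ)+1) (j:ℕ) (by omega) j.isLt
    have hW := W_ge a ha (fun k : Fin n => if (p:ℕ)+1 ≤ (k:ℕ) ∧ (k:ℕ) ≤ (j:ℕ) then (1:ℤ) else 0) q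
    rw [if_pos ⟨by omega, hqj⟩] at hW
    rw [hV]
    nlinarith
  · rw [form_eq]
    have hdiag : (∑ k, a k * (if (i:ℕ) ≤ (k:ℕ) ∧ (k:ℕ) ≤ (p:ℕ) then (1:ℤ) else 0)
        * (if (p:ℕ)+1 ≤ (k:ℕ) ∧ (k:ℕ) ≤ (j:ℕ) then (1:ℤ) else 0)) = 0 :=
      Finset.sum_eq_zero fun k _ => by split_ifs <;> first | ring1 | (exfalso; omega)
    have hcross : (∑ k ∈ Finset.range n,
        (pad (fun k : Fin n => if (i:ℕ) ≤ (k:ℕ) ∧ (k:ℕ) ≤ (p:ℕ) then (1:ℤ) else 0) k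
          * pad (fun k : Fin n => if (p:ℕ)+1 ≤ (k:ℕ) ∧ (k:ℕ) ≤ (j:ℕ) then (1:ℤ) else 0) (k+1)
        + pad (fun k : Fin n => if (i:ℕ) ≤ (k:ℕ) ∧ (k:ℕ) ≤ (p:ℕ) then (1:ℤ) else 0) (k+1)
          * pad (fun k : Fin n => if (p:ℕ)+1 ≤ (k:ℕ) ∧ (k:ℕ) ≤ (j:ℕ) then (1:ℤ) else 0) k)) = 1 := by
      have hterm : ∀ k ∈ Finset.range n,
          (pad (fun k : Fin n => if (i:ℕ) ≤ (k:ℕ) ∧ (k:ℕ) ≤ (p:ℕ) then (1:ℤ) else 0) k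
            * pad (fun k : Fin n => if (p:ℕ)+1 ≤ (k:ℕ) ∧ (k:ℕ) ≤ (j:ℕ) then (1:ℤ) else 0) (k+1)
          + pad (fun k : Fin n => if (i:ℕ) ≤ (k:ℕ) ∧ (k:ℕ) ≤ (p:ℕ) then (1:ℤ) else 0) (k+1)
            * pad (fun k : Fin n => if (p:ℕ)+1 ≤ (k:ℕ) ∧ (k:ℕ) ≤ (j:ℕ) then (1:ℤ) else 0) k)
          = if k = (p:ℕ) then 1 else 0 := by
        intro k _
        rw [pad_indicator _ _ p.isLt, pad_indicator _ _ p.isLt,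
          pad_indicator _ _ j.isLt, pad_indicator _ _ j.isLt]
        split_ifs <;> first | (exfalso; omega) | norm_num
      rw [Finset.sum_congr rfl hterm,
        Finset.sum_ite_eq' (Finset.range n) (p:ℕ) (fun _ => (1:ℤ)),
        if_pos (Finset.mem_range.mpr p.isLt)]
    rw [hdiag, hcross]
    norm_num

lemma self_le_sq (m : ℤ) : m ≤ m^2 := by
  rcases le_or_gt m 0 with h | h
  · nlinarith
  · nlinarith

theorem aux_main (n : ℕ) (hn : 1 ≤ n) (a : Fin n → ℤ)
    (ha : ∀ i, 2 ≤ a i) (i j : Fin n) (hij : i ≤ j) :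
    (¬ ∃ x y : Fin n → ℤ,
        (fun k => if i ≤ k ∧ k ≤ j then (1 : ℤ) else 0) = x + y ∧
        3 ≤ linForm a x x ∧ 3 ≤ linForm a y y ∧ linForm a x y = -1) ↔
    (Finset.univ.filter fun k : Fin n => i ≤ k ∧ k ≤ j ∧ 3 ≤ a k).card ≤ 1 := by
  constructor
  · intro hne
    by_contra hc
    push_neg at hc
    obtain ⟨p, hp, q, hq, hpq⟩ := Finset.one_lt_card.mp hc
    simp only [Finset.mem_filter, Finset.mem_univ, true_and] at hp hq
    rcases lt_or_gt_of_ne hpq with h | h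
    · exact hne (breakable a ha i j p q (Fin.le_def.mp hp.1) (Fin.lt_def.mp h)
        (Fin.le_def.mp hq.2.1) hp.2.2 hq.2.2)
    · exact hne (breakable a ha i j q p (Fin.le_def.mp hq.1) (Fin.lt_def.mp h)
        (Fin.le_def.mp hp.2.1) hq.2.2 hp.2.2)
  · intro hcard
    rintro ⟨x, y, hxy, hx3, hy3, hform⟩
    have hVt : V (fun k : Fin n => if i ≤ k ∧ k ≤ j then (1:ℤ) else 0) = 2 := by
      have he : (fun k : Fin n => if i ≤ k ∧ k ≤ j then (1:ℤ) else 0)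
          = fun k : Fin n => if (i:ℕ) ≤ (k:ℕ) ∧ (k:ℕ) ≤ (j:ℕ) then (1:ℤ) else 0 := by
        funext k
        simp only [Fin.le_def]
      rw [he]
      exact V_indicator _ _ (Fin.le_def.mp hij) j.isLt
    have hQt : linForm a (x + y) (x + y)
        = W a (fun k : Fin n => if i ≤ k ∧ k ≤ j then (1:ℤ) else 0) + 2 := by
      rw [← hxy, form_self, hVt]
    have hQt2 : linForm a (x + y) (x + y)
        = linForm a x x + 2 * (-1) + linForm a y y := by
      rw [form_add, hform]
    have hkey : W a (fun k : Fin n => if i ≤ k ∧ k ≤ j then (1:ℤ) else 0) + 2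
        = linForm a x x + linForm a y y - 2 := by linarith
    by_cases hp : ∃ p : Fin n, i ≤ p ∧ p ≤ j ∧ 3 ≤ a p
    · obtain ⟨p, hp1, hp2, hp3⟩ := hp
      have huniq : ∀ k : Fin n, i ≤ k → k ≤ j → 3 ≤ a k → k = p := by
        intro k h1 h2 h3
        exact Finset.card_le_one.mp hcard k
          (by simp only [Finset.mem_filter, Finset.mem_univ, true_and]; exact ⟨h1, h2, h3⟩) p
          (by simp only [Finset.mem_filter, Finset.mem_univ, true_and]; exact ⟨hp1, hp2, hp3⟩)
      have hWt : W a (fun k : Fin n => if i ≤ k ∧ k ≤ j then (1:ℤ) else 0) = a p - 2 := by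
        rw [W, Finset.sum_eq_single p]
        · rw [if_pos ⟨hp1, hp2⟩]; ring
        · intro k _ hkp
          by_cases hk : i ≤ k ∧ k ≤ j
          · have h3 : ¬ 3 ≤ a k := fun hh => hkp (huniq k hk.1 hk.2 hh)
            have h2 : a k = 2 := by have := ha k; omega
            rw [h2]; ring
          · rw [if_neg hk]; ring
        · intro h; exact absurd (Finset.mem_univ p) h
      have hx0 : x ≠ 0 := by
        intro h0
        rw [h0] at hx3
        simp only [linForm, Pi.zero_apply, mul_zero, Finset.sum_const_zero] at hx3
        exact absurd hx3 (by norm_num)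
      have hy0 : y ≠ 0 := by
        intro h0
        rw [h0] at hy3
        simp only [linForm, Pi.zero_apply, mul_zero, Finset.sum_const_zero] at hy3
        exact absurd hy3 (by norm_num)
      have hVx := V_ge_two x hx0
      have hVy := V_ge_two y hy0
      have hWxp := W_ge a ha x p
      have hWyp := W_ge a ha y p
      have hWx0 := W_nonneg a ha x
      have hWy0 := W_nonneg a ha y
      have hQx := form_self a x
      have hQy := form_self a y
      have hsum : x p + y p = 1 := by
        have h := congrFun hxy p
        simp only [Pi.add_apply] at h
        rw [if_pos ⟨hp1, hp2⟩] at h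
        linarith
      have hd : 1 ≤ a p - 2 := by linarith
      have hsge : 1 ≤ (x p)^2 + (y p)^2 := by
        have h1 := self_le_sq (x p)
        have h2 := self_le_sq (y p)
        linarith
      have hsle : (a p - 2) * ((x p)^2 + (y p)^2) ≤ a p - 2 := by nlinarith
      have hs1 : (x p)^2 + (y p)^2 = 1 := by nlinarith
      have hsq : (x p + y p)^2 = 1 := by rw [hsum]; norm_num
      have h2prod : 2 * (x p * y p) = 0 := by linear_combination hsq - hs1
      have hprod : x p * y p = 0 := by linarith
      rcases mul_eq_zero.mp hprod with h0 | h0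
      · have hy2 : (y p)^2 = 1 := by
          rw [h0] at hs1
          simpa using hs1
        rw [hy2, mul_one] at hWyp
        linarith
      · have hx2 : (x p)^2 = 1 := by
          rw [h0] at hs1
          simpa using hs1
        rw [hx2, mul_one] at hWxp
        linarith
    · push_neg at hp
      have hWt : W a (fun k : Fin n => if i ≤ k ∧ k ≤ j then (1:ℤ) else 0) = 0 := by
        apply Finset.sum_eq_zero
        intro k _
        show (a k - 2) * (if i ≤ k ∧ k ≤ j then (1:ℤ) else 0)^2 = 0
        by_cases hk : i ≤ k ∧ k ≤ j
        · have h3 := hp k hk.1 hk.2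
          have h2 : a k = 2 := by have := ha k; omega
          rw [h2]; ring
        · rw [if_neg hk]; ring
      linarith

end LinearLatticeAux

/-- **Unbreakable intervals in a linear lattice.** In `Λ(a₁,…,aₙ)` (all
`aᵢ ≥ 2`), the class `[T] = x_i + ⋯ + x_j` of an interval `T = {i,…,j}` is
unbreakable iff at most one index `k ∈ T` has `a_k ≥ 3`. -/
theorem linear_lattice_unbreakable (n : ℕ) (hn : 1 ≤ n) (a : Fin n → ℤ)
    (ha : ∀ i, 2 ≤ a i) (i j : Fin n) (hij : i ≤ j) :
    (¬ ∃ x y : Fin n → ℤ,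
        (fun k => if i ≤ k ∧ k ≤ j then (1 : ℤ) else 0) = x + y ∧
        3 ≤ linForm a x x ∧ 3 ≤ linForm a y y ∧ linForm a x y = -1) ↔
    (Finset.univ.filter fun k : Fin n => i ≤ k ∧ k ≤ j ∧ 3 ≤ a k).card ≤ 1 :=
  LinearLatticeAux.aux_main n hn a ha i j hij
end

section
/- Let T_1, …, T_k be pairwise distinct intervals in {1, …, n} whose indicator vectors in ℤ^n are linearly independent, and let G be the simple graph on {T_1,…,T_k} with an edge between two intervals whenever they abut. Then for every cycle C in G there exists an index j such that every interval T in the vertex set of C has min T = j + 1 or max T = j; in particular, the vertex set of C induces a complete subgraph of G. -/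
/-- The abutment graph of a family of intervals `T a = {lo a, …, hi a}`:
two distinct intervals are adjacent iff they abut, i.e. they share a common
endpoint or are consecutive. -/
def intervalGraph {k : ℕ} (lo hi : Fin k → ℕ) : SimpleGraph (Fin k) where
  Adj a b := a ≠ b ∧
    (lo a = lo b ∨ hi a = hi b ∨ lo b = hi a + 1 ∨ lo a = hi b + 1)
  symm := ⟨fun a b h => ⟨h.1.symm, by have h2 := h.2; omega⟩⟩
  loopless := ⟨fun a h => h.1 rfl⟩

lemma interval_key {n k : ℕ} (lo hi : Fin k → ℕ)
    (hlo : ∀ a, 1 ≤ lo a) (hle : ∀ a, lo a ≤ hi a) :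
    ∀ {x y : Fin k} (w : (intervalGraph lo hi).Walk x y),
      w.support.Nodup → ∀ z : ℕ, (z = lo x - 1 ∨ z = hi x) →
      ∃ u : ℕ, (u = lo y - 1 ∨ u = hi y) ∧ ∃ ε : Fin k → ℤ,
        (∀ i : Fin n,
          (∑ a, ε a * (if lo a ≤ (i : ℕ) + 1 ∧ (i : ℕ) + 1 ≤ hi a then (1 : ℤ) else 0))
            = (if (i : ℕ) + 1 ≤ u then (1 : ℤ) else 0)
              - (if (i : ℕ) + 1 ≤ z then (1 : ℤ) else 0))
        ∧ (∀ a, ε a ≠ 0 → a ∈ w.support ∧ a ≠ y)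
        ∧ ((u = z ∧ ∀ b ∈ w.support, (z = lo b - 1 ∨ z = hi b)) ∨ (∃ a, ε a ≠ 0)) := by
  intro x y w
  induction w with
  | nil =>
    intro _ z hz
    refine ⟨z, hz, 0, by simp, by simp, Or.inl ⟨rfl, ?_⟩⟩
    intro b hb
    simp only [SimpleGraph.Walk.support_nil, List.mem_singleton] at hb
    exact hb ▸ hz
  | @cons x x' y h p ih =>
    intro hnd z hz
    rw [SimpleGraph.Walk.support_cons, List.nodup_cons] at hnd
    obtain ⟨hxp, hpnd⟩ := hnd
    -- pick a common endpoint of E x and E x'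
    have hadj := h.2
    have hw : ∃ w₀ : ℕ, (w₀ = lo x - 1 ∨ w₀ = hi x) ∧ (w₀ = lo x' - 1 ∨ w₀ = hi x') := by
      have h1 := hlo x; have h2 := hlo x'
      rcases hadj with h3 | h3 | h3 | h3
      · exact ⟨lo x - 1, Or.inl rfl, Or.inl (by omega)⟩
      · exact ⟨hi x, Or.inr rfl, Or.inr (by omega)⟩
      · exact ⟨hi x, Or.inr rfl, Or.inl (by omega)⟩
      · exact ⟨lo x - 1, Or.inl rfl, Or.inr (by omega)⟩
    obtain ⟨w₀, hw₀x, hw₀x'⟩ := hw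
    obtain ⟨u, hu, ε', hsum', hsupp', hdisj'⟩ := ih hpnd w₀ hw₀x'
    have hxy : x ≠ y := by
      intro hxy; exact hxp (hxy ▸ p.end_mem_support)
    by_cases hzw : z = w₀
    · subst hzw
      refine ⟨u, hu, ε', hsum', ?_, ?_⟩
      · intro a ha
        obtain ⟨h1, h2⟩ := hsupp' a ha
        exact ⟨by rw [SimpleGraph.Walk.support_cons]; exact List.mem_cons_of_mem _ h1, h2⟩
      · rcases hdisj' with ⟨h1, h2⟩ | h1
        · refine Or.inl ⟨h1, ?_⟩
          intro b hb
          rw [SimpleGraph.Walk.support_cons, List.mem_cons] at hb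
          rcases hb with rfl | hb
          · exact hz
          · exact h2 b hb
        · exact Or.inr h1
    · -- the step moves: add ±χ_x
      have hlox := hlo x; have hlex := hle x
      set σ : ℤ := if w₀ = hi x then 1 else -1 with hσ
      have hχ : ∀ i : Fin n,
          σ * (if lo x ≤ (i : ℕ) + 1 ∧ (i : ℕ) + 1 ≤ hi x then (1 : ℤ) else 0)
            = (if (i : ℕ) + 1 ≤ w₀ then (1 : ℤ) else 0)
              - (if (i : ℕ) + 1 ≤ z then (1 : ℤ) else 0) := by
        intro i
        by_cases hcase : w₀ = hi x
        · have hzlo : z = lo x - 1 := by rcases hz with h1 | h1 <;> omega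
          simp only [hσ, if_pos hcase]
          subst hcase; subst hzlo
          by_cases h1 : lo x ≤ (i : ℕ) + 1 ∧ (i : ℕ) + 1 ≤ hi x
          · rw [if_pos h1, if_pos h1.2, if_neg (by omega)]; ring
          · rw [if_neg h1]
            by_cases h2 : (i : ℕ) + 1 ≤ hi x
            · rw [if_pos h2, if_pos (by omega)]; ring
            · rw [if_neg h2, if_neg (by omega)]; ring
        · have hwlo : w₀ = lo x - 1 := by rcases hw₀x with h1 | h1 <;> omega
          have hzhi : z = hi x := by rcases hz with h1 | h1 <;> omega
          simp only [hσ, if_neg hcase]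
          subst hwlo; subst hzhi
          by_cases h1 : lo x ≤ (i : ℕ) + 1 ∧ (i : ℕ) + 1 ≤ hi x
          · rw [if_pos h1, if_pos h1.2, if_neg (by omega)]; ring
          · rw [if_neg h1]
            by_cases h2 : (i : ℕ) + 1 ≤ hi x
            · rw [if_pos h2, if_pos (by omega)]; ring
            · rw [if_neg h2, if_neg (by omega)]; ring
      have hε'x : ε' x = 0 := by
        by_contra hne
        exact hxp (hsupp' x hne).1
      refine ⟨u, hu, fun a => ε' a + (if a = x then σ else 0), ?_, ?_, ?_⟩
      · intro i
        have step1 : (∑ a, (ε' a + (if a = x then σ else 0))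
              * (if lo a ≤ (i : ℕ) + 1 ∧ (i : ℕ) + 1 ≤ hi a then (1 : ℤ) else 0))
            = (∑ a, (ε' a * (if lo a ≤ (i : ℕ) + 1 ∧ (i : ℕ) + 1 ≤ hi a then (1 : ℤ) else 0)
              + (if a = x then σ * (if lo a ≤ (i : ℕ) + 1 ∧ (i : ℕ) + 1 ≤ hi a then (1 : ℤ) else 0) else 0))) :=
          Finset.sum_congr rfl (fun a _ => by rw [add_mul, ite_mul, zero_mul])
        rw [step1, Finset.sum_add_distrib, Finset.sum_ite_eq' Finset.univ x, if_pos (Finset.mem_univ x),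
          hsum' i, hχ i]
        ring
      · intro a ha
        have ha2 : ε' a + (if a = x then σ else 0) ≠ 0 := ha
        by_cases hax : a = x
        · subst hax
          exact ⟨by rw [SimpleGraph.Walk.support_cons]; exact List.mem_cons_self, hxy⟩
        · rw [if_neg hax, add_zero] at ha2
          have ha := ha2
          obtain ⟨h1, h2⟩ := hsupp' a ha
          exact ⟨by rw [SimpleGraph.Walk.support_cons]; exact List.mem_cons_of_mem _ h1, h2⟩
      · refine Or.inr ⟨x, ?_⟩
        show ε' x + (if x = x then σ else 0) ≠ 0
        rw [hε'x, if_pos rfl, zero_add, hσ]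
        split <;> norm_num
/-- **Cycles of abutting intervals.** Let `T₁,…,T_k` be pairwise distinct
intervals in `{1,…,n}` whose indicator vectors in `ℤⁿ` are linearly
independent.  Then for every cycle in the abutment graph there is an index `j`
such that every interval in the cycle has left endpoint `j+1` or right
endpoint `j`; in particular the vertex set of the cycle induces a complete
subgraph. -/
theorem interval_cycle (n k : ℕ) (lo hi : Fin k → ℕ)
    (hlo : ∀ a, 1 ≤ lo a) (hhi : ∀ a, hi a ≤ n) (hle : ∀ a, lo a ≤ hi a)
    (hdist : ∀ a b : Fin k, a ≠ b → (lo a, hi a) ≠ (lo b, hi b))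
    (hli : LinearIndependent ℤ (fun a : Fin k =>
      (fun i : Fin n => if lo a ≤ (i : ℕ) + 1 ∧ (i : ℕ) + 1 ≤ hi a then (1 : ℤ) else 0)))
    (v : Fin k) (c : (intervalGraph lo hi).Walk v v) (hc : c.IsCycle) :
    (∃ j : ℕ, ∀ b ∈ c.support, lo b = j + 1 ∨ hi b = j) ∧
    (∀ a ∈ c.support, ∀ b ∈ c.support, a ≠ b → (intervalGraph lo hi).Adj a b) := by
  have main : ∃ j : ℕ, ∀ b ∈ c.support, lo b = j + 1 ∨ hi b = j := by
    cases c with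
    | nil => exact absurd rfl hc.ne_nil
    | @cons _ x' _ h q =>
      have hqnd : q.support.Nodup := by
        have := hc.support_nodup
        rwa [SimpleGraph.Walk.support_cons, List.tail_cons] at this
      -- common endpoint of E v and E x'
      have hz : ∃ z : ℕ, (z = lo v - 1 ∨ z = hi v) ∧ (z = lo x' - 1 ∨ z = hi x') := by
        have h1 := hlo v; have h2 := hlo x'
        rcases h.2 with h3 | h3 | h3 | h3
        · exact ⟨lo v - 1, Or.inl rfl, Or.inl (by omega)⟩
        · exact ⟨hi v, Or.inr rfl, Or.inr (by omega)⟩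
        · exact ⟨hi v, Or.inr rfl, Or.inl (by omega)⟩
        · exact ⟨lo v - 1, Or.inl rfl, Or.inr (by omega)⟩
      obtain ⟨z, hzv, hzx'⟩ := hz
      obtain ⟨u, hu, ε, hsum, hsupp, hdisj⟩ :=
        interval_key (n := n) lo hi hlo hle q hqnd z hzx'
      rcases hdisj with ⟨huz, hall⟩ | ⟨a₀, ha₀⟩
      · refine ⟨z, ?_⟩
        intro b hb
        rw [SimpleGraph.Walk.support_cons, List.mem_cons] at hb
        have hb' : z = lo b - 1 ∨ z = hi b := by
          rcases hb with rfl | hb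
          · exact hzv
          · exact hall b hb
        have := hlo b
        omega
      · -- contradiction with linear independence
        exfalso
        have hlov := hlo v; have hlev := hle v
        have ha₀v : a₀ ≠ v := (hsupp a₀ ha₀).2
        by_cases huz : u = z
        · have := Fintype.linearIndependent_iff.mp hli ε ?_ a₀
          · exact ha₀ this
          · funext i
            rw [Finset.sum_apply]
            simp only [Pi.smul_apply, smul_eq_mul, Pi.zero_apply]
            rw [hsum i, huz]
            simp
        · set σ : ℤ := if u = hi v then 1 else -1 with hσ
          have hχ : ∀ i : Fin n,
              σ * (if lo v ≤ (i : ℕ) + 1 ∧ (i : ℕ) + 1 ≤ hi v then (1 : ℤ) else 0)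
                = (if (i : ℕ) + 1 ≤ u then (1 : ℤ) else 0)
                  - (if (i : ℕ) + 1 ≤ z then (1 : ℤ) else 0) := by
            intro i
            by_cases hcase : u = hi v
            · have hzlo : z = lo v - 1 := by rcases hzv with h1 | h1 <;> omega
              simp only [hσ, if_pos hcase]
              subst hcase; subst hzlo
              by_cases h1 : lo v ≤ (i : ℕ) + 1 ∧ (i : ℕ) + 1 ≤ hi v
              · rw [if_pos h1, if_pos h1.2, if_neg (by omega)]; ring
              · rw [if_neg h1]
                by_cases h2 : (i : ℕ) + 1 ≤ hi v
                · rw [if_pos h2, if_pos (by omega)]; ring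
                · rw [if_neg h2, if_neg (by omega)]; ring
            · have hulo : u = lo v - 1 := by rcases hu with h1 | h1 <;> omega
              have hzhi : z = hi v := by rcases hzv with h1 | h1 <;> omega
              simp only [hσ, if_neg hcase]
              subst hulo; subst hzhi
              by_cases h1 : lo v ≤ (i : ℕ) + 1 ∧ (i : ℕ) + 1 ≤ hi v
              · rw [if_pos h1, if_pos h1.2, if_neg (by omega)]; ring
              · rw [if_neg h1]
                by_cases h2 : (i : ℕ) + 1 ≤ hi v
                · rw [if_pos h2, if_pos (by omega)]; ring
                · rw [if_neg h2, if_neg (by omega)]; ring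
          have := Fintype.linearIndependent_iff.mp hli
            (fun a => ε a - (if a = v then σ else 0)) ?_ a₀
          · rw [if_neg ha₀v, sub_zero] at this
            exact ha₀ this
          · funext i
            rw [Finset.sum_apply]
            simp only [Pi.smul_apply, smul_eq_mul, Pi.zero_apply]
            have step1 : (∑ a, (ε a - (if a = v then σ else 0))
                  * (if lo a ≤ (i : ℕ) + 1 ∧ (i : ℕ) + 1 ≤ hi a then (1 : ℤ) else 0))
                = (∑ a, (ε a * (if lo a ≤ (i : ℕ) + 1 ∧ (i : ℕ) + 1 ≤ hi a then (1 : ℤ) else 0)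
                  - (if a = v then σ * (if lo a ≤ (i : ℕ) + 1 ∧ (i : ℕ) + 1 ≤ hi a then (1 : ℤ) else 0) else 0))) :=
              Finset.sum_congr rfl (fun a _ => by rw [sub_mul, ite_mul, zero_mul])
            rw [step1, Finset.sum_sub_distrib, Finset.sum_ite_eq' Finset.univ v,
              if_pos (Finset.mem_univ v), hsum i, hχ i]
            simp
  refine ⟨main, ?_⟩
  obtain ⟨j, hj⟩ := main
  intro a ha b hb hab
  refine ⟨hab, ?_⟩
  have h1 := hj a ha
  have h2 := hj b hb
  have h3 : (lo a, hi a) ≠ (lo b, hi b) := hdist a b hab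
  have h4 : lo a ≠ lo b ∨ hi a ≠ hi b := by
    by_contra hcon
    push_neg at hcon
    exact h3 (by rw [hcon.1, hcon.2])
  omega
end

section
/- Let σ = (σ_0, …, σ_n) ∈ ℤ^{n+1} be a changemaker and let z = Σ_{i=0}^n z_i e_i ∈ ℤ^{n+1} satisfy ⟨z, σ⟩ = 0 and ⟨z, z⟩ ≥ 3. Suppose there is exactly one index j with z_j < 0, and z_j = −1. Then j = max{ i : z_i ≠ 0 }; that is, every index i with z_i ≠ 0 satisfies i ≤ j. -/
/-- A changemaker vector: `1 = σ_0 ≤ σ_1 ≤ ⋯ ≤ σ_n` and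
`σ_i ≤ σ_0 + ⋯ + σ_{i-1} + 1` for all `1 ≤ i ≤ n`. -/
def IsChangemaker {n : ℕ} (σ : Fin (n + 1) → ℤ) : Prop :=
  σ 0 = 1 ∧ Monotone σ ∧
    ∀ i : Fin (n + 1), i ≠ 0 → σ i ≤ (∑ j ∈ Finset.Iio i, σ j) + 1

/-- If `z` is orthogonal to a changemaker `σ`, has norm at least `3`, and has
exactly one negative coordinate `z_j = -1`, then `j` is the maximum of the
support of `z`. -/
theorem changemaker_support_max (n : ℕ) (σ : Fin (n + 1) → ℤ)
    (hσ : IsChangemaker σ) (z : Fin (n + 1) → ℤ)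
    (horth : ∑ i, z i * σ i = 0) (hnorm : 3 ≤ ∑ i, z i * z i)
    (j : Fin (n + 1)) (hneg : ∀ i, z i < 0 ↔ i = j) (hzj : z j = -1) :
    ∀ i, z i ≠ 0 → i ≤ j := by
  obtain ⟨hσ0, hmono, -⟩ := hσ
  have hσpos : ∀ k, 1 ≤ σ k := fun k => hσ0 ▸ hmono (Fin.zero_le k)
  have hznn : ∀ k, k ≠ j → 0 ≤ z k := by
    intro k hk
    by_contra h
    exact hk ((hneg k).mp (not_le.mp h))
  intro i hzi
  by_contra hij
  push_neg at hij
  have hij' : i ≠ j := ne_of_gt hij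
  have hzi1 : 1 ≤ z i := lt_of_le_of_ne (hznn i hij') (Ne.symm hzi)
  have hsub : ({i, j} : Finset (Fin (n + 1))) ⊆ Finset.univ := Finset.subset_univ _
  have hmemrest : ∀ k ∈ Finset.univ \ ({i, j} : Finset (Fin (n + 1))),
      k ≠ i ∧ k ≠ j := by
    intro k hk
    simp only [Finset.mem_sdiff, Finset.mem_insert, Finset.mem_singleton] at hk
    exact ⟨fun h => hk.2 (Or.inl h), fun h => hk.2 (Or.inr h)⟩
  have hsplit : ∀ f : Fin (n + 1) → ℤ, ∑ k, f k =
      (∑ k ∈ Finset.univ \ ({i, j} : Finset (Fin (n + 1))), f k) + (f i + f j) := by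
    intro f
    rw [← Finset.sum_sdiff hsub, Finset.sum_pair hij']
  have hrest_nonneg : ∀ k ∈ Finset.univ \ ({i, j} : Finset (Fin (n + 1))),
      0 ≤ z k * σ k := by
    intro k hk
    exact mul_nonneg (hznn k (hmemrest k hk).2) (le_trans zero_le_one (hσpos k))
  have hS : 0 ≤ ∑ k ∈ Finset.univ \ ({i, j} : Finset (Fin (n + 1))), z k * σ k :=
    Finset.sum_nonneg hrest_nonneg
  have hσji : σ j ≤ σ i := hmono (le_of_lt hij)
  have hziσ : σ i ≤ z i * σ i :=
    le_mul_of_one_le_left (le_trans zero_le_one (hσpos i)) hzi1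
  have horth' := hsplit (fun k => z k * σ k)
  rw [horth, hzj] at horth'
  -- 0 = S + (z i * σ i - σ j)
  have hkey : (∑ k ∈ Finset.univ \ ({i, j} : Finset (Fin (n + 1))), z k * σ k)
      + z i * σ i = σ j := by linarith
  have hSzero : (∑ k ∈ Finset.univ \ ({i, j} : Finset (Fin (n + 1))), z k * σ k) = 0 := by
    linarith
  have hziσeq : z i * σ i = σ i := by linarith
  have hzi_eq : z i = 1 := by
    have hσi0 : σ i ≠ 0 := by linarith [hσpos i]
    have : z i * σ i = 1 * σ i := by rw [hziσeq, one_mul]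
    exact mul_right_cancel₀ hσi0 this
  have hzk0 : ∀ k ∈ Finset.univ \ ({i, j} : Finset (Fin (n + 1))), z k = 0 := by
    intro k hk
    have := (Finset.sum_eq_zero_iff_of_nonneg hrest_nonneg).mp hSzero k hk
    have hσk : σ k ≠ 0 := by linarith [hσpos k]
    exact (mul_eq_zero.mp this).resolve_right hσk
  have hrest0 : (∑ k ∈ Finset.univ \ ({i, j} : Finset (Fin (n + 1))), z k * z k) = 0 :=
    Finset.sum_eq_zero fun k hk => by rw [hzk0 k hk, mul_zero]
  have hnorm' := hsplit (fun k => z k * z k)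
  simp only [hrest0, hzi_eq, hzj] at hnorm'
  rw [hnorm'] at hnorm
  norm_num at hnorm
end

section
/- Let σ = (σ_0, …, σ_n) ∈ ℤ^{n+1} be a changemaker, L = (σ)^⊥, and 1 ≤ j ≤ n. Suppose v ∈ L and either (a) v = −e_j + Σ_{i∈A} e_i for some subset A ⊆ {0, …, j−1}, or (b) v = −e_j + 2e_0 + e_1 + ⋯ + e_{j−1}. Then v is irreducible in L. -/
/-- `v` is irreducible in the changemaker lattice `L = (σ)^⊥`: it is not the
sum of two nonzero elements of `L` pairing non-negatively. -/
def IsCMIrreducible {n : ℕ} (σ v : Fin (n + 1) → ℤ) : Prop :=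
  ¬ ∃ x y : Fin (n + 1) → ℤ, x ≠ 0 ∧ y ≠ 0 ∧
    (∑ i, x i * σ i = 0) ∧ (∑ i, y i * σ i = 0) ∧
    v = x + y ∧ 0 ≤ ∑ i, x i * y i


open Finset

private lemma nonneg_pair {a b : ℤ} (hab : 0 ≤ a * b) (hs : 0 ≤ a + b) :
    0 ≤ a ∧ 0 ≤ b := by
  constructor <;> nlinarith [sq_nonneg (a - b), sq_nonneg (a + b)]

private lemma sum_zero_of_nonneg {n : ℕ} {σ x : Fin (n + 1) → ℤ}
    (hσ1 : ∀ i, 1 ≤ σ i) (hx : ∀ i, 0 ≤ x i) (hL : ∑ i, x i * σ i = 0) :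
    x = 0 := by
  have h := (Finset.sum_eq_zero_iff_of_nonneg
    (fun i _ => mul_nonneg (hx i) (by linarith [hσ1 i]))).mp hL
  funext i
  have hi := h i (Finset.mem_univ i)
  have h1 := hσ1 i
  rcases mul_eq_zero.mp hi with h' | h'
  · simpa using h'
  · omega

private lemma endgame {n : ℕ} {σ : Fin (n + 1) → ℤ} (hσ1 : ∀ i, 1 ≤ σ i)
    (hmono : Monotone σ) {j m : Fin (n + 1)} (hjm : j < m)
    (hj0 : j ≠ 0) (hm0 : m ≠ 0)
    {x y : Fin (n + 1) → ℤ}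
    (hxL : ∑ i, x i * σ i = 0) (hyL : ∑ i, y i * σ i = 0)
    (hx00 : x 0 = 1) (hy00 : y 0 = 1) (hxj : x j = 0) (hyj : y j = -1)
    (hm : (x m = 1 ∧ y m = -1) ∨ (x m = -1 ∧ y m = 1))
    (hnn : ∀ i, i ≠ 0 → i ≠ j → i ≠ m → 0 ≤ x i ∧ 0 ≤ y i) : False := by
  have hmj : m ≠ j := hjm.ne'
  rcases hm with ⟨hxm, hym⟩ | ⟨hxm, hym⟩
  · have hx : ∀ i, 0 ≤ x i := by
      intro i
      by_cases h0 : i = 0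
      · rw [h0, hx00]; norm_num
      by_cases hj' : i = j
      · rw [hj', hxj]
      by_cases hm' : i = m
      · rw [hm', hxm]; norm_num
      exact (hnn i h0 hj' hm').1
    have h := sum_zero_of_nonneg hσ1 hx hxL
    rw [h] at hx00
    simp at hx00
  · have hsplit := Finset.sum_sdiff (f := fun i => y i * σ i)
      (Finset.subset_univ ({0, j, m} : Finset (Fin (n + 1))))
    have hsum3 : ∑ i ∈ ({0, j, m} : Finset (Fin (n + 1))), y i * σ i
        = σ 0 - σ j + σ m := by
      rw [show ({0, j, m} : Finset (Fin (n + 1)))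
            = insert 0 (insert j {m}) from rfl,
          Finset.sum_insert (by simp [Ne.symm hj0, Ne.symm hm0]),
          Finset.sum_insert (by simp [Ne.symm hmj]),
          Finset.sum_singleton, hy00, hyj, hym]
      ring
    have hrest : 0 ≤ ∑ i ∈ univ \ ({0, j, m} : Finset (Fin (n + 1))), y i * σ i := by
      apply Finset.sum_nonneg
      intro i hi
      simp only [Finset.mem_sdiff, Finset.mem_univ, Finset.mem_insert,
        Finset.mem_singleton, true_and] at hi
      push_neg at hi
      exact mul_nonneg (hnn i hi.1 hi.2.1 hi.2.2).2 (by linarith [hσ1 i])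
    have hσjm : σ j ≤ σ m := hmono hjm.le
    have h1 := hσ1 0
    rw [hsum3, hyL] at hsplit
    linarith

private lemma cm_master {n : ℕ} (σ : Fin (n + 1) → ℤ) (hσ0 : σ 0 = 1)
    (hmono : Monotone σ) (j : Fin (n + 1)) (hj : j ≠ 0)
    (v : Fin (n + 1) → ℤ) (hvj : v j = -1)
    (hv2 : ∀ i, i ≠ j → 0 ≤ v i) (hv1 : ∀ i, i ≠ 0 → v i ≤ 1)
    (hv0 : v 0 ≤ 2)
    (hvm : ∀ m, v 0 = 2 → m ≠ 0 → v m = 0 → j < m) :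
    IsCMIrreducible σ v := by
  have hσ1 : ∀ i, 1 ≤ σ i := fun i => hσ0 ▸ hmono (Fin.zero_le i)
  rintro ⟨x, y, hx0, hy0, hxL, hyL, hvxy, hdot⟩
  have hsum : ∀ i, x i + y i = v i := fun i => by rw [hvxy]; rfl
  have hterm : ∀ i, i ≠ 0 → x i * y i ≤ 0 := by
    intro i hi
    have h1 := hv1 i hi
    have h2 : -1 ≤ v i := by
      by_cases h : i = j
      · rw [h, hvj]
      · linarith [hv2 i h]
    have h3 := hsum i
    nlinarith [sq_nonneg (x i - y i)]
  have hterm0 : x 0 * y 0 ≤ 1 := by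
    have h3 := hsum 0
    have h2 := hv2 0 (Ne.symm hj)
    nlinarith [sq_nonneg (x 0 - y 0)]
  by_cases hall : ∀ i, i ≠ 0 → x i * y i = 0
  · have hsplit := Finset.sum_erase_add Finset.univ (fun i => x i * y i)
      (Finset.mem_univ 0)
    have hz : ∑ i ∈ univ.erase 0, x i * y i = 0 :=
      Finset.sum_eq_zero fun i hi => hall i (Finset.ne_of_mem_erase hi)
    rw [hz, zero_add] at hsplit
    have h0 : 0 ≤ x 0 * y 0 := by
      rw [hsplit]; exact hdot
    have hnn : ∀ i, i ≠ j → 0 ≤ x i ∧ 0 ≤ y i := by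
      intro i h
      by_cases h0' : i = 0
      · subst h0'
        exact nonneg_pair h0 (by rw [hsum 0]; exact hv2 0 (Ne.symm hj))
      · exact nonneg_pair (le_of_eq (hall i h0').symm)
          (by rw [hsum i]; exact hv2 i h)
    rcases mul_eq_zero.mp (hall j hj) with h | h
    · apply hx0
      apply sum_zero_of_nonneg hσ1 _ hxL
      intro i
      by_cases h' : i = j
      · rw [h', h]
      · exact (hnn i h').1
    · apply hy0
      apply sum_zero_of_nonneg hσ1 _ hyL
      intro i
      by_cases h' : i = j
      · rw [h', h]
      · exact (hnn i h').2
  · push_neg at hall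
    obtain ⟨m, hm0, hmne⟩ := hall
    have hfm : x m * y m ≤ -1 := by
      have := hterm m hm0
      omega
    have hsplit := Finset.sum_sdiff (f := fun i => x i * y i)
      (Finset.subset_univ ({0, m} : Finset (Fin (n + 1))))
    rw [Finset.sum_pair (Ne.symm hm0)] at hsplit
    have hrest_nonpos : ∀ i ∈ univ \ ({0, m} : Finset (Fin (n + 1))),
        x i * y i ≤ 0 := by
      intro i hi
      simp only [Finset.mem_sdiff, Finset.mem_univ, Finset.mem_insert,
        Finset.mem_singleton, true_and] at hi
      push_neg at hi
      exact hterm i hi.1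
    have hrest_le : ∑ i ∈ univ \ ({0, m} : Finset (Fin (n + 1))), x i * y i ≤ 0 :=
      Finset.sum_nonpos hrest_nonpos
    have hf0 : x 0 * y 0 = 1 := by linarith
    have hfm' : x m * y m = -1 := by linarith
    have hrest0 : ∑ i ∈ univ \ ({0, m} : Finset (Fin (n + 1))), x i * y i = 0 := by
      linarith
    have hzero : ∀ i, i ≠ 0 → i ≠ m → x i * y i = 0 := by
      intro i h1 h2
      exact (Finset.sum_eq_zero_iff_of_nonpos hrest_nonpos).mp hrest0 i
        (by simp [h1, h2])
    rcases Int.mul_eq_one_iff_eq_one_or_neg_one.mp hf0 with ⟨ha, hb⟩ | ⟨ha, hb⟩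
    swap
    · have h1 := hsum 0
      have h2 := hv2 0 (Ne.symm hj)
      omega
    have hv02 : v 0 = 2 := by have := hsum 0; omega
    have hmm : (x m = 1 ∧ y m = -1) ∨ (x m = -1 ∧ y m = 1) := by
      have h' : x m * (-(y m)) = 1 := by linarith [hfm', mul_neg (x m) (y m)]
      rcases Int.mul_eq_one_iff_eq_one_or_neg_one.mp h' with ⟨h1, h2⟩ | ⟨h1, h2⟩
      · exact Or.inl ⟨h1, by linarith⟩
      · exact Or.inr ⟨h1, by linarith⟩
    have hvm0 : v m = 0 := by
      rcases hmm with ⟨h1, h2⟩ | ⟨h1, h2⟩ <;> rw [← hsum m] <;> omega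
    have hmj : m ≠ j := by
      intro h
      rw [h, hvj] at hvm0
      omega
    have hjm : j < m := hvm m hv02 hm0 hvm0
    have hsumj : x j + y j = -1 := by rw [hsum j, hvj]
    have hnn' : ∀ i, i ≠ 0 → i ≠ j → i ≠ m → 0 ≤ x i ∧ 0 ≤ y i := by
      intro i h1 h2 h3
      exact nonneg_pair (le_of_eq (hzero i h1 h3).symm)
        (by rw [hsum i]; exact hv2 i h2)
    rcases mul_eq_zero.mp (hzero j hj (Ne.symm hmj)) with h | h
    · exact endgame hσ1 hmono hjm hj hm0 hxL hyL ha hb h (by linarith) hmm hnn'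
    · refine endgame hσ1 hmono hjm hj hm0 hyL hxL hb ha h (by linarith) ?_
        (fun i a b c => ⟨(hnn' i a b c).2, (hnn' i a b c).1⟩)
      rcases hmm with ⟨h1, h2⟩ | ⟨h1, h2⟩
      · exact Or.inr ⟨h2, h1⟩
      · exact Or.inl ⟨h2, h1⟩

/-- **Irreducibility of standard basis elements.** Let `σ` be a changemaker,
`L = (σ)^⊥`, and `1 ≤ j ≤ n`.  If `v ∈ L` has the form
`v = -e_j + Σ_{i ∈ A} e_i` with `A ⊆ {0,…,j-1}`, or the tight form
`v = -e_j + 2e_0 + e_1 + ⋯ + e_{j-1}`, then `v` is irreducible in `L`. -/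
theorem changemaker_standard_basis_irreducible (n : ℕ) (σ : Fin (n + 1) → ℤ)
    (hσ : IsChangemaker σ) (j : Fin (n + 1)) (hj : j ≠ 0)
    (v : Fin (n + 1) → ℤ) (hvL : ∑ i, v i * σ i = 0)
    (hv : (∃ A : Finset (Fin (n + 1)), (∀ i ∈ A, i < j) ∧
            v = fun k => if k = j then -1 else if k ∈ A then 1 else 0) ∨
          v = fun k => if k = j then -1 else if k = 0 then 2
                       else if k < j then 1 else 0) :
    IsCMIrreducible σ v := by
  obtain ⟨hσ0, hmono, _⟩ := hσ
  rcases hv with ⟨A, hA, hvdef⟩ | hvdef <;> subst hvdef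
  · refine cm_master σ hσ0 hmono j hj _ (by simp) ?_ ?_ ?_ ?_
    · intro i hi
      simp only [if_neg hi]
      split_ifs <;> omega
    · intro i _
      split_ifs <;> omega
    · split_ifs <;> omega
    · intro m h2 _ _
      rw [if_neg (Ne.symm hj)] at h2
      split_ifs at h2 <;> omega
  · refine cm_master σ hσ0 hmono j hj _ (by simp) ?_ ?_ ?_ ?_
    · intro i hi
      simp only [if_neg hi]
      split_ifs <;> omega
    · intro i hi
      rcases eq_or_ne i j with h | h
      · norm_num [h]
      rw [if_neg h, if_neg hi]
      split_ifs <;> omega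
    · rw [if_neg (Ne.symm hj), if_pos rfl]
    · intro m _ hm0 hvm0
      rcases eq_or_ne m j with h | h
      · rw [if_pos h] at hvm0; omega
      rw [if_neg h, if_neg hm0] at hvm0
      split_ifs at hvm0 with h3
      · omega
      · exact lt_of_le_of_ne (not_lt.mp h3) (Ne.symm h)
end

section
/- Let σ ∈ ℤ^{n+1} be a changemaker, L = (σ)^⊥, and suppose v_t = −e_t + 2e_0 + e_1 + ⋯ + e_{t−1} ∈ L (a tight vector). Then: (1) if j ≠ t and v_j = −e_j + 2e_0 + e_1 + ⋯ + e_{j−1} ∈ L, then v_j − v_t is irreducible in L; (2) if j > t and v_j = −e_j + e_{j−1} + e_t ∈ L, then v_j + v_t is irreducible in L; (3) if v_{t+1} = −e_{t+1} + e_t + e_{t−1} + ⋯ + e_0 ∈ L, then v_{t+1} − v_t is irreducible in L. -/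
/-- The standard basis vector `e_i` of `ℤ^{n+1}`. -/
def stdb {n : ℕ} (i : Fin (n + 1)) : Fin (n + 1) → ℤ :=
  fun k => if k = i then 1 else 0

/-- The tight vector `v_t = -e_t + 2e_0 + e_1 + ⋯ + e_{t-1}`. -/
def tightVec {n : ℕ} (t : Fin (n + 1)) : Fin (n + 1) → ℤ :=
  fun k => if k = t then -1 else if k = 0 then 2 else if k < t then 1 else 0

namespace CMaux
variable {n : ℕ}

lemma reduce_exists (σ w : Fin (n+1) → ℤ) (h : ¬ IsCMIrreducible σ w) :
    ∃ z : Fin (n+1) → ℤ, (∑ i, z i * σ i = 0) ∧ (∀ i, ∃ k, z i = w i + 2*k) ∧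
      (∑ i, z i ^ 2 ≤ ∑ i, w i ^ 2) ∧ z ≠ w ∧ z ≠ -w := by
  rw [IsCMIrreducible, not_not] at h
  obtain ⟨x, y, hx0, hy0, hxσ, hyσ, hsum, hdot⟩ := h
  have hw : ∀ i, w i = x i + y i := fun i => congrFun hsum i
  refine ⟨fun i => x i - y i, ?_, ?_, ?_, ?_, ?_⟩
  · have : ∑ i, (x i - y i) * σ i = ∑ i, x i * σ i - ∑ i, y i * σ i := by
      rw [← Finset.sum_sub_distrib]
      exact Finset.sum_congr rfl fun i _ => by ring
    rw [this, hxσ, hyσ]; ring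
  · intro i; exact ⟨-y i, by rw [hw i]; ring⟩
  · have h1 : ∑ i, (x i - y i) ^ 2 = ∑ i, w i ^ 2 - 4 * ∑ i, x i * y i := by
      rw [Finset.mul_sum, ← Finset.sum_sub_distrib]
      exact Finset.sum_congr rfl fun i _ => by rw [hw i]; ring
    rw [h1]; linarith
  · intro he
    apply hy0
    funext i
    have := congrFun he i
    simp only [hw i] at this
    simpa using by linarith [this]
  · intro he
    apply hx0
    funext i
    have := congrFun he i
    simp only [Pi.neg_apply, hw i] at this
    simpa using by linarith [this]

lemma shape_lemma (w z : Fin (n+1) → ℤ) (O : Finset (Fin (n+1))) (p : Fin (n+1))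
    (hp : p ∉ O)
    (hw1 : ∀ i ∈ O, w i = 1 ∨ w i = -1) (hw2 : w p = 2)
    (hw0 : ∀ i, i ∉ O → i ≠ p → w i = 0)
    (hpar : ∀ i, ∃ k, z i = w i + 2*k)
    (hnorm : ∑ i, z i ^ 2 ≤ ∑ i, w i ^ 2) :
    (∀ i ∈ O, z i = 1 ∨ z i = -1) ∧
      ∃ m, m ∉ O ∧ (z m = 2 ∨ z m = -2 ∨ z m = 0) ∧
        (∀ i, i ∉ O → i ≠ m → z i = 0) := by
  have hOsq : ∑ i ∈ O, w i ^ 2 = (O.card : ℤ) := by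
    rw [Finset.sum_congr rfl (fun i hi => show w i ^ 2 = 1 by
      rcases hw1 i hi with h | h <;> rw [h] <;> ring)]
    simp
  have hpc : p ∈ Oᶜ := Finset.mem_compl.2 hp
  have hcomp : ∑ i ∈ Oᶜ, w i ^ 2 = 4 := by
    rw [Finset.sum_eq_single_of_mem p hpc (fun i hi hne => by
      rw [hw0 i (Finset.mem_compl.1 hi) hne]; ring), hw2]
    ring
  have htot : ∑ i, w i ^ 2 = (O.card : ℤ) + 4 := by
    rw [← Finset.sum_add_sum_compl O, hOsq, hcomp]
  have hzO1 : ∀ i ∈ O, 1 ≤ z i ^ 2 := by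
    intro i hi
    obtain ⟨k, hk⟩ := hpar i
    have h1 : z i ≤ -1 ∨ 1 ≤ z i := by rcases hw1 i hi with h | h <;> omega
    rcases h1 with h | h <;> nlinarith
  have hcard_le : (O.card : ℤ) ≤ ∑ i ∈ O, z i ^ 2 := by
    calc (O.card : ℤ) = ∑ _i ∈ O, (1 : ℤ) := by simp
    _ ≤ ∑ i ∈ O, z i ^ 2 := Finset.sum_le_sum hzO1
  have hsplitz : ∑ i ∈ O, z i ^ 2 + ∑ i ∈ Oᶜ, z i ^ 2 ≤ (O.card : ℤ) + 4 := by
    rw [Finset.sum_add_sum_compl O]; rw [htot] at hnorm; exact hnorm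
  have hBle : ∑ i ∈ Oᶜ, z i ^ 2 ≤ 4 := by linarith
  have hcompnn : (0:ℤ) ≤ ∑ i ∈ Oᶜ, z i ^ 2 := Finset.sum_nonneg fun i _ => sq_nonneg _
  have heven : ∀ i, i ∉ O → ∃ k, z i = 2 * k := by
    intro i hi
    obtain ⟨k, hk⟩ := hpar i
    by_cases h : i = p
    · subst h; exact ⟨1 + k, by rw [hk, hw2]; ring⟩
    · exact ⟨k, by rw [hk, hw0 i hi h]; ring⟩
  constructor
  · intro i0 hi0
    have herase : z i0 ^ 2 + ∑ i ∈ O.erase i0, z i ^ 2 = ∑ i ∈ O, z i ^ 2 :=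
      Finset.add_sum_erase O (fun i => z i ^ 2) hi0
    have herase_ge : ((O.card : ℤ) - 1) ≤ ∑ i ∈ O.erase i0, z i ^ 2 := by
      have : ((O.erase i0).card : ℤ) ≤ ∑ i ∈ O.erase i0, z i ^ 2 := by
        calc ((O.erase i0).card : ℤ) = ∑ _i ∈ O.erase i0, (1:ℤ) := by simp
        _ ≤ _ := Finset.sum_le_sum fun i hi => hzO1 i (Finset.mem_of_mem_erase hi)
      rw [Finset.card_erase_of_mem hi0] at this
      have hc : 1 ≤ O.card := Finset.card_pos.2 ⟨i0, hi0⟩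
      omega
    have hsq5 : z i0 ^ 2 ≤ 5 := by linarith
    have h4a : 4 * z i0 ≤ 9 := by nlinarith [sq_nonneg (z i0 - 2)]
    have h4b : -9 ≤ 4 * z i0 := by nlinarith [sq_nonneg (z i0 + 2)]
    obtain ⟨k, hk⟩ := hpar i0
    rcases hw1 i0 hi0 with h | h <;> omega
  · by_cases hE : ∃ m, m ∉ O ∧ z m ≠ 0
    · obtain ⟨m, hm, hmne⟩ := hE
      obtain ⟨k, hk⟩ := heven m hm
      have hk0 : k ≠ 0 := by omega
      have hle : z m ^ 2 ≤ 4 := by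
        calc z m ^ 2 ≤ ∑ i ∈ Oᶜ, z i ^ 2 :=
          Finset.single_le_sum (fun i _ => sq_nonneg (z i)) (Finset.mem_compl.2 hm)
        _ ≤ 4 := hBle
      have hkb : k = 1 ∨ k = -1 := by
        have h1 : 2 * k ≤ 2 := by nlinarith [sq_nonneg (k - 1)]
        have h2 : -2 ≤ 2 * k := by nlinarith [sq_nonneg (k + 1)]
        omega
      refine ⟨m, hm, by rcases hkb with h | h <;> omega, ?_⟩
      intro i hi hne
      by_contra hzi
      obtain ⟨k', hk'⟩ := heven i hi
      have hk'0 : k' ≠ 0 := by omega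
      have hsub : ({i, m} : Finset (Fin (n+1))) ⊆ Oᶜ := by
        intro j hj
        simp only [Finset.mem_insert, Finset.mem_singleton] at hj
        rcases hj with h | h <;> subst h <;> exact Finset.mem_compl.2 (by assumption)
      have hpair0 : ∑ j ∈ ({i, m} : Finset (Fin (n+1))), z j ^ 2 ≤ ∑ j ∈ Oᶜ, z j ^ 2 :=
        Finset.sum_le_sum_of_subset_of_nonneg hsub (fun j _ _ => sq_nonneg _)
      rw [Finset.sum_pair hne] at hpair0
      have hpair : z i ^ 2 + z m ^ 2 ≤ 4 := le_trans hpair0 hBle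
      have h1 : 1 ≤ k' ∨ k' ≤ -1 := by omega
      have h2 : 1 ≤ k ∨ k ≤ -1 := by omega
      rcases h1 with h1 | h1 <;> rcases h2 with h2 | h2 <;> nlinarith
    · have hE' : ∀ i, i ∉ O → z i = 0 := fun i hi => by
        by_contra h; exact hE ⟨i, hi, h⟩
      exact ⟨p, hp, Or.inr (Or.inr (hE' p hp)), fun i hi _ => hE' i hi⟩

lemma IsCMIrreducible.neg {σ w : Fin (n+1) → ℤ} (h : IsCMIrreducible σ w) :
    IsCMIrreducible σ (-w) := by
  rintro ⟨x, y, hx, hy, hxσ, hyσ, hsum, hdot⟩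
  refine h ⟨-x, -y, neg_ne_zero.2 hx, neg_ne_zero.2 hy, ?_, ?_, ?_, ?_⟩
  · simp only [Pi.neg_apply, neg_mul, Finset.sum_neg_distrib, hxσ, neg_zero]
  · simp only [Pi.neg_apply, neg_mul, Finset.sum_neg_distrib, hyσ, neg_zero]
  · have := congrArg Neg.neg hsum
    simp only [neg_neg, neg_add] at this
    exact this
  · simpa only [Pi.neg_apply, neg_mul_neg] using hdot

lemma irreducible_of_core (σ w : Fin (n+1) → ℤ) (O : Finset (Fin (n+1))) (p b : Fin (n+1))
    (hb : b ∈ O) (hp : p ∉ O)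
    (hw1 : ∀ i ∈ O, w i = 1 ∨ w i = -1) (hw2 : w p = 2)
    (hw0 : ∀ i, i ∉ O → i ≠ p → w i = 0)
    (core : ∀ z : Fin (n+1) → ℤ, ∀ m, m ∉ O →
      (∀ i ∈ O, z i = 1 ∨ z i = -1) → (z m = 2 ∨ z m = -2 ∨ z m = 0) →
      (∀ i, i ∉ O → i ≠ m → z i = 0) → (∑ i, z i * σ i = 0) → z b = -1 → z = w) :
    IsCMIrreducible σ w := by
  by_contra h
  obtain ⟨z, hzσ, hpar, hnorm, hzw, hzw'⟩ := reduce_exists σ w h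
  obtain ⟨hzO, m, hm, hzm, hz0⟩ := shape_lemma w z O p hp hw1 hw2 hw0 hpar hnorm
  rcases hzO b hb with hzb | hzb
  · have hcore := core (-z) m hm (fun i hi => by
        rcases hzO i hi with h' | h' <;> simp [h'])
      (by rcases hzm with h' | h' | h' <;> simp [h'])
      (fun i hi hne => by simp [hz0 i hi hne])
      (by simp only [Pi.neg_apply, neg_mul, Finset.sum_neg_distrib, hzσ, neg_zero])
      (by simp [hzb])
    apply hzw'
    funext i
    have := congrFun hcore i
    simp only [Pi.neg_apply] at this ⊢
    linarith
  · exact hzw (core z m hm hzO hzm hz0 hzσ hzb)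
def wvec1 (a b : Fin (n+1)) : Fin (n+1) → ℤ :=
  fun k => if k = b then -1 else if k = a then 2 else if k ∈ Finset.Ioo a b then 1 else 0

lemma core1 (σ : Fin (n+1) → ℤ) (hmono : Monotone σ) (hσ0 : σ 0 = 1)
    (a b : Fin (n+1)) (ha : a ≠ 0) (hab : a < b)
    (hta : σ a = 1 + ∑ i ∈ Finset.Iio a, σ i)
    (htb : σ b = 2 * σ a + ∑ i ∈ Finset.Ioo a b, σ i)
    (z : Fin (n+1) → ℤ) (m : Fin (n+1))
    (hm : m ∉ insert b (Finset.Ioo a b))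
    (hzO : ∀ i ∈ insert b (Finset.Ioo a b), z i = 1 ∨ z i = -1)
    (hzm : z m = 2 ∨ z m = -2 ∨ z m = 0)
    (hz0 : ∀ i, i ∉ insert b (Finset.Ioo a b) → i ≠ m → z i = 0)
    (hzσ : ∑ i, z i * σ i = 0) (hzb : z b = -1) :
    z = wvec1 a b := by
  have hpos : ∀ i, 1 ≤ σ i := fun i => by
    have := hmono (Fin.zero_le i); omega
  have hposIio : ∀ i ∈ Finset.Iio a, (0:ℤ) ≤ σ i := fun i _ => by linarith [hpos i]
  have h0a : (0 : Fin (n+1)) ∈ Finset.Iio a := Finset.mem_Iio.2 (Fin.pos_of_ne_zero ha)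
  have ha2 : 2 ≤ σ a := by
    have := Finset.single_le_sum hposIio h0a
    omega
  have hmb : m ≠ b := fun h => hm (by rw [h]; exact Finset.mem_insert_self b _)
  have hmIoo : m ∉ Finset.Ioo a b := fun h => hm (Finset.mem_insert_of_mem h)
  have hbIoo : b ∉ Finset.Ioo a b := by simp [Finset.mem_Ioo]
  -- evaluate the sum
  have hsplit : ∀ i : Fin (n+1), z i * σ i =
      (if i = b then z i * σ i else 0) + (if i = m then z i * σ i else 0) +
      (if i ∈ Finset.Ioo a b then z i * σ i else 0) := by
    intro i
    by_cases h1 : i = b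
    · subst h1; rw [if_pos rfl, if_neg (fun h => hmb h.symm), if_neg hbIoo]; ring
    · by_cases h2 : i = m
      · subst h2; rw [if_neg h1, if_pos rfl, if_neg hmIoo]; ring
      · by_cases h3 : i ∈ Finset.Ioo a b
        · rw [if_neg h1, if_neg h2, if_pos h3]; ring
        · rw [if_neg h1, if_neg h2, if_neg h3,
            hz0 i (by simp [Finset.mem_insert, h1, h3]) h2]; ring
  rw [Finset.sum_congr rfl fun i _ => hsplit i, Finset.sum_add_distrib,
    Finset.sum_add_distrib, Finset.sum_ite_eq' Finset.univ b (fun i => z i * σ i),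
    Finset.sum_ite_eq' Finset.univ m (fun i => z i * σ i), Finset.sum_ite_mem,
    Finset.univ_inter] at hzσ
  simp only [Finset.mem_univ, if_true] at hzσ
  have hEq : z b * σ b + z m * σ m + ∑ i ∈ Finset.Ioo a b, z i * σ i = 0 := by
    linarith
  -- the negative part
  set N := (Finset.Ioo a b).filter (fun i => z i = -1) with hN
  have hIooEq : ∑ i ∈ Finset.Ioo a b, z i * σ i =
      ∑ i ∈ Finset.Ioo a b, σ i - 2 * ∑ i ∈ N, σ i := by
    rw [hN, Finset.sum_filter, Finset.mul_sum, ← Finset.sum_sub_distrib]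
    refine Finset.sum_congr rfl fun i hi => ?_
    rcases hzO i (Finset.mem_insert_of_mem hi) with h | h
    · rw [h, if_neg (show ¬(1:ℤ) = -1 by norm_num)]; ring
    · rw [h, if_pos rfl]; ring
  have hNnn : (0:ℤ) ≤ ∑ i ∈ N, σ i :=
    Finset.sum_nonneg fun i _ => by linarith [hpos i]
  have hNleS : ∑ i ∈ N, σ i ≤ ∑ i ∈ Finset.Ioo a b, σ i :=
    Finset.sum_le_sum_of_subset_of_nonneg (Finset.filter_subset _ _)
      (fun i _ _ => by linarith [hpos i])
  have hzmv : z m = 2 ∧ σ m = σ a + ∑ i ∈ N, σ i := by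
    rw [hIooEq, hzb] at hEq
    rcases hzm with h | h | h <;> rw [h] at hEq
    · exact ⟨h, by linarith [hpos m]⟩
    · exfalso; linarith [hpos m]
    · exfalso; linarith [hpos m]
  obtain ⟨hzm2, hσm⟩ := hzmv
  -- position of m
  rcases le_or_gt m a with hma | ham
  · -- m ≤ a : N is empty
    have hNσ0 : ∑ i ∈ N, σ i = 0 := by
      have : σ m ≤ σ a := hmono hma
      omega
    have hzpos : ∀ i ∈ Finset.Ioo a b, z i = 1 := by
      intro i hi
      rcases hzO i (Finset.mem_insert_of_mem hi) with h | h
      · exact h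
      · exfalso
        have hiN : i ∈ N := Finset.mem_filter.2 ⟨hi, h⟩
        have := Finset.single_le_sum (f := σ) (fun j _ => by linarith [hpos j]) hiN
        linarith [hpos i]
    rcases lt_or_eq_of_le hma with hma' | hma'
    · exfalso
      have h1 : σ m ≤ ∑ i ∈ Finset.Iio a, σ i :=
        Finset.single_le_sum hposIio (Finset.mem_Iio.2 hma')
      omega
    · -- m = a : z = wvec1 a b
      subst hma'
      funext k
      unfold wvec1
      by_cases h1 : k = b
      · subst h1; rw [if_pos rfl]; exact hzb
      · by_cases h2 : k = m
        · subst h2; rw [if_neg h1, if_pos rfl]; exact hzm2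
        · by_cases h3 : k ∈ Finset.Ioo m b
          · rw [if_neg h1, if_neg h2, if_pos h3]; exact hzpos k h3
          · rw [if_neg h1, if_neg h2, if_neg h3]
            exact hz0 k (by simp [Finset.mem_insert, h1, h3]) h2
  · -- a < m : then b < m, contradiction
    exfalso
    have hbm : b < m := by
      rcases lt_trichotomy m b with h | h | h
      · exact absurd (Finset.mem_Ioo.2 ⟨ham, h⟩) hmIoo
      · exact absurd h hmb
      · exact h
    have : σ b ≤ σ m := hmono (le_of_lt hbm)
    omega

lemma Iio_eq_insert (t : Fin (n+1)) (h : t ≠ 0) :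
    Finset.Iio t = insert 0 (Finset.Ioo 0 t) := by
  rw [Finset.Ioo_insert_left (Fin.pos_of_ne_zero h), Finset.Iio_eq_Ico]
  rfl

def wvec2 (t j j' : Fin (n+1)) : Fin (n+1) → ℤ :=
  fun k => if k = j then -1 else if k = 0 then 2 else
    if k ∈ Finset.Ioo 0 t ∨ k = j' then 1 else 0

lemma core2 (σ : Fin (n+1) → ℤ) (hmono : Monotone σ) (hσ0 : σ 0 = 1)
    (t j j' : Fin (n+1)) (ht : t ≠ 0) (htj : t < j) (hjj' : (j' : ℕ) + 1 = (j : ℕ))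
    (htt : σ t = 1 + ∑ i ∈ Finset.Iio t, σ i)
    (hj : σ j = σ j' + σ t)
    (z : Fin (n+1) → ℤ) (m : Fin (n+1))
    (hm : m ∉ insert j (insert j' (Finset.Ioo 0 t)))
    (hzO : ∀ i ∈ insert j (insert j' (Finset.Ioo 0 t)), z i = 1 ∨ z i = -1)
    (hzm : z m = 2 ∨ z m = -2 ∨ z m = 0)
    (hz0 : ∀ i, i ∉ insert j (insert j' (Finset.Ioo 0 t)) → i ≠ m → z i = 0)
    (hzσ : ∑ i, z i * σ i = 0) (hzj : z j = -1) :
    z = wvec2 t j j' := by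
  have hpos : ∀ i, 1 ≤ σ i := fun i => by
    have := hmono (Fin.zero_le i); omega
  have htj' : t ≤ j' := by
    rw [Fin.le_def]; rw [Fin.lt_def] at htj; omega
  have hj'j : j' < j := by rw [Fin.lt_def]; omega
  have hjne : j ≠ j' := fun h => by rw [h] at hj'j; exact lt_irrefl _ hj'j
  have hj'Ioo : j' ∉ Finset.Ioo 0 t := by
    simp only [Finset.mem_Ioo]
    rintro ⟨-, h⟩
    exact absurd htj' (not_le.2 h)
  have hjIoo : j ∉ Finset.Ioo 0 t := by
    simp only [Finset.mem_Ioo]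
    rintro ⟨-, h⟩
    exact absurd h (not_lt.2 (le_of_lt htj))
  have hjO : j ∉ insert j' (Finset.Ioo 0 t) := by
    simp only [Finset.mem_insert]
    rintro (h | h); exact hjne h; exact hjIoo h
  have hmj : m ≠ j := fun h => hm (by rw [h]; exact Finset.mem_insert_self _ _)
  have hmj' : m ≠ j' := fun h => hm (by
    rw [h]; exact Finset.mem_insert_of_mem (Finset.mem_insert_self _ _))
  have hmIoo : m ∉ Finset.Ioo 0 t := fun h =>
    hm (Finset.mem_insert_of_mem (Finset.mem_insert_of_mem h))
  have h0Ioo : (0 : Fin (n+1)) ∉ Finset.Ioo 0 t := by simp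
  have hIoo0t : ∑ i ∈ Finset.Ioo 0 t, σ i = σ t - 2 := by
    rw [Iio_eq_insert t ht, Finset.sum_insert h0Ioo] at htt
    omega
  have hsplit : ∀ i : Fin (n+1), z i * σ i =
      (if i = j then z i * σ i else 0) + (if i = j' then z i * σ i else 0) +
      (if i = m then z i * σ i else 0) +
      (if i ∈ Finset.Ioo 0 t then z i * σ i else 0) := by
    intro i
    by_cases h1 : i = j
    · subst h1
      rw [if_pos rfl, if_neg hjne, if_neg (fun h => hmj h.symm), if_neg hjIoo]; ring
    · by_cases h2 : i = j'
      · subst h2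
        rw [if_neg h1, if_pos rfl, if_neg (fun h => hmj' h.symm), if_neg hj'Ioo]; ring
      · by_cases h3 : i = m
        · subst h3; rw [if_neg h1, if_neg h2, if_pos rfl, if_neg hmIoo]; ring
        · by_cases h4 : i ∈ Finset.Ioo 0 t
          · rw [if_neg h1, if_neg h2, if_neg h3, if_pos h4]; ring
          · rw [if_neg h1, if_neg h2, if_neg h3, if_neg h4,
              hz0 i (by simp [Finset.mem_insert, h1, h2, h4]) h3]; ring
  rw [Finset.sum_congr rfl fun i _ => hsplit i, Finset.sum_add_distrib,
    Finset.sum_add_distrib, Finset.sum_add_distrib,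
    Finset.sum_ite_eq' Finset.univ j (fun i => z i * σ i),
    Finset.sum_ite_eq' Finset.univ j' (fun i => z i * σ i),
    Finset.sum_ite_eq' Finset.univ m (fun i => z i * σ i), Finset.sum_ite_mem,
    Finset.univ_inter] at hzσ
  simp only [Finset.mem_univ, if_true] at hzσ
  set N := (insert j' (Finset.Ioo 0 t)).filter (fun i => z i = -1) with hN
  have hNnn : (0:ℤ) ≤ ∑ i ∈ N, σ i :=
    Finset.sum_nonneg fun i _ => by linarith [hpos i]
  have hInsEq : z j' * σ j' + ∑ i ∈ Finset.Ioo 0 t, z i * σ i =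
      σ j' + (σ t - 2) - 2 * ∑ i ∈ N, σ i := by
    have h1 : ∑ i ∈ insert j' (Finset.Ioo 0 t), z i * σ i =
        ∑ i ∈ insert j' (Finset.Ioo 0 t), σ i - 2 * ∑ i ∈ N, σ i := by
      rw [hN, Finset.sum_filter, Finset.mul_sum, ← Finset.sum_sub_distrib]
      refine Finset.sum_congr rfl fun i hi => ?_
      rcases hzO i (Finset.mem_insert_of_mem hi) with h | h
      · rw [h, if_neg (show ¬(1:ℤ) = -1 by norm_num)]; ring
      · rw [h, if_pos rfl]; ring
    rw [Finset.sum_insert hj'Ioo, Finset.sum_insert hj'Ioo, hIoo0t] at h1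
    exact h1
  have hzmEq : z m * σ m = 2 + 2 * ∑ i ∈ N, σ i := by
    rw [hzj] at hzσ
    linarith
  have hzm2 : z m = 2 ∧ σ m = 1 + ∑ i ∈ N, σ i := by
    rcases hzm with h | h | h <;> rw [h] at hzmEq
    · exact ⟨h, by linarith⟩
    · exfalso; linarith [hpos m]
    · exfalso; linarith
  obtain ⟨hzm2, hσm⟩ := hzm2
  by_cases hm0 : m = 0
  · -- m = 0 : z = wvec2
    subst hm0
    have hNσ0 : ∑ i ∈ N, σ i = 0 := by
      rw [hσ0] at hσm; omega
    have hzpos : ∀ i ∈ insert j' (Finset.Ioo 0 t), z i = 1 := by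
      intro i hi
      rcases hzO i (Finset.mem_insert_of_mem hi) with h | h
      · exact h
      · exfalso
        have hiN : i ∈ N := Finset.mem_filter.2 ⟨hi, h⟩
        have := Finset.single_le_sum (f := σ) (fun l _ => by linarith [hpos l]) hiN
        linarith [hpos i]
    funext k
    unfold wvec2
    by_cases h1 : k = j
    · subst h1; rw [if_pos rfl]; exact hzj
    · by_cases h2 : k = 0
      · subst h2; rw [if_neg h1, if_pos rfl]; exact hzm2
      · by_cases h3 : k ∈ Finset.Ioo 0 t ∨ k = j'
        · rw [if_neg h1, if_neg h2, if_pos h3]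
          refine hzpos k ?_
          rcases h3 with h | h
          · exact Finset.mem_insert_of_mem h
          · rw [h]; exact Finset.mem_insert_self _ _
        · rw [if_neg h1, if_neg h2, if_neg h3]
          push_neg at h3
          exact hz0 k (by simp [Finset.mem_insert, h1, h3.1, h3.2]) h2
  · -- m ≠ 0 : contradiction
    exfalso
    have htm : t ≤ m := by
      rcases le_or_gt t m with h | h
      · exact h
      · exact absurd (Finset.mem_Ioo.2 ⟨Fin.pos_of_ne_zero hm0, h⟩) hmIoo
    have hj'N : j' ∈ N := by
      by_contra hj'N
      have hsub : N ⊆ Finset.Ioo 0 t := by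
        intro i hi
        have h1 := Finset.mem_filter.1 hi
        rcases Finset.mem_insert.1 h1.1 with h | h
        · exact absurd (h ▸ hi) hj'N
        · exact h
      have hle : ∑ i ∈ N, σ i ≤ σ t - 2 := by
        rw [← hIoo0t]
        exact Finset.sum_le_sum_of_subset_of_nonneg hsub
          (fun i _ _ => by linarith [hpos i])
      have := hmono htm
      linarith
    have hσj'le : σ j' ≤ ∑ i ∈ N, σ i :=
      Finset.single_le_sum (f := σ) (fun l _ => by linarith [hpos l]) hj'N
    have hNle : ∑ i ∈ N, σ i ≤ σ j' + (σ t - 2) := by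
      have := Finset.sum_le_sum_of_subset_of_nonneg
        (Finset.filter_subset (fun i => z i = -1) (insert j' (Finset.Ioo 0 t)))
        (fun i _ _ => le_trans zero_le_one (hpos i))
      rw [Finset.sum_insert hj'Ioo, hIoo0t] at this
      exact this
    have hmj2 : m < j := by
      by_contra h
      have : σ j ≤ σ m := hmono (not_lt.1 h)
      linarith
    have hmlej' : m < j' := by
      rw [Fin.lt_def] at hmj2 ⊢
      have := Fin.val_ne_of_ne hmj'
      omega
    have : σ m ≤ σ j' := hmono (le_of_lt hmlej')
    linarith

def wvec3 (t t' : Fin (n+1)) : Fin (n+1) → ℤ :=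
  fun k => if k = t' then -1 else if k = t then 2 else if k = 0 then -1 else 0

lemma core3 (σ : Fin (n+1) → ℤ) (hmono : Monotone σ) (hσ0 : σ 0 = 1)
    (t t' : Fin (n+1)) (ht : t ≠ 0) (ht't : (t' : ℕ) = (t : ℕ) + 1)
    (htt : σ t = 1 + ∑ i ∈ Finset.Iio t, σ i)
    (ht' : σ t' = ∑ i ∈ Finset.Iic t, σ i)
    (z : Fin (n+1) → ℤ) (m : Fin (n+1))
    (hm : m ∉ insert t' ({0} : Finset (Fin (n+1))))
    (hzO : ∀ i ∈ insert t' ({0} : Finset (Fin (n+1))), z i = 1 ∨ z i = -1)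
    (hzm : z m = 2 ∨ z m = -2 ∨ z m = 0)
    (hz0 : ∀ i, i ∉ insert t' ({0} : Finset (Fin (n+1))) → i ≠ m → z i = 0)
    (hzσ : ∑ i, z i * σ i = 0) (hzt' : z t' = -1) :
    z = wvec3 t t' := by
  have hpos : ∀ i, 1 ≤ σ i := fun i => by
    have := hmono (Fin.zero_le i); omega
  have htlt : t < t' := by rw [Fin.lt_def]; omega
  have ht'0 : t' ≠ 0 := by
    intro h
    rw [h] at ht't
    simp at ht't
  have htne : t ≠ t' := fun h => by rw [h] at htlt; exact lt_irrefl _ htlt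
  have hmt' : m ≠ t' := fun h => hm (by rw [h]; exact Finset.mem_insert_self _ _)
  have hm0 : m ≠ 0 := fun h => hm (by
    rw [h]; exact Finset.mem_insert_of_mem (Finset.mem_singleton_self _))
  have ht'2 : σ t' = 2 * σ t - 1 := by
    have h1 : Finset.Iic t = insert t (Finset.Iio t) := (Finset.Iio_insert t).symm
    rw [h1, Finset.sum_insert (by simp)] at ht'
    omega
  have hposIio : ∀ i ∈ Finset.Iio t, (0:ℤ) ≤ σ i := fun i _ => by linarith [hpos i]
  have h0t : (0 : Fin (n+1)) ∈ Finset.Iio t := Finset.mem_Iio.2 (Fin.pos_of_ne_zero ht)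
  have ht2 : 2 ≤ σ t := by
    have := Finset.single_le_sum hposIio h0t
    omega
  have hsplit : ∀ i : Fin (n+1), z i * σ i =
      (if i = t' then z i * σ i else 0) + (if i = 0 then z i * σ i else 0) +
      (if i = m then z i * σ i else 0) := by
    intro i
    by_cases h1 : i = t'
    · subst h1; rw [if_pos rfl, if_neg ht'0, if_neg (fun h => hmt' h.symm)]; ring
    · by_cases h2 : i = 0
      · subst h2; rw [if_neg h1, if_pos rfl, if_neg (fun h => hm0 h.symm)]; ring
      · by_cases h3 : i = m
        · subst h3; rw [if_neg h1, if_neg h2, if_pos rfl]; ring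
        · rw [if_neg h1, if_neg h2, if_neg h3,
            hz0 i (by simp [Finset.mem_insert, h1, h2]) h3]; ring
  rw [Finset.sum_congr rfl fun i _ => hsplit i, Finset.sum_add_distrib,
    Finset.sum_add_distrib,
    Finset.sum_ite_eq' Finset.univ t' (fun i => z i * σ i),
    Finset.sum_ite_eq' Finset.univ (0 : Fin (n+1)) (fun i => z i * σ i),
    Finset.sum_ite_eq' Finset.univ m (fun i => z i * σ i)] at hzσ
  simp only [Finset.mem_univ, if_true] at hzσ
  have hz0b : z 0 = 1 ∨ z 0 = -1 :=
    hzO 0 (Finset.mem_insert_of_mem (Finset.mem_singleton_self _))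
  have hzmEq : z m * σ m = 2 * σ t - 1 - z 0 := by
    rw [hzt', hσ0] at hzσ
    linarith
  have hzm2 : z m = 2 := by
    rcases hzm with h | h | h
    · exact h
    · exfalso; rw [h] at hzmEq; rcases hz0b with h' | h' <;> rw [h'] at hzmEq <;>
        linarith [hpos m]
    · exfalso; rw [h] at hzmEq; rcases hz0b with h' | h' <;> rw [h'] at hzmEq <;> linarith
  rw [hzm2] at hzmEq
  by_cases hmt : m = t
  · -- m = t : z = wvec3
    have hz0v : z 0 = -1 := by
      rw [hmt] at hzmEq
      rcases hz0b with h | h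
      · exfalso; rw [h] at hzmEq; linarith
      · exact h
    funext k
    unfold wvec3
    by_cases h1 : k = t'
    · subst h1; rw [if_pos rfl]; exact hzt'
    · by_cases h2 : k = t
      · subst h2; rw [if_neg h1, if_pos rfl, ← hmt]; exact hzm2
      · by_cases h3 : k = 0
        · subst h3; rw [if_neg h1, if_neg h2, if_pos rfl]; exact hz0v
        · rw [if_neg h1, if_neg h2, if_neg h3]
          exact hz0 k (by simp [Finset.mem_insert, h1, h3]) (fun h => h2 (h.trans hmt))
  · -- m ≠ t : contradiction
    exfalso
    have hz0bnd : -1 ≤ z 0 ∧ z 0 ≤ 1 := by rcases hz0b with h | h <;> rw [h] <;> omega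
    rcases lt_trichotomy m t with h | h | h
    · have hpair : σ 0 + σ m ≤ ∑ i ∈ Finset.Iio t, σ i := by
        have hsub : ({0, m} : Finset (Fin (n+1))) ⊆ Finset.Iio t := by
          intro i hi
          simp only [Finset.mem_insert, Finset.mem_singleton] at hi
          rcases hi with h' | h' <;> subst h'
          · exact h0t
          · exact Finset.mem_Iio.2 h
        have := Finset.sum_le_sum_of_subset_of_nonneg hsub
          (fun i _ _ => le_trans zero_le_one (hpos i))
        rw [Finset.sum_pair (fun h' => hm0 h'.symm)] at this
        exact this
      rw [hσ0] at hpair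
      linarith
    · exact hmt h
    · have ht'm : t' < m := by
        rw [Fin.lt_def] at h ⊢
        have := Fin.val_ne_of_ne hmt'
        omega
      have h1 : σ t' ≤ σ m := hmono (le_of_lt ht'm)
      linarith

lemma Iio_split (a b : Fin (n+1)) (hab : a ≤ b) (f : Fin (n+1) → ℤ) :
    ∑ i ∈ Finset.Iio b, f i = ∑ i ∈ Finset.Iio a, f i + ∑ i ∈ Finset.Ico a b, f i := by
  have h1 : Finset.Iio b = Finset.Iio a ∪ Finset.Ico a b := by
    ext i
    simp only [Finset.mem_Iio, Finset.mem_union, Finset.mem_Ico, Fin.lt_def, Fin.le_def] at *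
    omega
  rw [h1, Finset.sum_union]
  rw [Finset.disjoint_left]
  intro i hi hi2
  simp only [Finset.mem_Iio, Finset.mem_Ico] at *
  exact absurd hi2.1 (not_le.2 hi)

lemma tight_sum (σ : Fin (n+1) → ℤ) (s : Fin (n+1)) (hs : s ≠ 0) :
    ∑ i, tightVec s i * σ i = σ 0 + ∑ i ∈ Finset.Iio s, σ i - σ s := by
  have key : ∀ i : Fin (n+1), tightVec s i * σ i =
      (if i = s then -σ i else 0) + (if i = 0 then 2 * σ i else 0) +
      (if i ∈ Finset.Ioo 0 s then σ i else 0) := by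
    intro i
    unfold tightVec
    by_cases h1 : i = s
    · rw [if_pos h1, if_pos h1, if_neg (fun h => hs (h1.symm.trans h)),
        if_neg (show i ∉ Finset.Ioo 0 s by simp [h1, Finset.mem_Ioo])]
      ring
    · by_cases h2 : i = 0
      · rw [if_neg h1, if_pos h2, if_neg h1, if_pos h2,
          if_neg (show i ∉ Finset.Ioo 0 s by simp [h2, Finset.mem_Ioo])]
        ring
      · by_cases h3 : i ∈ Finset.Ioo 0 s
        · rw [if_neg h1, if_neg h2, if_pos (Finset.mem_Ioo.1 h3).2, if_neg h1,
            if_neg h2, if_pos h3]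
          ring
        · have hnlt : ¬ i < s := fun hlt =>
            h3 (Finset.mem_Ioo.2 ⟨Fin.pos_of_ne_zero h2, hlt⟩)
          rw [if_neg h1, if_neg h2, if_neg hnlt, if_neg h1, if_neg h2, if_neg h3]
          ring
  rw [Finset.sum_congr rfl fun i _ => key i, Finset.sum_add_distrib,
    Finset.sum_add_distrib, Finset.sum_ite_eq' Finset.univ s (fun i => -σ i),
    Finset.sum_ite_eq' Finset.univ (0 : Fin (n+1)) (fun i => 2 * σ i),
    Finset.sum_ite_mem, Finset.univ_inter]
  simp only [Finset.mem_univ, if_true]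
  rw [Iio_eq_insert s hs, Finset.sum_insert (by simp)]
  ring

lemma case1_main (σ : Fin (n+1) → ℤ) (hmono : Monotone σ) (hσ0 : σ 0 = 1)
    (a b : Fin (n+1)) (ha : a ≠ 0) (hab : a < b)
    (hta : σ a = 1 + ∑ i ∈ Finset.Iio a, σ i)
    (htb : σ b = 1 + ∑ i ∈ Finset.Iio b, σ i) :
    IsCMIrreducible σ (wvec1 a b) := by
  have hIco : ∑ i ∈ Finset.Ico a b, σ i = σ a + ∑ i ∈ Finset.Ioo a b, σ i := by
    rw [← Finset.Ioo_insert_left hab, Finset.sum_insert (by simp)]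
  have hsplitI := Iio_split a b (le_of_lt hab) σ
  have htb' : σ b = 2 * σ a + ∑ i ∈ Finset.Ioo a b, σ i := by omega
  have haO : a ∉ insert b (Finset.Ioo a b) := by
    simp only [Finset.mem_insert, Finset.mem_Ioo]
    push_neg
    exact ⟨ne_of_lt hab, fun h => absurd h (lt_irrefl a)⟩
  apply irreducible_of_core σ (wvec1 a b) (insert b (Finset.Ioo a b)) a b
    (Finset.mem_insert_self b _) haO
  · intro i hi
    rcases Finset.mem_insert.1 hi with h | h
    · right; subst h; unfold wvec1; rw [if_pos rfl]
    · left
      obtain ⟨h1, h2⟩ := Finset.mem_Ioo.1 h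
      unfold wvec1
      rw [if_neg (ne_of_lt h2), if_neg (ne_of_gt h1), if_pos h]
  · unfold wvec1
    rw [if_neg (ne_of_lt hab), if_pos rfl]
  · intro i hi hia
    simp only [Finset.mem_insert] at hi
    push_neg at hi
    unfold wvec1
    rw [if_neg hi.1, if_neg hia, if_neg hi.2]
  · intro z m hm h1 h2 h3 h4 h5
    exact core1 σ hmono hσ0 a b ha hab hta htb' z m hm h1 h2 h3 h4 h5

lemma case2_main (σ : Fin (n+1) → ℤ) (hmono : Monotone σ) (hσ0 : σ 0 = 1)
    (t j j' : Fin (n+1)) (ht : t ≠ 0) (htj : t < j) (hjj' : (j' : ℕ) + 1 = (j : ℕ))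
    (htt : σ t = 1 + ∑ i ∈ Finset.Iio t, σ i)
    (hj : σ j = σ j' + σ t) :
    IsCMIrreducible σ (wvec2 t j j') := by
  have htj' : t ≤ j' := by rw [Fin.le_def]; rw [Fin.lt_def] at htj; omega
  have hj'j : j' < j := by rw [Fin.lt_def]; omega
  have hj0 : j ≠ 0 := by
    intro h
    rw [h] at htj
    exact absurd htj (by simp [Fin.lt_def])
  have hj'0 : j' ≠ 0 := by
    intro h
    rw [h] at htj'
    exact ht (le_antisymm htj' (Fin.zero_le t))
  have h0O : (0 : Fin (n+1)) ∉ insert j (insert j' (Finset.Ioo 0 t)) := by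
    simp only [Finset.mem_insert, Finset.mem_Ioo]
    push_neg
    exact ⟨fun h => hj0 h.symm, fun h => hj'0 h.symm, fun h => absurd h (lt_irrefl 0)⟩
  apply irreducible_of_core σ (wvec2 t j j') (insert j (insert j' (Finset.Ioo 0 t))) 0 j
    (Finset.mem_insert_self j _) h0O
  · intro i hi
    rcases Finset.mem_insert.1 hi with h | h
    · right; subst h; unfold wvec2; rw [if_pos rfl]
    · left
      rcases Finset.mem_insert.1 h with h' | h'
      · subst h'
        unfold wvec2
        rw [if_neg (ne_of_lt hj'j), if_neg hj'0, if_pos (Or.inr rfl)]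
      · obtain ⟨h1, h2⟩ := Finset.mem_Ioo.1 h'
        unfold wvec2
        rw [if_neg (ne_of_lt (lt_trans h2 htj)), if_neg (ne_of_gt h1), if_pos (Or.inl h')]
  · unfold wvec2
    rw [if_neg (fun h => hj0 h.symm), if_pos rfl]
  · intro i hi hi0
    simp only [Finset.mem_insert] at hi
    push_neg at hi
    unfold wvec2
    rw [if_neg hi.1, if_neg hi0, if_neg (by push_neg; exact ⟨hi.2.2, hi.2.1⟩)]
  · intro z m hm h1 h2 h3 h4 h5
    exact core2 σ hmono hσ0 t j j' ht htj hjj' htt hj z m hm h1 h2 h3 h4 h5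

lemma case3_main (σ : Fin (n+1) → ℤ) (hmono : Monotone σ) (hσ0 : σ 0 = 1)
    (t t' : Fin (n+1)) (ht : t ≠ 0) (ht't : (t' : ℕ) = (t : ℕ) + 1)
    (htt : σ t = 1 + ∑ i ∈ Finset.Iio t, σ i)
    (ht' : σ t' = ∑ i ∈ Finset.Iic t, σ i) :
    IsCMIrreducible σ (wvec3 t t') := by
  have htlt : t < t' := by rw [Fin.lt_def]; omega
  have ht'0 : t' ≠ 0 := by
    intro h
    rw [h] at ht't
    simp at ht't
  have htne : t ≠ t' := ne_of_lt htlt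
  have htO : t ∉ insert t' ({0} : Finset (Fin (n+1))) := by
    simp only [Finset.mem_insert, Finset.mem_singleton]
    push_neg
    exact ⟨htne, ht⟩
  apply irreducible_of_core σ (wvec3 t t') (insert t' ({0} : Finset (Fin (n+1)))) t t'
    (Finset.mem_insert_self t' _) htO
  · intro i hi
    rcases Finset.mem_insert.1 hi with h | h
    · right; subst h; unfold wvec3; rw [if_pos rfl]
    · right
      rw [Finset.mem_singleton.1 h]
      unfold wvec3
      rw [if_neg (fun h' => ht'0 h'.symm), if_neg (fun h' => ht h'.symm), if_pos rfl]
  · unfold wvec3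
    rw [if_neg htne, if_pos rfl]
  · intro i hi hit
    simp only [Finset.mem_insert, Finset.mem_singleton] at hi
    push_neg at hi
    unfold wvec3
    rw [if_neg hi.1, if_neg hit, if_neg hi.2]
  · intro z m hm h1 h2 h3 h4 h5
    exact core3 σ hmono hσ0 t t' ht ht't htt ht' z m hm h1 h2 h3 h4 h5

end CMaux

/-- **Irreducibility around a tight vector.** Suppose the tight vector
`v_t = -e_t + 2e_0 + e_1 + ⋯ + e_{t-1}` lies in the changemaker lattice
`L = (σ)^⊥`.  Then: (1) for `j ≠ t`, if the tight vector `v_j` lies in `L`,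
then `v_j − v_t` is irreducible; (2) for `j > t`, if
`v_j = -e_j + e_{j-1} + e_t ∈ L`, then `v_j + v_t` is irreducible; (3) if
`v_{t+1} = -e_{t+1} + e_t + ⋯ + e_0 ∈ L`, then `v_{t+1} − v_t` is
irreducible. -/
theorem tight_vector_irreducibles (n : ℕ) (σ : Fin (n + 1) → ℤ)
    (hσ : IsChangemaker σ) (t : Fin (n + 1)) (ht : t ≠ 0)
    (hvtL : ∑ i, tightVec t i * σ i = 0) :
    (∀ j : Fin (n + 1), j ≠ t → j ≠ 0 →
      (∑ i, tightVec j i * σ i = 0) →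
      IsCMIrreducible σ (tightVec j - tightVec t)) ∧
    (∀ j j' : Fin (n + 1), t < j → (j' : ℕ) + 1 = (j : ℕ) →
      (∑ i, (-stdb j + stdb j' + stdb t) i * σ i = 0) →
      IsCMIrreducible σ ((-stdb j + stdb j' + stdb t) + tightVec t)) ∧
    (∀ t' : Fin (n + 1), (t' : ℕ) = (t : ℕ) + 1 →
      (∑ i, (fun k => if k = t' then (-1 : ℤ) else if k ≤ t then 1 else 0) i * σ i = 0) →
      IsCMIrreducible σ
        ((fun k => if k = t' then (-1 : ℤ) else if k ≤ t then 1 else 0) - tightVec t)) := by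
  obtain ⟨hσ0, hmono, -⟩ := hσ
  have htt : σ t = 1 + ∑ i ∈ Finset.Iio t, σ i := by
    rw [CMaux.tight_sum σ t ht, hσ0] at hvtL
    omega
  have htv : (t : ℕ) ≠ 0 := fun h => ht (Fin.ext (by simp [h]))
  refine ⟨?_, ?_, ?_⟩
  · -- part 1
    intro j hjt hj0 hvjL
    have htj : σ j = 1 + ∑ i ∈ Finset.Iio j, σ i := by
      rw [CMaux.tight_sum σ j hj0, hσ0] at hvjL
      omega
    have hjv : (j : ℕ) ≠ 0 := fun h => hj0 (Fin.ext (by simp [h]))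
    rcases hjt.lt_or_gt with hlt | hlt
    · -- j < t
      have h := CMaux.IsCMIrreducible.neg (CMaux.case1_main σ hmono hσ0 j t hj0 hlt htj htt)
      have hwE : tightVec j - tightVec t = -(CMaux.wvec1 j t) := by
        have hv : (j : ℕ) < (t : ℕ) := hlt
        funext k
        simp only [Pi.sub_apply, Pi.neg_apply, tightVec, CMaux.wvec1, Finset.mem_Ioo,
          Fin.lt_def, Fin.ext_iff, Fin.val_zero]
        split_ifs <;> omega
      rw [hwE]
      exact h
    · -- t < j
      have h := CMaux.case1_main σ hmono hσ0 t j ht hlt htt htj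
      have hwE : tightVec j - tightVec t = CMaux.wvec1 t j := by
        have hv : (t : ℕ) < (j : ℕ) := hlt
        funext k
        simp only [Pi.sub_apply, tightVec, CMaux.wvec1, Finset.mem_Ioo,
          Fin.lt_def, Fin.ext_iff, Fin.val_zero]
        split_ifs <;> omega
      rw [hwE]
      exact h
  · -- part 2
    intro j j' htj hjj' hL
    have key2 : ∀ i : Fin (n+1), (-stdb j + stdb j' + stdb t) i * σ i =
        (if i = j then -σ i else 0) + (if i = j' then σ i else 0) +
        (if i = t then σ i else 0) := by
      intro i
      simp only [Pi.add_apply, Pi.neg_apply, stdb]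
      split_ifs <;> ring
    rw [Finset.sum_congr rfl fun i _ => key2 i, Finset.sum_add_distrib,
      Finset.sum_add_distrib, Finset.sum_ite_eq' Finset.univ j (fun i => -σ i),
      Finset.sum_ite_eq' Finset.univ j' σ, Finset.sum_ite_eq' Finset.univ t σ] at hL
    simp only [Finset.mem_univ, if_true] at hL
    have hj : σ j = σ j' + σ t := by linarith
    have h := CMaux.case2_main σ hmono hσ0 t j j' ht htj hjj' htt hj
    have hwE : (-stdb j + stdb j' + stdb t) + tightVec t = CMaux.wvec2 t j j' := by
      have hv : (t : ℕ) < (j : ℕ) := htj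
      funext k
      simp only [Pi.add_apply, Pi.neg_apply, stdb, tightVec, CMaux.wvec2, Finset.mem_Ioo,
        Fin.lt_def, Fin.ext_iff, Fin.val_zero]
      split_ifs <;> omega
    rw [hwE]
    exact h
  · -- part 3
    intro t' ht't hL
    have hL' : ∑ i, (if i = t' then (-1:ℤ) else if i ≤ t then 1 else 0) * σ i = 0 := hL
    have htlt : (t : ℕ) < (t' : ℕ) := by omega
    have key3 : ∀ i : Fin (n+1), (if i = t' then (-1:ℤ) else if i ≤ t then 1 else 0) * σ i =
        (if i = t' then -σ i else 0) + (if i ∈ Finset.Iic t then σ i else 0) := by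
      intro i
      by_cases h1 : i = t'
      · rw [if_pos h1, if_pos h1,
          if_neg (show i ∉ Finset.Iic t by
            simp only [Finset.mem_Iic, h1, Fin.le_def]
            omega)]
        ring
      · rw [if_neg h1, if_neg h1]
        by_cases h2 : i ≤ t
        · rw [if_pos h2, if_pos (Finset.mem_Iic.2 h2)]; ring
        · rw [if_neg h2, if_neg (fun h => h2 (Finset.mem_Iic.1 h))]; ring
    rw [Finset.sum_congr rfl fun i _ => key3 i, Finset.sum_add_distrib,
      Finset.sum_ite_eq' Finset.univ t' (fun i => -σ i),
      Finset.sum_ite_mem, Finset.univ_inter] at hL'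
    simp only [Finset.mem_univ, if_true] at hL'
    have ht' : σ t' = ∑ i ∈ Finset.Iic t, σ i := by linarith
    have h := CMaux.case3_main σ hmono hσ0 t t' ht ht't htt ht'
    have hwE : (fun k => if k = t' then (-1 : ℤ) else if k ≤ t then 1 else 0) - tightVec t =
        CMaux.wvec3 t t' := by
      funext k
      simp only [Pi.sub_apply, tightVec, CMaux.wvec3, Fin.lt_def, Fin.le_def,
        Fin.ext_iff, Fin.val_zero]
      split_ifs <;> omega
    rw [hwE]
    exact h
end

section
/- Let σ = (σ_0, …, σ_n) ∈ ℤ^{n+1} be a changemaker, let 1 ≤ j ≤ n, and let A ⊆ {0, …, j−1} satisfy Σ_{i∈A} σ_i = σ_j. Suppose A is maximal among such subsets in the sense that every A' ⊆ {0, …, j−1} with Σ_{i∈A'} σ_i = σ_j satisfies Σ_{i∈A'} 2^i ≤ Σ_{i∈A} 2^i. Then the vector v = −e_j + Σ_{i∈A} e_i is unbreakable in the changemaker lattice L = (σ)^⊥. -/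
lemma two_pow_sum_aux (m : ℕ) : (∑ k ∈ Finset.range m, 2 ^ k) + 1 = 2 ^ m := by
  induction m with
  | zero => simp
  | succ m ih => rw [Finset.sum_range_succ, pow_succ]; omega

lemma cm_key (n : ℕ) (σ : Fin (n + 1) → ℤ) (hσ : IsChangemaker σ) (j : Fin (n + 1))
    (A : Finset (Fin (n + 1))) (hA : ∀ i ∈ A, i < j)
    (hsum : ∑ i ∈ A, σ i = σ j)
    (hmax : ∀ A' : Finset (Fin (n + 1)), (∀ i ∈ A', i < j) →
      ∑ i ∈ A', σ i = σ j → ∑ i ∈ A', 2 ^ (i : ℕ) ≤ ∑ i ∈ A, 2 ^ (i : ℕ))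
    (x y : Fin (n + 1) → ℤ)
    (hxs : ∑ i, x i * σ i = 0)
    (g : Fin (n + 1)) (hgj : g ≠ j) (hgA : g ∉ A)
    (hvsum : ∀ i, x i + y i = (if i = j then (-1:ℤ) else if i ∈ A then 1 else 0))
    (hzero : ∀ i, i ≠ g → x i * y i = 0)
    (hprod : x g * y g = -1)
    (hxj : x j = 0)
    (hxx : 3 ≤ ∑ i, x i * x i) (hyy : 3 ≤ ∑ i, y i * y i) : False := by
  classical
  obtain ⟨hσ0, hmono, -⟩ := hσ
  have hσ1 : ∀ i, (1:ℤ) ≤ σ i := fun i => by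
    have := hmono (Fin.zero_le i); rw [hσ0] at this; exact this
  set B := A.filter (fun i => x i = 1) with hBdef
  set C := A.filter (fun i => ¬ x i = 1) with hCdef
  have hBA : ∀ i ∈ B, i ∈ A := fun i hi => (Finset.mem_filter.1 hi).1
  have hCA : ∀ i ∈ C, i ∈ A := fun i hi => (Finset.mem_filter.1 hi).1
  have hgB : g ∉ B := fun h => hgA (hBA _ h)
  have hgC : g ∉ C := fun h => hgA (hCA _ h)
  have hjA : j ∉ A := fun h => lt_irrefl j (hA j h)
  have hjC : j ∉ C := fun h => hjA (hCA _ h)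
  have hjg : j ≠ g := Ne.symm hgj
  -- characterization of x
  have hxval : ∀ i, i ≠ g → x i = if i ∈ B then 1 else 0 := by
    intro i hig
    have hv := hvsum i
    have hz := hzero i hig
    by_cases hiB : i ∈ B
    · rw [if_pos hiB]; exact (Finset.mem_filter.1 hiB).2
    · rw [if_neg hiB]
      by_cases hij : i = j
      · subst hij; exact hxj
      · by_cases hiA : i ∈ A
        · have hx1 : ¬ x i = 1 := fun h => hiB (Finset.mem_filter.2 ⟨hiA, h⟩)
          rw [if_neg hij, if_pos hiA] at hv
          rcases mul_eq_zero.1 hz with h | h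
          · exact h
          · omega
        · rw [if_neg hij, if_neg hiA] at hv
          rcases mul_eq_zero.1 hz with h | h
          · exact h
          · omega
  -- characterization of y
  have hyval : ∀ i, i ≠ g → y i = if i = j then -1 else if i ∈ C then 1 else 0 := by
    intro i hig
    have hv := hvsum i
    have hx := hxval i hig
    by_cases hij : i = j
    · subst hij
      rw [if_pos rfl] at hv ⊢
      omega
    · rw [if_neg hij] at hv ⊢
      by_cases hiC : i ∈ C
      · have hiB : i ∉ B := fun h => (Finset.mem_filter.1 hiC).2 (Finset.mem_filter.1 h).2
        rw [if_pos hiC]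
        rw [if_neg hiB] at hx
        rw [if_pos (hCA _ hiC)] at hv
        omega
      · rw [if_neg hiC]
        by_cases hiA : i ∈ A
        · have hiB : i ∈ B := by
            by_contra hiB
            exact hiC (Finset.mem_filter.2 ⟨hiA, fun h => hiB (Finset.mem_filter.2 ⟨hiA, h⟩)⟩)
          rw [if_pos hiB] at hx
          rw [if_pos hiA] at hv
          omega
        · have hiB : i ∉ B := fun h => hiA (hBA _ h)
          rw [if_neg hiB] at hx
          rw [if_neg hiA] at hv
          omega
  -- sum formulas
  have hsumx : ∀ f : Fin (n+1) → ℤ, ∑ i, x i * f i = x g * f g + ∑ i ∈ B, f i := by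
    intro f
    have h1 : ∑ i ∈ insert g B, x i * f i = ∑ i, x i * f i := by
      apply Finset.sum_subset (Finset.subset_univ _)
      intro i _ hi
      have hig : i ≠ g := fun h => hi (h ▸ Finset.mem_insert_self g B)
      have hiB : i ∉ B := fun h => hi (Finset.mem_insert_of_mem h)
      rw [hxval i hig, if_neg hiB, zero_mul]
    rw [← h1, Finset.sum_insert hgB]
    congr 1
    apply Finset.sum_congr rfl
    intro i hi
    have hig : i ≠ g := fun h => hgB (h ▸ hi)
    rw [hxval i hig, if_pos hi, one_mul]
  have hsumy : ∀ f : Fin (n+1) → ℤ,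
      ∑ i, y i * f i = y g * f g + (-(f j) + ∑ i ∈ C, f i) := by
    intro f
    have hgmem : g ∉ insert j C := by
      simp [Finset.mem_insert, hgj, hgC]
    have h1 : ∑ i ∈ insert g (insert j C), y i * f i = ∑ i, y i * f i := by
      apply Finset.sum_subset (Finset.subset_univ _)
      intro i _ hi
      have hig : i ≠ g := fun h => hi (h ▸ Finset.mem_insert_self _ _)
      have hij : i ≠ j := fun h => hi (Finset.mem_insert_of_mem (h ▸ Finset.mem_insert_self _ _))
      have hiC : i ∉ C := fun h => hi (Finset.mem_insert_of_mem (Finset.mem_insert_of_mem h))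
      rw [hyval i hig, if_neg hij, if_neg hiC, zero_mul]
    rw [← h1, Finset.sum_insert hgmem, Finset.sum_insert hjC]
    congr 1
    congr 1
    · rw [hyval j hjg, if_pos rfl]; ring
    · apply Finset.sum_congr rfl
      intro i hi
      have hig : i ≠ g := fun h => hgC (h ▸ hi)
      have hij : i ≠ j := fun h => hjC (h ▸ hi)
      rw [hyval i hig, if_neg hij, if_pos hi, one_mul]
  -- derive x g = -1, σ g = ∑ B σ
  have h1 : x g * σ g + ∑ i ∈ B, σ i = 0 := by rw [← hsumx σ]; exact hxs
  have hBσnn : 0 ≤ ∑ i ∈ B, σ i := Finset.sum_nonneg (fun i _ => by linarith [hσ1 i])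
  have hxgu : x g = 1 ∨ x g = -1 := by
    have : IsUnit (x g) := IsUnit.of_mul_eq_one (-(y g)) (by rw [mul_neg, hprod, neg_neg])
    exact Int.isUnit_iff.1 this
  have hxg : x g = -1 := by
    rcases hxgu with h | h
    · exfalso; rw [h, one_mul] at h1; linarith [hσ1 g]
    · exact h
  have hyg : y g = 1 := by rw [hxg] at hprod; linarith
  have hσg : σ g = ∑ i ∈ B, σ i := by rw [hxg] at h1; linarith
  -- norms
  have hBsum1 : ∑ i ∈ B, x i = (B.card : ℤ) := by
    rw [Finset.sum_congr rfl (fun i hi => hxval i (fun h : i = g => hgB (h ▸ hi)))]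
    simp
  have hCsum1 : ∑ i ∈ C, y i = (C.card : ℤ) := by
    rw [Finset.sum_congr rfl (fun i hi =>
      by rw [hyval i (fun h : i = g => hgC (h ▸ hi)), if_neg (fun h : i = j => hjC (h ▸ hi)),
        if_pos hi])]
    simp
  have hBcard : 2 ≤ (B.card : ℤ) := by
    have h2 := hxx
    rw [hsumx x, hxg, hBsum1] at h2
    linarith
  have hCcard : 1 ≤ (C.card : ℤ) := by
    have h2 := hyy
    rw [hsumy y, hyg, hyval j hjg, if_pos rfl, hCsum1] at h2
    linarith
  -- C sum
  have hsplitσ : ∑ i ∈ B, σ i + ∑ i ∈ C, σ i = ∑ i ∈ A, σ i :=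
    Finset.sum_filter_add_sum_filter_not A _ σ
  have hCσ : ∑ i ∈ C, σ i = σ j - σ g := by rw [hsum] at hsplitσ; linarith
  have hCσ1 : 1 ≤ ∑ i ∈ C, σ i := by
    have := Finset.card_nsmul_le_sum C σ 1 (fun i _ => hσ1 i)
    simp only [nsmul_eq_mul, mul_one] at this
    calc (1:ℤ) ≤ (C.card : ℤ) := hCcard
    _ ≤ _ := this
  have hglt : g < j := by
    by_contra h
    push_neg at h
    have := hmono h
    linarith
  -- every b ∈ B has b < g
  have hBlt : ∀ b ∈ B, b < g := by
    intro b hb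
    have herase : 1 ≤ ∑ i ∈ B.erase b, σ i := by
      have hc : 1 ≤ (B.erase b).card := by
        have := Finset.card_erase_of_mem hb
        omega
      have := Finset.card_nsmul_le_sum (B.erase b) σ 1 (fun i _ => hσ1 i)
      simp only [nsmul_eq_mul, mul_one] at this
      calc (1:ℤ) ≤ ((B.erase b).card : ℤ) := by exact_mod_cast hc
      _ ≤ _ := this
    have hsplitb : σ b + ∑ i ∈ B.erase b, σ i = ∑ i ∈ B, σ i :=
      Finset.add_sum_erase B σ hb
    have : σ b < σ g := by rw [hσg]; linarith
    by_contra h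
    push_neg at h
    have := hmono h
    linarith
  -- maximality
  have hcond1 : ∀ i ∈ insert g C, i < j := by
    intro i hi
    rcases Finset.mem_insert.1 hi with h | h
    · exact h ▸ hglt
    · exact hA i (hCA _ h)
  have hcond2 : ∑ i ∈ insert g C, σ i = σ j := by
    rw [Finset.sum_insert hgC]
    linarith
  have hA' := hmax (insert g C) hcond1 hcond2
  rw [Finset.sum_insert hgC] at hA'
  have hsplit2 : ∑ i ∈ B, 2 ^ (i:ℕ) + ∑ i ∈ C, 2 ^ (i:ℕ) = ∑ i ∈ A, 2 ^ (i:ℕ) :=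
    Finset.sum_filter_add_sum_filter_not A _ _
  have h2g : 2 ^ (g:ℕ) ≤ ∑ i ∈ B, 2 ^ (i:ℕ) := by omega
  have hb : ∑ i ∈ B, 2 ^ (i:ℕ) ≤ ∑ k ∈ Finset.range (g:ℕ), 2 ^ k := by
    have himg : ∑ i ∈ B, 2 ^ (i:ℕ) = ∑ k ∈ B.image Fin.val, 2 ^ k :=
      (Finset.sum_image (fun a _ b _ h => Fin.val_injective h)).symm
    rw [himg]
    apply Finset.sum_le_sum_of_subset
    intro k hk
    rcases Finset.mem_image.1 hk with ⟨i, hi, rfl⟩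
    exact Finset.mem_range.2 (hBlt i hi)
  have := two_pow_sum_aux (g:ℕ)
  omega

/-- **Non-tight standard basis elements are unbreakable.** Let `σ` be a
changemaker, `1 ≤ j ≤ n`, and `A ⊆ {0,…,j-1}` with `Σ_{i∈A} σ_i = σ_j`,
chosen maximal with respect to the total order given by `A ↦ Σ_{i∈A} 2^i`.
Then `v = -e_j + Σ_{i∈A} e_i` is unbreakable in `L = (σ)^⊥`: it is not a sum
`x + y` with `x, y ∈ L`, `|x|, |y| ≥ 3` and `⟨x,y⟩ = -1`. -/
theorem changemaker_standard_basis_unbreakable (n : ℕ) (σ : Fin (n + 1) → ℤ)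
    (hσ : IsChangemaker σ) (j : Fin (n + 1)) (hj : j ≠ 0)
    (A : Finset (Fin (n + 1))) (hA : ∀ i ∈ A, i < j)
    (hsum : ∑ i ∈ A, σ i = σ j)
    (hmax : ∀ A' : Finset (Fin (n + 1)), (∀ i ∈ A', i < j) →
      ∑ i ∈ A', σ i = σ j → ∑ i ∈ A', 2 ^ (i : ℕ) ≤ ∑ i ∈ A, 2 ^ (i : ℕ)) :
    ¬ ∃ x y : Fin (n + 1) → ℤ,
      (∑ i, x i * σ i = 0) ∧ (∑ i, y i * σ i = 0) ∧
      (fun k => if k = j then (-1 : ℤ) else if k ∈ A then 1 else 0) = x + y ∧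
      3 ≤ ∑ i, x i * x i ∧ 3 ≤ ∑ i, y i * y i ∧ ∑ i, x i * y i = -1 := by
  rintro ⟨x, y, hxs, hys, hv, hxx, hyy, hdot⟩
  classical
  have hvsum : ∀ i, x i + y i = (if i = j then (-1:ℤ) else if i ∈ A then 1 else 0) :=
    fun i => (congrFun hv i).symm
  have hle : ∀ i, x i * y i ≤ 0 := by
    intro i
    have hv' := hvsum i
    split_ifs at hv' with h1 h2
    · rcases le_or_gt (x i) (-1) with h | h <;> nlinarith
    · rcases le_or_gt (x i) 0 with h | h <;> nlinarith
    · nlinarith [sq_nonneg (x i + y i), sq_nonneg (x i - y i)]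
  obtain ⟨g, hg⟩ : ∃ g, x g * y g ≠ 0 := by
    by_contra h
    push_neg at h
    rw [Finset.sum_eq_zero (fun i _ => h i)] at hdot
    norm_num at hdot
  have hsplit : x g * y g + ∑ i ∈ Finset.univ.erase g, x i * y i = -1 :=
    (Finset.add_sum_erase Finset.univ (fun i => x i * y i) (Finset.mem_univ g)).trans hdot
  have hrle : ∑ i ∈ Finset.univ.erase g, x i * y i ≤ 0 :=
    Finset.sum_nonpos (fun i _ => hle i)
  have hglt : x g * y g < 0 := lt_of_le_of_ne (hle g) hg
  have hprod : x g * y g = -1 := by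
    have := Int.lt_iff_add_one_le.1 hglt
    linarith
  have hrest : ∀ i, i ≠ g → x i * y i = 0 := by
    have h0 : ∑ i ∈ Finset.univ.erase g, x i * y i = 0 := by linarith
    intro i hig
    exact (Finset.sum_eq_zero_iff_of_nonpos (fun i _ => hle i)).1 h0 i
      (Finset.mem_erase.2 ⟨hig, Finset.mem_univ i⟩)
  have hg0 : x g + y g = 0 := by
    have hxgu : x g = 1 ∨ x g = -1 := by
      have : IsUnit (x g) := IsUnit.of_mul_eq_one (-(y g)) (by rw [mul_neg, hprod, neg_neg])
      exact Int.isUnit_iff.1 this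
    rcases hxgu with h | h <;> rw [h] at hprod ⊢ <;> linarith
  have hvg := hvsum g
  rw [hg0] at hvg
  have hgj : g ≠ j := by intro h; rw [if_pos h] at hvg; norm_num at hvg
  have hgA : g ∉ A := by intro h; rw [if_neg hgj, if_pos h] at hvg; norm_num at hvg
  have hj0 := hrest j (Ne.symm hgj)
  rcases mul_eq_zero.1 hj0 with hxj | hyj
  · exact cm_key n σ hσ j A hA hsum hmax x y hxs g hgj hgA hvsum hrest hprod hxj hxx hyy
  · exact cm_key n σ hσ j A hA hsum hmax y x hys g hgj hgA
      (fun i => by rw [add_comm]; exact hvsum i)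
      (fun i hi => by rw [mul_comm]; exact hrest i hi)
      (by rw [mul_comm]; exact hprod) hyj hyy hxx
end

section
/- Let a_1, …, a_l ≥ 2 be integers with continuants p_l, q_l and r_l = p_l − q_l, and let b_1, …, b_m ≥ 2 be integers whose continuant numerator equals p_l and whose continuant denominator equals r_l (i.e., [b_1,…,b_m]^- = p_l / r_l). Then for every integer t ≥ 1, the sequence (a_1, …, a_l, t+1, b_m, b_{m−1}, …, b_2) has continuant numerator p_l r_l t + 1 and continuant denominator q_l r_l t + 1. -/
/-- Continuant numerators `p_j` of `[c_1, c_2, …]⁻`: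
`p_0 = 1`, `p_1 = c_1`, `p_j = c_j p_{j-1} - p_{j-2}`. -/
def contP (c : ℕ → ℤ) : ℕ → ℤ
  | 0 => 1
  | 1 => c 1
  | (j + 2) => c (j + 2) * contP c (j + 1) - contP c j

/-- Continuant denominators `q_j` of `[c_1, c_2, …]⁻`:
`q_0 = 0`, `q_1 = 1`, `q_j = c_j q_{j-1} - q_{j-2}`. -/
def contQ (c : ℕ → ℤ) : ℕ → ℤ
  | 0 => 0
  | 1 => 1
  | (j + 2) => c (j + 2) * contQ c (j + 1) - contQ c j


lemma cont_ext (c d : ℕ → ℤ) : ∀ n, (∀ i, 1 ≤ i → i ≤ n → c i = d i) →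
    contP c n = contP d n ∧ contQ c n = contQ d n := by
  intro n
  induction n using Nat.twoStepInduction with
  | zero => intro _; simp [contP, contQ]
  | one => intro h; simp [contP, contQ, h 1 le_rfl le_rfl]
  | more n ih1 ih2 =>
    intro h
    have e1 := ih1 (fun i h1 h2 => h i h1 (by omega))
    have e2 := ih2 (fun i h1 h2 => h i h1 (by omega))
    have hc := h (n+2) (by omega) le_rfl
    constructor
    · show c (n+2) * contP c (n+1) - contP c n = d (n+2) * contP d (n+1) - contP d n
      rw [hc, e1.1, e2.1]
    · show c (n+2) * contQ c (n+1) - contQ c n = d (n+2) * contQ d (n+1) - contQ d n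
      rw [hc, e1.2, e2.2]

lemma contP_grow (c : ℕ → ℤ) : ∀ n, (∀ i, 1 ≤ i → i ≤ n + 1 → 2 ≤ c i) →
    1 ≤ contP c n ∧ contP c n + 1 ≤ contP c (n + 1) := by
  intro n
  induction n with
  | zero => intro h; have := h 1 le_rfl le_rfl; simp [contP]; omega
  | succ n ih =>
    intro h
    have ih' := ih (fun i h1 h2 => h i h1 (by omega))
    have hc := h (n+2) (by omega) le_rfl
    have hrec : contP c (n+2) = c (n+2) * contP c (n+1) - contP c n := rfl
    constructor
    · omega
    · nlinarith [ih'.1, ih'.2]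

lemma contQ_grow (c : ℕ → ℤ) : ∀ n, (∀ i, 1 ≤ i → i ≤ n + 1 → 2 ≤ c i) →
    0 ≤ contQ c n ∧ contQ c n + 1 ≤ contQ c (n + 1) := by
  intro n
  induction n with
  | zero => intro h; simp [contQ]
  | succ n ih =>
    intro h
    have ih' := ih (fun i h1 h2 => h i h1 (by omega))
    have hc := h (n+2) (by omega) le_rfl
    have hrec : contQ c (n+2) = c (n+2) * contQ c (n+1) - contQ c n := rfl
    constructor
    · omega
    · nlinarith [ih'.1, ih'.2]

lemma contDet (c : ℕ → ℤ) : ∀ n, contP c n * contQ c (n+1) - contP c (n+1) * contQ c n = 1 := by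
  intro n
  induction n with
  | zero => simp [contP, contQ]
  | succ n ih =>
    have h1 : contP c (n+2) = c (n+2) * contP c (n+1) - contP c n := rfl
    have h2 : contQ c (n+2) = c (n+2) * contQ c (n+1) - contQ c n := rfl
    rw [h1, h2]; linear_combination ih

lemma contQ_shift (c : ℕ → ℤ) : ∀ n, contQ c (n+1) = contP (fun i => c (i+1)) n := by
  intro n
  induction n using Nat.twoStepInduction with
  | zero => simp [contP, contQ]
  | one => show c 2 * 1 - 0 = c 2; ring
  | more n ih1 ih2 =>
    show c (n+3) * contQ c (n+2) - contQ c (n+1) = _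
    rw [ih1, ih2]
    show _ = (fun i => c (i+1)) (n+2) * contP (fun i => c (i+1)) (n+1) - contP (fun i => c (i+1)) n
    ring_nf

lemma contP_head (c : ℕ → ℤ) : ∀ n, contP c (n+2) =
    c 1 * contP (fun i => c (i+1)) (n+1) - contQ (fun i => c (i+1)) (n+1) := by
  intro n
  induction n using Nat.twoStepInduction with
  | zero =>
    show c 2 * c 1 - 1 = c 1 * ((fun i => c (i+1)) 1) - 1
    ring_nf
  | one =>
    show c 3 * (c 2 * c 1 - 1) - c 1 =
      c 1 * ((fun i => c (i+1)) 2 * contP (fun i => c (i+1)) 1 - 1) -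
        ((fun i => c (i+1)) 2 * 1 - 0)
    show c 3 * (c 2 * c 1 - 1) - c 1 = c 1 * (c 3 * c 2 - 1) - (c 3 * 1 - 0)
    ring
  | more n ih1 ih2 =>
    show c (n+4) * contP c (n+3) - contP c (n+2) = _
    rw [ih1, ih2]
    show _ = c 1 * ((fun i => c (i+1)) (n+3) * contP (fun i => c (i+1)) (n+2)
        - contP (fun i => c (i+1)) (n+1)) -
      ((fun i => c (i+1)) (n+3) * contQ (fun i => c (i+1)) (n+2)
        - contQ (fun i => c (i+1)) (n+1))
    show _ = c 1 * (c (n+4) * contP (fun i => c (i+1)) (n+2)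
        - contP (fun i => c (i+1)) (n+1)) -
      (c (n+4) * contQ (fun i => c (i+1)) (n+2)
        - contQ (fun i => c (i+1)) (n+1))
    ring

lemma contP_rev (c : ℕ → ℤ) : ∀ n, contP (fun i => c (n + 1 - i)) n = contP c n := by
  intro n
  induction n using Nat.twoStepInduction with
  | zero => rfl
  | one => show c (2 - 1) = c 1; norm_num
  | more n ih1 ih2 =>
    rw [contP_head]
    have h1 : (fun i => (fun j => c (n + 2 + 1 - j)) (i+1)) = (fun i => c (n + 1 + 1 - i)) := by
      funext i; show c (n + 2 + 1 - (i+1)) = c (n + 1 + 1 - i); congr 1; omega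
    rw [h1, ih2, contQ_shift, show n + 2 + 1 - 1 = n + 2 from by omega]
    have h3 : (fun i => (fun j => c (n + 1 + 1 - j)) (i+1)) = (fun i => c (n + 1 - i)) := by
      funext i; show c (n + 1 + 1 - (i+1)) = c (n + 1 - i); congr 1; omega
    rw [h3, ih1]
    rfl

lemma contGlue (c d : ℕ → ℤ) (l : ℕ) :
    ∀ k, (∀ j, 1 ≤ j → j ≤ k → c (l+1+j) = d j) →
      contP c (l+1+k) = contP c (l+1) * contP d k - contP c l * contQ d k ∧
      contQ c (l+1+k) = contQ c (l+1) * contP d k - contQ c l * contQ d k := by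
  intro k
  induction k using Nat.twoStepInduction with
  | zero => intro _; simp [contP, contQ]
  | one =>
    intro h
    have hc := h 1 le_rfl le_rfl
    constructor
    · show c (l+2) * contP c (l+1) - contP c l = _
      rw [show l+1+1 = l+2 from rfl] at hc
      rw [hc]
      show _ = contP c (l+1) * d 1 - contP c l * 1
      ring
    · show c (l+2) * contQ c (l+1) - contQ c l = _
      rw [show l+1+1 = l+2 from rfl] at hc
      rw [hc]
      show _ = contQ c (l+1) * d 1 - contQ c l * 1
      ring
  | more k ih1 ih2 =>
    intro h
    have e1 := ih1 (fun j h1 h2 => h j h1 (by omega))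
    have e2 := ih2 (fun j h1 h2 => h j h1 (by omega))
    have hc := h (k+2) (by omega) le_rfl
    have hP : contP c (l+1+(k+2)) = c (l+1+(k+2)) * contP c (l+1+(k+1)) - contP c (l+1+k) := by
      rw [show l+1+(k+2) = (l+1+k)+2 from by omega]
      rfl
    have hQ : contQ c (l+1+(k+2)) = c (l+1+(k+2)) * contQ c (l+1+(k+1)) - contQ c (l+1+k) := by
      rw [show l+1+(k+2) = (l+1+k)+2 from by omega]
      rfl
    have hdP : contP d (k+2) = d (k+2) * contP d (k+1) - contP d k := rfl
    have hdQ : contQ d (k+2) = d (k+2) * contQ d (k+1) - contQ d k := rfl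
    rw [hP, hQ, hdP, hdQ, hc, e1.1, e1.2, e2.1, e2.2]
    constructor <;> ring

/-- **Lemma on glued continued fractions.** Let `a_1,…,a_l ≥ 2` have continuants
`p_l, q_l`, `r_l = p_l - q_l`, and let `b_1,…,b_m ≥ 2` satisfy
`[b_1,…,b_m]⁻ = p_l / r_l` (as continuant numerator and denominator).  Then for
every integer `t ≥ 1` the sequence `(a_1,…,a_l, t+1, b_m,…,b_2)` has continuant
numerator `p_l r_l t + 1` and denominator `q_l r_l t + 1`. -/
theorem continuant_glue_t (l m : ℕ) (hl : 1 ≤ l) (hm : 1 ≤ m)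
    (a b : ℕ → ℤ)
    (ha : ∀ i, 1 ≤ i → i ≤ l → 2 ≤ a i) (hb : ∀ i, 1 ≤ i → i ≤ m → 2 ≤ b i)
    (hnum : contP b m = contP a l)
    (hden : contQ b m = contP a l - contQ a l)
    (t : ℤ) (ht : 1 ≤ t)
    (c : ℕ → ℤ)
    (hc : c = fun i => if i ≤ l then a i
                       else if i = l + 1 then t + 1
                       else b (l + m + 2 - i)) :
    contP c (l + m) = contP a l * (contP a l - contQ a l) * t + 1 ∧
    contQ c (l + m) = contQ a l * (contP a l - contQ a l) * t + 1 := by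
  obtain ⟨L, rfl⟩ : ∃ L, l = L + 1 := ⟨l - 1, by omega⟩
  obtain ⟨M, rfl⟩ : ∃ M, m = M + 1 := ⟨m - 1, by omega⟩
  have hcl : ∀ i, i ≤ L + 1 → c i = a i := by
    intro i hi; simp only [hc]; rw [if_pos hi]
  have hct : c (L + 1 + 1) = t + 1 := by
    simp only [hc]; rw [if_neg (by omega)]; simp
  have hcb : ∀ j, 1 ≤ j → j ≤ M → c (L + 1 + 1 + j) = b (M + 2 - j) := by
    intro j h1 h2
    simp only [hc]; rw [if_neg (by omega), if_neg (by omega)]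
    congr 1; omega
  have hA := cont_ext c a (L + 1) (fun i h1 h2 => hcl i h2)
  have hA' := cont_ext c a L (fun i h1 h2 => hcl i (by omega))
  have h1P : contP c (L + 1 + 1) = (t + 1) * contP a (L + 1) - contP a L := by
    show c (L + 1 + 1) * contP c (L + 1) - contP c L = _
    rw [hct, hA.1, hA'.1]
  have h1Q : contQ c (L + 1 + 1) = (t + 1) * contQ a (L + 1) - contQ a L := by
    show c (L + 1 + 1) * contQ c (L + 1) - contQ c L = _
    rw [hct, hA.2, hA'.2]
  obtain ⟨gP, gQ⟩ := contGlue c (fun j => b (M + 2 - j)) (L + 1) M hcb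
  have hR1 : contP (fun j => b (M + 2 - j)) M = contQ b (M + 1) := by
    rw [contQ_shift, ← contP_rev (fun i => b (i + 1)) M]
    exact (cont_ext _ _ M (fun i h1 h2 => by
      show b (M + 2 - i) = b (M + 1 - i + 1); congr 1; omega)).1
  have hR2 : contQ (fun j => b (M + 2 - j)) M = contQ b M := by
    cases M with
    | zero => rfl
    | succ M' =>
      rw [contQ_shift, contQ_shift, ← contP_rev (fun i => b (i + 1)) M']
      exact (cont_ext _ _ M' (fun i h1 h2 => by
        show b (M' + 1 + 2 - (i + 1)) = b (M' + 1 - i + 1); congr 1; omega)).1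
  have dA := contDet a L
  have dB := contDet b M
  rw [hnum, hden] at dB
  have sa := contP_grow a L (fun i h1 h2 => ha i h1 (by omega))
  have sb := contP_grow b M (fun i h1 h2 => hb i h1 (by omega))
  have tb := contQ_grow b M (fun i h1 h2 => hb i h1 (by omega))
  rw [hnum] at sb
  rw [hden] at tb
  have hcop : IsCoprime (contP a (L + 1)) (contP a (L + 1) - contQ a (L + 1)) :=
    ⟨-(contQ b M), contP b M, by linear_combination dB⟩
  have hdvd : contP a (L + 1) ∣
      (contP b M - (contP a (L + 1) - contP a L)) * (contP a (L + 1) - contQ a (L + 1)) :=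
    ⟨contQ b M - (contP a (L + 1) - contQ a (L + 1)) + contP a L - contQ a L,
      by linear_combination dB - dA⟩
  have hz : contP b M - (contP a (L + 1) - contP a L) = 0 := by
    apply Int.eq_zero_of_abs_lt_dvd (hcop.dvd_of_dvd_mul_right hdvd)
    rw [abs_lt]
    constructor <;> linarith [sa.1, sa.2, sb.1, sb.2]
  have hP' : contP b M = contP a (L + 1) - contP a L := by linarith [hz]
  rw [hP'] at dB
  have hp0 : contP a (L + 1) ≠ 0 := by
    have := sa.1; have := sa.2; intro h; omega
  have key : contP a (L + 1) * (contQ a (L + 1) * contQ b M -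
      (contQ a (L + 1) - contQ a L) * (contP a (L + 1) - contQ a (L + 1)) + 1) = 0 := by
    linear_combination (-(contQ a (L + 1))) * dB - (contP a (L + 1) - contQ a (L + 1)) * dA
  have hq' : contQ a (L + 1) * contQ b M -
      (contQ a (L + 1) - contQ a L) * (contP a (L + 1) - contQ a (L + 1)) + 1 = 0 :=
    (mul_eq_zero.mp key).resolve_left hp0
  have hidx : L + 1 + (M + 1) = L + 1 + 1 + M := by omega
  constructor
  · rw [hidx, gP, h1P, hA.1, hR1, hR2, hden]
    linear_combination dB
  · rw [hidx, gQ, h1Q, hA.2, hR1, hR2, hden]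
    linear_combination -hq'
end
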